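/- arXiv:0802.1361 — 6 statements merged into one kernel-verified Lean document; each statement's English description precedes it below -/
import Mathlib

section
/- Let λ ≥ 2 be an integer, and let T be a triangulation graph (maximal outerplanar graph) of a polygon with n ≥ 2λ vertices. Then there exists a diagonal d of T that partitions T into two pieces, one of which contains exactly k edges of the Hamiltonian cycle (polygon boundary edges), where λ ≤ k ≤ 2(λ−1). -/
open Finset

/-- Vertices `i` and `j` are consecutive on the Hamiltonian cycle of the `n`-gon. -/
def adjOnCycle (n : ℕ) (i j : Fin n) : Prop :=
  (i.val + 1) % n = j.val ∨ (j.val + 1) % n = i.val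

instance (n : ℕ) (i j : Fin n) : Decidable (adjOnCycle n i j) := by
  unfold adjOnCycle; infer_instance

/-- A boundary edge of the polygon: a pair of consecutive vertices. -/
def isBoundaryEdge (n : ℕ) (e : Finset (Fin n)) : Prop :=
  ∃ i j : Fin n, i ≠ j ∧ adjOnCycle n i j ∧ e = {i, j}

/-- A diagonal pair of the polygon: a pair of distinct non-consecutive vertices. -/
def isDiagPair (n : ℕ) (e : Finset (Fin n)) : Prop :=
  ∃ i j : Fin n, i ≠ j ∧ ¬ adjOnCycle n i j ∧ e = {i, j}

/-- Two chords of the convex `n`-gon cross (interleave strictly). -/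
def crossing (n : ℕ) (e f : Finset (Fin n)) : Prop :=
  ∃ a b c d : Fin n, e = {a, b} ∧ f = {c, d} ∧
    a.val < c.val ∧ c.val < b.val ∧ b.val < d.val

/-- A triangulation graph of a polygon with `n` vertices (a maximal outerplanar
graph): the vertices `Fin n` in convex position together with a maximal
(i.e. of cardinality `n - 3`) set of pairwise noncrossing diagonals. -/
structure PolyTriangulation (n : ℕ) where
  diags : Finset (Finset (Fin n))
  diags_valid : ∀ e ∈ diags, isDiagPair n e
  noncrossing : ∀ e ∈ diags, ∀ f ∈ diags, ¬ crossing n e f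
  maximal : diags.card = n - 3

/-- An edge of the triangulation graph: a boundary edge or a diagonal. -/
def PolyTriangulation.isEdge {n : ℕ} (T : PolyTriangulation n) (e : Finset (Fin n)) : Prop :=
  isBoundaryEdge n e ∨ e ∈ T.diags

/-- A triangular face of a maximal outerplanar graph is the same as a 3-cycle. -/
def PolyTriangulation.isTriangle {n : ℕ} (T : PolyTriangulation n) (t : Finset (Fin n)) : Prop :=
  ∃ a b c : Fin n, a ≠ b ∧ a ≠ c ∧ b ≠ c ∧ t = {a, b, c} ∧
    T.isEdge {a, b} ∧ T.isEdge {a, c} ∧ T.isEdge {b, c}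

/-- A vertex is incident to (covered by) the set `D` of edges/diagonals. -/
def incidentTo {n : ℕ} (D : Finset (Finset (Fin n))) (v : Fin n) : Prop :=
  ∃ e ∈ D, v ∈ e

/-- A (diagonal) 2-dominating set: a set of edges and diagonals of `T` such that
every triangular face has at least two of its vertices incident to the set. -/
def TwoDominating {n : ℕ} (T : PolyTriangulation n) (D : Finset (Finset (Fin n))) : Prop :=
  (∀ e ∈ D, T.isEdge e) ∧
  ∀ t, T.isTriangle t →
    2 ≤ (t.filter (fun v => ∃ e ∈ D, v ∈ e)).card

/-- An edge 2-dominating set: a set of boundary edges of `T` such that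
every triangular face has at least two of its vertices incident to the set. -/
def EdgeTwoDominating {n : ℕ} (T : PolyTriangulation n) (D : Finset (Finset (Fin n))) : Prop :=
  (∀ e ∈ D, isBoundaryEdge n e) ∧
  ∀ t, T.isTriangle t →
    2 ≤ (t.filter (fun v => ∃ e ∈ D, v ∈ e)).card

lemma pair_inj {n : ℕ} {i j a b : Fin n} (hij : i.val < j.val) (hab : a.val < b.val)
    (h : ({i,j} : Finset (Fin n)) = ({a,b} : Finset (Fin n))) : i = a ∧ j = b := by
  have hi : i ∈ ({a,b} : Finset (Fin n)) := by rw [← h]; simp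
  have hj : j ∈ ({a,b} : Finset (Fin n)) := by rw [← h]; simp
  simp only [Finset.mem_insert, Finset.mem_singleton] at hi hj
  rcases hi with rfl | rfl <;> rcases hj with rfl | rfl
  · omega
  · exact ⟨rfl, rfl⟩
  · omega
  · omega

lemma crossing_pair_iff {n : ℕ} {i j k l : Fin n} (hij : i.val < j.val) (hkl : k.val < l.val) :
    crossing n {i,j} {k,l} ↔ (i.val < k.val ∧ k.val < j.val ∧ j.val < l.val) := by
  constructor
  · rintro ⟨a,b,c,d,he,hf,h1,h2,h3⟩
    have hab : a.val < b.val := h1.trans h2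
    have hcd : c.val < d.val := h2.trans h3
    obtain ⟨rfl, rfl⟩ := pair_inj hij hab he
    obtain ⟨rfl, rfl⟩ := pair_inj hkl hcd hf
    exact ⟨h1,h2,h3⟩
  · rintro ⟨h1,h2,h3⟩
    exact ⟨i,j,k,l, rfl, rfl, h1,h2,h3⟩

lemma crossing_irrefl {n : ℕ} (e : Finset (Fin n)) : ¬ crossing n e e := by
  rintro ⟨a,b,c,d,he,hf,h1,h2,h3⟩
  have hab : a.val < b.val := h1.trans h2
  have hcd : c.val < d.val := h2.trans h3
  obtain ⟨rfl, rfl⟩ := pair_inj hab hcd (he.symm.trans hf)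
  omega

lemma diag_rep' {n : ℕ} {i j : Fin n} (hlt : i.val < j.val) (hadj : ¬ adjOnCycle n i j) :
    i.val + 2 ≤ j.val ∧ ¬(i.val = 0 ∧ j.val = n - 1) := by
  unfold adjOnCycle at hadj
  push_neg at hadj
  obtain ⟨h1, h2⟩ := hadj
  have hjn : j.val < n := j.isLt
  have hmod : (i.val+1) % n = i.val + 1 := Nat.mod_eq_of_lt (by omega)
  constructor
  · omega
  · rintro ⟨h0, hn1⟩
    have hn : j.val + 1 = n := by omega
    rw [hn, Nat.mod_self] at h2
    omega

lemma diag_pair_of {n : ℕ} {i j : Fin n} (h2 : i.val + 2 ≤ j.val)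
    (hw : ¬(i.val = 0 ∧ j.val = n-1)) : isDiagPair n {i,j} := by
  have hjn : j.val < n := j.isLt
  have hw' : ¬(i.val = 0) ∨ ¬(j.val = n-1) := not_and_or.mp hw
  refine ⟨i, j, ?_, ?_, rfl⟩
  · intro h; rw [h] at h2; omega
  · unfold adjOnCycle; push_neg
    constructor
    · have : (i.val+1)%n = i.val+1 := Nat.mod_eq_of_lt (by omega)
      omega
    · rcases Nat.lt_or_ge (j.val+1) n with h | h
      · have : (j.val+1)%n = j.val+1 := Nat.mod_eq_of_lt h; omega
      · have hj1 : j.val + 1 = n := by omega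
        rw [hj1, Nat.mod_self]
        omega

/-- key interval combinatorics bound -/
lemma intBound : ∀ N a b : ℕ, b - a ≤ N → ∀ D : Finset (ℕ × ℕ),
    (∀ p ∈ D, a ≤ p.1 ∧ p.1 + 2 ≤ p.2 ∧ p.2 ≤ b) →
    (∀ p ∈ D, ∀ q ∈ D, ¬(p.1 < q.1 ∧ q.1 < p.2 ∧ p.2 < q.2)) →
    D.card ≤ b - a - 1 ∧ ((a, b) ∉ D → D.card ≤ b - a - 2) := by
  intro N
  induction N with
  | zero =>
    intro a b hba D hv hnc
    have hD : D = ∅ := by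
      apply Finset.eq_empty_of_forall_notMem
      intro p hp
      have := hv p hp
      omega
    simp [hD]
  | succ N ih =>
    intro a b hba D hv hnc
    by_cases hsmall : b ≤ a + 1
    · have hD : D = ∅ := by
        apply Finset.eq_empty_of_forall_notMem
        intro p hp
        have := hv p hp
        omega
      simp [hD]
    push_neg at hsmall
    set D' := D.erase (a, b) with hD'
    have hsub' : D' ⊆ D := Finset.erase_subset _ _
    have hcard' : D.card ≤ D'.card + 1 := by
      have : D ⊆ insert (a,b) D' := by
        intro x hx
        by_cases hxa : x = (a,b)
        · simp [hxa]
        · exact Finset.mem_insert_of_mem (Finset.mem_erase.mpr ⟨hxa, hx⟩)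
      calc D.card ≤ (insert (a,b) D').card := Finset.card_le_card this
        _ ≤ D'.card + 1 := Finset.card_insert_le _ _
    suffices hmain : D'.card ≤ b - a - 2 by
      constructor
      · omega
      · intro hab
        have hcc : D'.card = D.card := by rw [hD', Finset.erase_eq_of_notMem hab]
        omega
    by_cases hne : D'.Nonempty
    · obtain ⟨p, hp, hmax⟩ := Finset.exists_max_image D' (fun q => q.2 - q.1) hne
      obtain ⟨i, j⟩ := p
      have hpD : (i, j) ∈ D := hsub' hp
      obtain ⟨hai, hij2, hjb⟩ := hv _ hpD
      simp only at hai hij2 hjb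
      have hpab : (i, j) ≠ (a, b) := (Finset.mem_erase.mp hp).1
      have hpab' : ¬(i = a ∧ j = b) := by
        rintro ⟨rfl, rfl⟩; exact hpab rfl
      set E := D'.erase (i, j) with hE
      have hEsub : E ⊆ D := fun x hx => hsub' (Finset.erase_subset _ _ hx)
      set Din := E.filter (fun q => i ≤ q.1 ∧ q.2 ≤ j) with hDin
      set Dl := E.filter (fun q => q.2 ≤ i) with hDl
      set Dr := E.filter (fun q => j ≤ q.1) with hDr
      have hcover : E ⊆ Din ∪ Dl ∪ Dr := by
        intro q hq
        obtain ⟨k, l⟩ := q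
        have hqD : (k, l) ∈ D := hEsub hq
        obtain ⟨hak, hkl2, hlb⟩ := hv _ hqD
        simp only at hak hkl2 hlb
        have hq' : (k,l) ∈ D' := Finset.mem_of_mem_erase hq
        have hqp : (k, l) ≠ (i, j) := (Finset.mem_erase.mp hq).1
        have hqp' : ¬(k = i ∧ l = j) := by rintro ⟨rfl, rfl⟩; exact hqp rfl
        have hmx : l - k ≤ j - i := hmax _ hq'
        have h1 := hnc _ hpD _ hqD
        have h2 := hnc _ hqD _ hpD
        simp only at h1 h2
        have : (i ≤ k ∧ l ≤ j) ∨ l ≤ i ∨ j ≤ k := by omega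
        rcases this with h | h | h
        · exact Finset.mem_union_left _ (Finset.mem_union_left _ (Finset.mem_filter.mpr ⟨hq, h⟩))
        · exact Finset.mem_union_left _ (Finset.mem_union_right _ (Finset.mem_filter.mpr ⟨hq, h⟩))
        · exact Finset.mem_union_right _ (Finset.mem_filter.mpr ⟨hq, h⟩)
      have hcardE : D'.card = E.card + 1 := (Finset.card_erase_add_one hp).symm
      have hEc : E.card ≤ Din.card + Dl.card + Dr.card := by
        calc E.card ≤ (Din ∪ Dl ∪ Dr).card := Finset.card_le_card hcover
          _ ≤ (Din ∪ Dl).card + Dr.card := Finset.card_union_le _ _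
          _ ≤ Din.card + Dl.card + Dr.card := by
              have := Finset.card_union_le Din Dl
              omega
      -- bounds for the three parts
      have hDinsub : Din ⊆ D := fun x hx => hEsub (Finset.mem_of_mem_filter x hx)
      have hDlsub : Dl ⊆ D := fun x hx => hEsub (Finset.mem_of_mem_filter x hx)
      have hDrsub : Dr ⊆ D := fun x hx => hEsub (Finset.mem_of_mem_filter x hx)
      have hbin : Din.card ≤ j - i - 2 := by
        have h := ih i j (by omega) Din
          (by
            intro q hq
            obtain ⟨h1, h2⟩ := Finset.mem_filter.mp hq
            have := hv q (hDinsub hq)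
            omega)
          (by intro p hp q hq; exact hnc _ (hDinsub hp) _ (hDinsub hq))
        refine h.2 ?_
        intro hmem
        exact (Finset.mem_erase.mp (Finset.mem_of_mem_filter _ hmem)).1 rfl
      have hbl : Dl.card ≤ i - a - 1 := by
        have h := ih a i (by omega) Dl
          (by
            intro q hq
            obtain ⟨h1, h2⟩ := Finset.mem_filter.mp hq
            have := hv q (hDlsub hq)
            omega)
          (by intro p hp q hq; exact hnc _ (hDlsub hp) _ (hDlsub hq))
        exact h.1
      have hbr : Dr.card ≤ b - j - 1 := by
        have h := ih j b (by omega) Dr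
          (by
            intro q hq
            obtain ⟨h1, h2⟩ := Finset.mem_filter.mp hq
            have := hv q (hDrsub hq)
            omega)
          (by intro p hp q hq; exact hnc _ (hDrsub hp) _ (hDrsub hq))
        exact h.1
      omega
    · rw [Finset.not_nonempty_iff_eq_empty] at hne
      simp [hne]

/-- minimum/maximum values of a pair finset -/
def pairVal {n : ℕ} (e : Finset (Fin n)) : ℕ × ℕ :=
  if h : (e.image Fin.val).Nonempty then
    ((e.image Fin.val).min' h, (e.image Fin.val).max' h) else (0, 0)

lemma pairVal_pair {n : ℕ} {i j : Fin n} (hij : i.val < j.val) :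
    pairVal {i,j} = (i.val, j.val) := by
  have himg : ({i,j} : Finset (Fin n)).image Fin.val = {i.val, j.val} := by
    simp [Finset.image_insert]
  have hne : (({i,j} : Finset (Fin n)).image Fin.val).Nonempty := by
    rw [himg]; exact ⟨i.val, by simp⟩
  rw [pairVal, dif_pos hne]
  have h1 : (({i,j} : Finset (Fin n)).image Fin.val).min' hne = i.val := by
    apply le_antisymm
    · apply Finset.min'_le; rw [himg]; simp
    · apply Finset.le_min'
      intro y hy; rw [himg] at hy; simp at hy; rcases hy with rfl|rfl <;> omega
  have h2 : (({i,j} : Finset (Fin n)).image Fin.val).max' hne = j.val := by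
    apply le_antisymm
    · apply Finset.max'_le
      intro y hy; rw [himg] at hy; simp at hy; rcases hy with rfl|rfl <;> omega
    · apply Finset.le_max'; rw [himg]; simp
  rw [h1, h2]

lemma diag_rep {n : ℕ} {e : Finset (Fin n)} (h : isDiagPair n e) :
    ∃ i j : Fin n, e = {i,j} ∧ i.val + 2 ≤ j.val ∧ ¬(i.val = 0 ∧ j.val = n-1) := by
  obtain ⟨i, j, hne, hadj, rfl⟩ := h
  rcases lt_trichotomy i.val j.val with hlt | heq | hgt
  · exact ⟨i, j, rfl, (diag_rep' hlt hadj).1, (diag_rep' hlt hadj).2⟩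
  · exact absurd (Fin.val_injective heq) hne
  · have hadj' : ¬ adjOnCycle n j i := by
      unfold adjOnCycle at *; tauto
    exact ⟨j, i, Finset.pair_comm i j, (diag_rep' hgt hadj').1, (diag_rep' hgt hadj').2⟩

lemma family_card_le {n : ℕ} (D : Finset (Finset (Fin n)))
    (hv : ∀ e ∈ D, isDiagPair n e)
    (hnc : ∀ e ∈ D, ∀ f ∈ D, ¬ crossing n e f) :
    D.card ≤ n - 3 := by
  classical
  have hcard : D.card = (D.image pairVal).card := by
    rw [Finset.card_image_of_injOn]
    intro e he f hf hef
    obtain ⟨i, j, rfl, hij2, -⟩ := diag_rep (hv e he)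
    obtain ⟨k, l, rfl, hkl2, -⟩ := diag_rep (hv f hf)
    rw [pairVal_pair (by omega), pairVal_pair (by omega)] at hef
    have h1 : i.val = k.val := congrArg Prod.fst hef
    have h2 : j.val = l.val := congrArg Prod.snd hef
    rw [Fin.val_injective h1, Fin.val_injective h2]
  have hbound := intBound n 0 (n-1) (by omega) (D.image pairVal)
    (by
      rintro p hp
      obtain ⟨e, he, rfl⟩ := Finset.mem_image.mp hp
      obtain ⟨i, j, rfl, hij2, -⟩ := diag_rep (hv e he)
      rw [pairVal_pair (by omega)]
      have := j.isLt
      refine ⟨by omega, by omega, by omega⟩)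
    (by
      rintro p hp q hq ⟨h1, h2, h3⟩
      obtain ⟨e, he, rfl⟩ := Finset.mem_image.mp hp
      obtain ⟨f, hf, rfl⟩ := Finset.mem_image.mp hq
      obtain ⟨i, j, rfl, hij2, -⟩ := diag_rep (hv e he)
      obtain ⟨k, l, rfl, hkl2, -⟩ := diag_rep (hv f hf)
      have e1 : pairVal ({i,j} : Finset (Fin n)) = (i.val, j.val) := pairVal_pair (by omega)
      have e2 : pairVal ({k,l} : Finset (Fin n)) = (k.val, l.val) := pairVal_pair (by omega)
      simp only [e1, e2] at h1 h2 h3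
      exact hnc _ he _ hf ((crossing_pair_iff (by omega) (by omega)).mpr ⟨h1, h2, h3⟩))
  have hnot : ((0 : ℕ), n-1) ∉ D.image pairVal := by
    intro hmem
    obtain ⟨e, he, heq⟩ := Finset.mem_image.mp hmem
    obtain ⟨i, j, rfl, hij2, hw⟩ := diag_rep (hv e he)
    rw [pairVal_pair (by omega)] at heq
    have h1 : i.val = 0 := congrArg Prod.fst heq
    have h2 : j.val = n - 1 := congrArg Prod.snd heq
    exact hw ⟨h1, h2⟩
  have := hbound.2 hnot
  omega

lemma exists_crossing {n : ℕ} (T : PolyTriangulation n) (e : Finset (Fin n))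
    (he : isDiagPair n e) (hne : e ∉ T.diags) :
    ∃ g ∈ T.diags, crossing n e g ∨ crossing n g e := by
  by_contra hcon
  push_neg at hcon
  have hins : (insert e T.diags).card ≤ n - 3 := by
    apply family_card_le
    · intro f hf
      rcases Finset.mem_insert.mp hf with rfl | hf
      · exact he
      · exact T.diags_valid f hf
    · intro f hf g hg
      rcases Finset.mem_insert.mp hf with rfl | hf' <;>
        rcases Finset.mem_insert.mp hg with rfl | hg'
      · exact crossing_irrefl _
      · exact (hcon g hg').1
      · exact (hcon f hf').2
      · exact T.noncrossing _ hf' _ hg'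
  rw [Finset.card_insert_of_notMem hne, T.maximal] at hins
  have : (4 : ℕ) ≤ n := by
    obtain ⟨i, j, hij, -, -⟩ := diag_rep he
    have := j.isLt
    omega
  omega

lemma ear {n : ℕ} (T : PolyTriangulation n) {i j : Fin n}
    (hij : i.val + 2 ≤ j.val)
    (hd : {i,j} ∈ T.diags ∨ (i.val = 0 ∧ j.val = n - 1)) :
    ∃ m : Fin n, i.val < m.val ∧ m.val < j.val ∧
      (m.val = i.val + 1 ∨ {i,m} ∈ T.diags) ∧ (j.val = m.val + 1 ∨ {m,j} ∈ T.diags) := by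
  classical
  set S : Finset (Fin n) := Finset.univ.filter
    (fun m => i.val < m.val ∧ m.val < j.val ∧ (m.val = i.val + 1 ∨ {i,m} ∈ T.diags)) with hS
  have hjn : j.val < n := j.isLt
  have hne : S.Nonempty := by
    refine ⟨⟨i.val + 1, by omega⟩, Finset.mem_filter.mpr ⟨Finset.mem_univ _, ?_⟩⟩
    exact ⟨show i.val < i.val + 1 by omega, show i.val + 1 < j.val by omega, Or.inl rfl⟩
  set m := S.max' hne with hm
  have hmS : m ∈ S := S.max'_mem hne
  simp only [hS, Finset.mem_filter, Finset.mem_univ, true_and] at hmS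
  obtain ⟨him, hmj, hedge⟩ := hmS
  refine ⟨m, him, hmj, hedge, ?_⟩
  by_cases hcons : j.val = m.val + 1
  · exact Or.inl hcons
  right
  by_contra hmem
  have hmj2 : m.val + 2 ≤ j.val := by omega
  have hwrap : ¬(m.val = 0 ∧ j.val = n - 1) := by
    rintro ⟨h0, -⟩; omega
  obtain ⟨g, hg, hcr⟩ := exists_crossing T {m,j} (diag_pair_of hmj2 hwrap) hmem
  obtain ⟨k0, l0, hkne, hkadj, hgkl⟩ := T.diags_valid g hg
  obtain ⟨k, l, hgeq, hkl⟩ : ∃ k l : Fin n, g = {k,l} ∧ k.val < l.val := by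
    rcases lt_trichotomy k0.val l0.val with h | h | h
    · exact ⟨k0, l0, hgkl, h⟩
    · exact absurd (Fin.val_injective h) hkne
    · exact ⟨l0, k0, hgkl.trans (Finset.pair_comm k0 l0), h⟩
  subst hgeq
  rcases hcr with hc | hc
  · rw [crossing_pair_iff (show m.val < j.val by omega) hkl] at hc
    obtain ⟨h1, h2, h3⟩ := hc
    rcases hd with hdij | ⟨hi0, hjn1⟩
    · exact T.noncrossing _ hdij _ hg
        ((crossing_pair_iff (show i.val < j.val by omega) hkl).mpr
          ⟨by omega, by omega, by omega⟩)
    · have := l.isLt; omega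
  · rw [crossing_pair_iff hkl (show m.val < j.val by omega)] at hc
    obtain ⟨h1, h2, h3⟩ := hc
    rcases lt_trichotomy i.val k.val with hik | hik | hik
    · rcases hedge with hcons2 | himd
      · omega
      · exact T.noncrossing _ himd _ hg
          ((crossing_pair_iff (show i.val < m.val by omega) hkl).mpr ⟨hik, h1, h2⟩)
    · have hkeq : k = i := Fin.val_injective hik.symm
      subst hkeq
      have hlS : l ∈ S := by
        simp only [hS, Finset.mem_filter, Finset.mem_univ, true_and]
        exact ⟨by omega, by omega, Or.inr hg⟩
      have hle : l ≤ m := hm ▸ S.le_max' l hlS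
      have : l.val ≤ m.val := hle
      omega
    · rcases hd with hdij | ⟨hi0, hjn1⟩
      · exact T.noncrossing _ hg _ hdij
          ((crossing_pair_iff hkl (show i.val < j.val by omega)).mpr
            ⟨hik, by omega, by omega⟩)
      · omega

/-- For every integer `λ ≥ 2` and every triangulation graph of a
polygon with `n ≥ 2λ` vertices, there is a diagonal cutting off `k` boundary
edges with `λ ≤ k ≤ 2(λ-1)`. -/
theorem exists_splitting_diagonal (lam n : ℕ) (hlam : 2 ≤ lam) (hn : 2 * lam ≤ n)
    (T : PolyTriangulation n) :
    ∃ d ∈ T.diags, ∃ i j : Fin n, d = {i, j} ∧ i.val < j.val ∧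
      ∃ k : ℕ, (k = j.val - i.val ∨ k = n - (j.val - i.val)) ∧
        lam ≤ k ∧ k ≤ 2 * (lam - 1) := by

  classical
  have hn0 : 0 < n := by omega
  have hn1 : n - 1 < n := by omega
  have hex : ∃ k : ℕ, lam ≤ k ∧
      ∃ i j : Fin n, i.val < j.val ∧ j.val - i.val = k ∧ {i,j} ∈ T.diags := by
    obtain ⟨m, him, hmj, he1, he2⟩ := ear T (i := ⟨0, hn0⟩) (j := ⟨n-1, hn1⟩)
      (show 0 + 2 ≤ n - 1 by omega) (Or.inr ⟨rfl, rfl⟩)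
    have hi0 : (⟨0, hn0⟩ : Fin n).val = 0 := rfl
    have hj0 : (⟨n-1, hn1⟩ : Fin n).val = n - 1 := rfl
    by_cases hm : lam ≤ m.val
    · refine ⟨m.val - (⟨0, hn0⟩ : Fin n).val, by omega, ⟨0, hn0⟩, m, him, rfl, ?_⟩
      rcases he1 with h | h
      · exact absurd h (by omega)
      · exact h
    · refine ⟨(⟨n-1, hn1⟩ : Fin n).val - m.val, by omega, m, ⟨n-1, hn1⟩, hmj, rfl, ?_⟩
      rcases he2 with h | h
      · exact absurd h (by omega)
      · exact h
  obtain ⟨hk0lam, i, j, hijlt, hdiff, hmem⟩ := Nat.find_spec hex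
  have hk0le : Nat.find hex ≤ 2 * (lam - 1) := by
    by_contra hbig
    push_neg at hbig
    have hbig' : 2 * lam - 1 ≤ Nat.find hex := by omega
    obtain ⟨m, him, hmj, he1, he2⟩ := ear T (i := i) (j := j) (by omega) (Or.inl hmem)
    have hcase : lam ≤ m.val - i.val ∨ lam ≤ j.val - m.val := by omega
    rcases hcase with h | h
    · have hd : {i, m} ∈ T.diags := by
        rcases he1 with h' | h'
        · exact absurd h' (by omega)
        · exact h'
      exact Nat.find_min hex (show m.val - i.val < Nat.find hex by omega)
        ⟨h, i, m, him, rfl, hd⟩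
    · have hd : {m, j} ∈ T.diags := by
        rcases he2 with h' | h'
        · exact absurd h' (by omega)
        · exact h'
      exact Nat.find_min hex (show j.val - m.val < Nat.find hex by omega)
        ⟨h, m, j, hmj, rfl, hd⟩
  exact ⟨{i,j}, hmem, i, j, rfl, hijlt, Nat.find hex, Or.inl hdiff.symm, hk0lam, hk0le⟩
end

section
/- For every m ≥ 1 there exists a triangulation graph of a polygon with n = 3m+2 vertices such that every diagonal 2-dominating set of it has size at least ⌊(n+1)/3⌋ = m+1. -/
open Finset

section PairLemmas

variable {α : Type*} [DecidableEq α]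

lemma pair_cases {a b c d : α} (h : ({a, b} : Finset α) = {c, d}) :
    (a = c ∧ b = d) ∨ (a = d ∧ b = c) := by
  have ha : a ∈ ({c, d} : Finset α) := h ▸ (by simp)
  have hb : b ∈ ({c, d} : Finset α) := h ▸ (by simp)
  have hc : c ∈ ({a, b} : Finset α) := h ▸ (by simp)
  have hd : d ∈ ({a, b} : Finset α) := h ▸ (by simp)
  simp only [mem_insert, mem_singleton] at ha hb hc hd
  tauto

end PairLemmas

namespace DiagLB

def v (m a : ℕ) : Fin (3 * m + 2) := ⟨a % (3 * m + 2), Nat.mod_lt _ (by omega)⟩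

lemma v_val (m : ℕ) {a : ℕ} (h : a < 3 * m + 2) : (v m a).val = a := Nat.mod_eq_of_lt h

def pr (m a b : ℕ) : Finset (Fin (3 * m + 2)) := {v m a, v m b}

lemma pr_eq (m : ℕ) {a b c d : ℕ} (hab : a < b) (hb : b < 3 * m + 2)
    (hcd : c < d) (hd : d < 3 * m + 2) (h : pr m a b = pr m c d) :
    a = c ∧ b = d := by
  have h1 := pair_cases h
  have hav := v_val m (by omega : a < 3 * m + 2)
  have hbv := v_val m hb
  have hcv := v_val m (by omega : c < 3 * m + 2)
  have hdv := v_val m hd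
  rcases h1 with ⟨h2, h3⟩ | ⟨h2, h3⟩ <;>
    [skip; skip] <;>
    · have e2 := congrArg Fin.val h2
      have e3 := congrArg Fin.val h3
      omega

lemma pr_eq_pair (m : ℕ) {a b : ℕ} {A B : Fin (3 * m + 2)} (hab : a < b) (hb : b < 3 * m + 2)
    (hAB : A.val < B.val) (h : pr m a b = {A, B}) : A.val = a ∧ B.val = b := by
  have h1 := pair_cases h
  have hav := v_val m (by omega : a < 3 * m + 2)
  have hbv := v_val m hb
  rcases h1 with ⟨h2, h3⟩ | ⟨h2, h3⟩ <;>
    · have e2 := congrArg Fin.val h2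
      have e3 := congrArg Fin.val h3
      omega

/-- The diagonals of the lower-bound triangulation. -/
def diags (m : ℕ) : Finset (Finset (Fin (3 * m + 2))) :=
  ((range (m - 1)).image fun k => pr m 0 (3 * k + 4)) ∪
  ((range m).image fun k => pr m (3 * k + 1) (3 * k + 3)) ∪
  ((range m).image fun k => pr m 0 (3 * k + 3))

lemma mem_diags {m : ℕ} (hm : 1 ≤ m) {e : Finset (Fin (3 * m + 2))} (he : e ∈ diags m) :
    ∃ x y, x < y ∧ y < 3 * m + 2 ∧ e = pr m x y ∧
      ((x = 0 ∧ y % 3 ≠ 2 ∧ 3 ≤ y ∧ y ≤ 3 * m) ∨ (x % 3 = 1 ∧ y = x + 2 ∧ y ≤ 3 * m)) := by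
  simp only [diags, mem_union, mem_image, mem_range] at he
  rcases he with (⟨k, hk, rfl⟩ | ⟨k, hk, rfl⟩) | ⟨k, hk, rfl⟩
  · exact ⟨0, 3 * k + 4, by omega, by omega, rfl, by omega⟩
  · exact ⟨3 * k + 1, 3 * k + 3, by omega, by omega, rfl, by omega⟩
  · exact ⟨0, 3 * k + 3, by omega, by omega, rfl, by omega⟩

variable {m : ℕ}

lemma diags_valid (hm : 1 ≤ m) : ∀ e ∈ diags m, isDiagPair (3 * m + 2) e := by
  intro e he
  obtain ⟨x, y, hxy, hy, rfl, hQ⟩ := mem_diags hm he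
  refine ⟨v m x, v m y, ?_, ?_, rfl⟩
  · intro h
    have := congrArg Fin.val h
    rw [v_val m (by omega), v_val m hy] at this
    omega
  · intro h
    rcases h with h | h <;>
    · rw [v_val m (by omega), v_val m (by omega)] at h
      rcases Nat.lt_or_ge (x + 1) (3 * m + 2) with h1 | h1
      · rcases Nat.lt_or_ge (y + 1) (3 * m + 2) with h2 | h2
        · rw [Nat.mod_eq_of_lt (by omega)] at h
          omega
        · omega
      · omega

lemma diags_noncrossing (hm : 1 ≤ m) :
    ∀ e ∈ diags m, ∀ f ∈ diags m, ¬ crossing (3 * m + 2) e f := by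
  intro e he f hf ⟨a, b, c, d, hE, hF, h1, h2, h3⟩
  obtain ⟨x, y, hxy, hy, rfl, hQ⟩ := mem_diags hm he
  obtain ⟨x', y', hxy', hy', rfl, hQ'⟩ := mem_diags hm hf
  obtain ⟨ha, hb⟩ := pr_eq_pair m hxy hy (by omega) hE
  obtain ⟨hc, hd⟩ := pr_eq_pair m hxy' hy' (by omega) hF
  omega

lemma diags_card (hm : 1 ≤ m) : (diags m).card = 3 * m + 2 - 3 := by
  have c1 : ((range (m - 1)).image fun k => pr m 0 (3 * k + 4)).card = m - 1 := by
    rw [Finset.card_image_of_injOn, Finset.card_range]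
    intro i hi j hj h
    simp only [coe_range, Set.mem_Iio] at hi hj
    have := pr_eq m (a := 0) (b := 3*i+4) (by omega) (by omega) (by omega) (by omega) h
    omega
  have c2 : ((range m).image fun k => pr m (3 * k + 1) (3 * k + 3)).card = m := by
    rw [Finset.card_image_of_injOn, Finset.card_range]
    intro i hi j hj h
    simp only [coe_range, Set.mem_Iio] at hi hj
    have := pr_eq m (a := 3*i+1) (b := 3*i+3) (by omega) (by omega) (by omega) (by omega) h
    omega
  have c3 : ((range m).image fun k => pr m 0 (3 * k + 3)).card = m := by
    rw [Finset.card_image_of_injOn, Finset.card_range]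
    intro i hi j hj h
    simp only [coe_range, Set.mem_Iio] at hi hj
    have := pr_eq m (a := 0) (b := 3*i+3) (by omega) (by omega) (by omega) (by omega) h
    omega
  have d1 : Disjoint ((range (m - 1)).image fun k => pr m 0 (3 * k + 4))
      ((range m).image fun k => pr m (3 * k + 1) (3 * k + 3)) := by
    rw [Finset.disjoint_left]
    rintro e he1 he2
    simp only [mem_image, mem_range] at he1 he2
    obtain ⟨i, hi, rfl⟩ := he1
    obtain ⟨j, hj, h⟩ := he2
    have := pr_eq m (a := 3*j+1) (b := 3*j+3) (by omega) (by omega) (by omega) (by omega) h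
    omega
  have d2 : Disjoint (((range (m - 1)).image fun k => pr m 0 (3 * k + 4)) ∪
      ((range m).image fun k => pr m (3 * k + 1) (3 * k + 3)))
      ((range m).image fun k => pr m 0 (3 * k + 3)) := by
    rw [Finset.disjoint_left]
    rintro e he1 he2
    simp only [mem_union, mem_image, mem_range] at he1 he2
    obtain ⟨j, hj, h⟩ := he2
    rcases he1 with ⟨i, hi, rfl⟩ | ⟨i, hi, rfl⟩ <;>
    · have := pr_eq m (c := 0) (d := 3*j+3) (by omega) (by omega) (by omega) (by omega) h.symm
      omega
  rw [diags, Finset.card_union_of_disjoint d2, Finset.card_union_of_disjoint d1, c1, c2, c3]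
  omega


lemma v_ne (m : ℕ) {a b : ℕ} (ha : a < 3 * m + 2) (hb : b < 3 * m + 2) (h : a ≠ b) :
    v m a ≠ v m b := by
  intro he
  have := congrArg Fin.val he
  rw [v_val m ha, v_val m hb] at this
  exact h this

lemma boundary_succ (m : ℕ) {a : ℕ} (h : a + 1 < 3 * m + 2) :
    isBoundaryEdge (3 * m + 2) {v m a, v m (a + 1)} := by
  refine ⟨v m a, v m (a + 1), v_ne m (by omega) h (by omega), Or.inl ?_, rfl⟩
  rw [v_val m (by omega), v_val m h, Nat.mod_eq_of_lt h]

lemma boundary_wrap (m : ℕ) : isBoundaryEdge (3 * m + 2) {v m 0, v m (3 * m + 1)} := by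
  refine ⟨v m 0, v m (3 * m + 1), v_ne m (by omega) (by omega) (by omega), Or.inr ?_, rfl⟩
  rw [v_val m (by omega), v_val m (by omega)]
  have h0 : (3 * m + 1 + 1) % (3 * m + 2) = 0 := by
    rw [show 3 * m + 1 + 1 = 3 * m + 2 from rfl]; exact Nat.mod_self _
  omega

def T (m : ℕ) (hm : 1 ≤ m) : PolyTriangulation (3 * m + 2) :=
  ⟨diags m, diags_valid hm, diags_noncrossing hm, diags_card hm⟩

lemma triB (hm : 1 ≤ m) {k : ℕ} (hk : k < m) :
    (T m hm).isTriangle {v m (3 * k + 1), v m (3 * k + 2), v m (3 * k + 3)} := by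
  refine ⟨v m (3 * k + 1), v m (3 * k + 2), v m (3 * k + 3),
    v_ne m (by omega) (by omega) (by omega), v_ne m (by omega) (by omega) (by omega),
    v_ne m (by omega) (by omega) (by omega), rfl, ?_, ?_, ?_⟩
  · exact Or.inl (boundary_succ m (by omega))
  · refine Or.inr ?_
    show pr m (3 * k + 1) (3 * k + 3) ∈ diags m
    exact mem_union_left _ (mem_union_right _ (mem_image_of_mem _ (mem_range.mpr hk)))
  · exact Or.inl (boundary_succ m (by omega))

lemma triLast (hm : 1 ≤ m) :
    (T m hm).isTriangle {v m 0, v m (3 * m), v m (3 * m + 1)} := by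
  refine ⟨v m 0, v m (3 * m), v m (3 * m + 1),
    v_ne m (by omega) (by omega) (by omega), v_ne m (by omega) (by omega) (by omega),
    v_ne m (by omega) (by omega) (by omega), rfl, ?_, ?_, ?_⟩
  · refine Or.inr ?_
    have : pr m 0 (3 * (m - 1) + 3) = ({v m 0, v m (3 * m)} : Finset _) := by
      have : 3 * (m - 1) + 3 = 3 * m := by omega
      rw [pr, this]
    refine mem_union_right _ ?_
    rw [← this]
    exact mem_image_of_mem _ (mem_range.mpr (by omega))
  · -- edge {v 0, v (3m+1)}
    have h := boundary_wrap m
    exact Or.inl (by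
      obtain ⟨i, j, hij, hadj, he⟩ := h
      exact ⟨i, j, hij, hadj, he⟩)
  · exact Or.inl (boundary_succ m (by omega))


end DiagLB

/-- for every `m ≥ 1` there is a triangulation graph of a polygon
with `n = 3m+2` vertices every diagonal 2-dominating set of which has size at
least `⌊(n+1)/3⌋ = m+1`. -/
theorem diag_two_dominating_lower_bound (m : ℕ) (hm : 1 ≤ m) :
    ∃ T : PolyTriangulation (3 * m + 2),
      ∀ D : Finset (Finset (Fin (3 * m + 2))), TwoDominating T D → m + 1 ≤ D.card := by
  refine ⟨DiagLB.T m hm, ?_⟩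
  intro D hD
  obtain ⟨hDedge, hDdom⟩ := hD
  -- every element of D has exactly two vertices
  have hcard2 : ∀ e ∈ D, e.card ≤ 2 := by
    intro e he
    rcases hDedge e he with ⟨i, j, hij, _, rfl⟩ | hd
    · exact (Finset.card_insert_le _ _).trans (by simp)
    · obtain ⟨i, j, hij, _, rfl⟩ := DiagLB.diags_valid hm e hd
      exact (Finset.card_insert_le _ _).trans (by simp)
  -- the family of disjoint witness sets
  set g : ℕ → Finset (Fin (3 * m + 2)) := fun k =>
    (if k < m then ({DiagLB.v m (3 * k + 1), DiagLB.v m (3 * k + 2), DiagLB.v m (3 * k + 3)} :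
        Finset (Fin (3 * m + 2))) else {DiagLB.v m 0, DiagLB.v m (3 * m + 1)}).filter
      (fun v => ∃ e ∈ D, v ∈ e) with hg
  have hval : ∀ k, ∀ x ∈ g k,
      (k < m ∧ (x.val = 3 * k + 1 ∨ x.val = 3 * k + 2 ∨ x.val = 3 * k + 3)) ∨
      (¬ k < m ∧ (x.val = 0 ∨ x.val = 3 * m + 1)) := by
    intro k x hx
    rw [hg] at hx
    simp only [Finset.mem_filter] at hx
    by_cases h : k < m
    · rw [if_pos h] at hx
      refine Or.inl ⟨h, ?_⟩
      have hx1 := hx.1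
      simp only [Finset.mem_insert, Finset.mem_singleton] at hx1
      rcases hx1 with rfl | rfl | rfl
      · exact Or.inl (DiagLB.v_val m (by omega))
      · exact Or.inr (Or.inl (DiagLB.v_val m (by omega)))
      · exact Or.inr (Or.inr (DiagLB.v_val m (by omega)))
    · rw [if_neg h] at hx
      refine Or.inr ⟨h, ?_⟩
      have hx1 := hx.1
      simp only [Finset.mem_insert, Finset.mem_singleton] at hx1
      rcases hx1 with rfl | rfl
      · exact Or.inl (DiagLB.v_val m (by omega))
      · exact Or.inr (DiagLB.v_val m (by omega))
  have hdisj : ∀ k ∈ range (m + 1), ∀ l ∈ range (m + 1), k ≠ l → Disjoint (g k) (g l) := by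
    intro k hk l hl hkl
    rw [mem_range] at hk hl
    rw [Finset.disjoint_left]
    intro x hxk hxl
    have h1 := hval k x hxk
    have h2 := hval l x hxl
    omega
  -- lower bound on each g k
  have hgk : ∀ k < m, 2 ≤ (g k).card := by
    intro k hk
    have h := hDdom _ (DiagLB.triB hm hk)
    rw [hg]
    simpa [if_pos hk] using h
  have hgm : 1 ≤ (g m).card := by
    have h := hDdom _ (DiagLB.triLast hm)
    have hsub : ({DiagLB.v m 0, DiagLB.v m (3 * m), DiagLB.v m (3 * m + 1)} :
        Finset (Fin (3 * m + 2))).filter (fun v => ∃ e ∈ D, v ∈ e) ⊆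
        insert (DiagLB.v m (3 * m)) (g m) := by
      intro x hx
      simp only [Finset.mem_filter, Finset.mem_insert, Finset.mem_singleton] at hx
      rcases hx.1 with rfl | rfl | rfl
      · refine Finset.mem_insert_of_mem ?_
        rw [hg]
        simp only [if_neg (lt_irrefl m), Finset.mem_filter, Finset.mem_insert,
          Finset.mem_singleton]
        exact ⟨by tauto, hx.2⟩
      · exact Finset.mem_insert_self _ _
      · refine Finset.mem_insert_of_mem ?_
        rw [hg]
        simp only [if_neg (lt_irrefl m), Finset.mem_filter, Finset.mem_insert,
          Finset.mem_singleton]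
        exact ⟨by tauto, hx.2⟩
    have := (Finset.card_le_card hsub).trans (Finset.card_insert_le _ _)
    omega
  -- total lower bound
  have hsum : 2 * m + 1 ≤ ∑ k ∈ range (m + 1), (g k).card := by
    rw [Finset.sum_range_succ]
    have : 2 * m ≤ ∑ k ∈ range m, (g k).card := by
      calc 2 * m = (range m).card * 2 := by rw [Finset.card_range]; ring
      _ ≤ ∑ k ∈ range m, (g k).card := by
        rw [← smul_eq_mul]
        exact Finset.card_nsmul_le_sum _ _ _ (fun k hk => hgk k (mem_range.mp hk))
    omega
  have hbi : ((range (m + 1)).biUnion g).card = ∑ k ∈ range (m + 1), (g k).card :=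
    Finset.card_biUnion hdisj
  -- upper bound via D
  have hsub2 : (range (m + 1)).biUnion g ⊆ D.biUnion id := by
    intro x hx
    rw [Finset.mem_biUnion] at hx ⊢
    obtain ⟨k, _, hxk⟩ := hx
    rw [hg] at hxk
    simp only [Finset.mem_filter] at hxk
    obtain ⟨e, he, hxe⟩ := hxk.2
    exact ⟨e, he, hxe⟩
  have hub : (D.biUnion id).card ≤ D.card * 2 := by
    calc (D.biUnion id).card ≤ ∑ e ∈ D, (id e).card := Finset.card_biUnion_le
    _ ≤ D.card • 2 := Finset.sum_le_card_nsmul _ _ _ (fun e he => hcard2 e he)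
    _ = D.card * 2 := by rw [smul_eq_mul]
  have := Finset.card_le_card hsub2
  omega
end

section
/- Every triangulation graph of a polygon with n vertices, 3 ≤ n ≤ 9 and n ≠ 4, admits an edge 2-dominating set of size at most ⌊(2n+1)/5⌋; for n = 4, an edge 2-dominating set of size 2 exists. -/
open Finset

-- appended lemmas
instance (n : ℕ) (e : Finset (Fin n)) : Decidable (isBoundaryEdge n e) := by
  unfold isBoundaryEdge; infer_instance

instance (n : ℕ) (e f : Finset (Fin n)) : Decidable (crossing n e f) := by
  unfold crossing; infer_instance

lemma not_edge_self {n : ℕ} (T : PolyTriangulation n) (a : Fin n) :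
    ¬ T.isEdge {a, a} := by
  have hcard : ({a, a} : Finset (Fin n)).card = 1 := by simp
  rintro (⟨i, j, hij, _, he⟩ | hd)
  · rw [he, Finset.card_pair hij] at hcard; omega
  · obtain ⟨i, j, hij, _, he⟩ := T.diags_valid _ hd
    rw [he, Finset.card_pair hij] at hcard; omega

lemma not_edge_of {n : ℕ} (T : PolyTriangulation n) (x y : Fin n)
    (hb : ¬ isBoundaryEdge n {x, y}) (hd : ({x, y} : Finset (Fin n)) ∉ T.diags) :
    ¬ T.isEdge {x, y} := fun h => h.elim hb hd

lemma not_mem_of_cross {n : ℕ} (T : PolyTriangulation n) {e f : Finset (Fin n)}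
    (he : e ∈ T.diags) (hcr : crossing n e f) : f ∉ T.diags :=
  fun hf => T.noncrossing e he f hf hcr

lemma dom_of_uncov {n : ℕ} (T : PolyTriangulation n) (D : Finset (Finset (Fin n)))
    (hb : ∀ e ∈ D, isBoundaryEdge n e)
    (hU : ∀ u v : Fin n, u ≠ v → ¬ (∃ e ∈ D, u ∈ e) → ¬ (∃ e ∈ D, v ∈ e) →
      ¬ T.isEdge {u, v}) :
    EdgeTwoDominating T D := by
  refine ⟨hb, ?_⟩
  rintro t ⟨a, b, c, hab, hac, hbc, rfl, hAB, hAC, hBC⟩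
  have key : ∀ x y : Fin n, x ≠ y → T.isEdge {x, y} →
      (∃ e ∈ D, x ∈ e) ∨ (∃ e ∈ D, y ∈ e) := by
    intro x y hxy he
    by_contra h
    push_neg at h
    exact hU x y hxy (by simpa using h.1) (by simpa using h.2) he
  have two_sub : ∀ x y : Fin n, x ≠ y →
      x ∈ ({a, b, c} : Finset (Fin n)) → y ∈ ({a, b, c} : Finset (Fin n)) →
      (∃ e ∈ D, x ∈ e) → (∃ e ∈ D, y ∈ e) →
      2 ≤ (({a, b, c} : Finset (Fin n)).filter (fun v => ∃ e ∈ D, v ∈ e)).card := by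
    intro x y hxy hx hy hpx hpy
    have hsub : ({x, y} : Finset (Fin n)) ⊆
        ({a, b, c} : Finset (Fin n)).filter (fun v => ∃ e ∈ D, v ∈ e) := by
      intro z hz
      simp only [Finset.mem_insert, Finset.mem_singleton] at hz
      rcases hz with rfl | rfl <;> exact Finset.mem_filter.2 ⟨by assumption, by assumption⟩
    calc 2 = ({x, y} : Finset (Fin n)).card := (Finset.card_pair hxy).symm
    _ ≤ _ := Finset.card_le_card hsub
  rcases key a b hab hAB with hpa | hpb
  · rcases key b c hbc hBC with hpb | hpc
    · exact two_sub a b hab (by simp) (by simp) hpa hpb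
    · exact two_sub a c hac (by simp) (by simp) hpa hpc
  · rcases key a c hac hAC with hpa | hpc
    · exact two_sub a b hab (by simp) (by simp) hpa hpb
    · exact two_sub b c hbc (by simp) (by simp) hpb hpc

lemma dom_three {n : ℕ} (T : PolyTriangulation n) (a b c : Fin n)
    (D : Finset (Finset (Fin n)))
    (hb : ∀ e ∈ D, isBoundaryEdge n e)
    (hcov : ∀ v : Fin n, v ≠ a → v ≠ b → v ≠ c → ∃ e ∈ D, v ∈ e)
    (h1 : ¬ T.isEdge {a, b}) (h2 : ¬ T.isEdge {a, c}) (h3 : ¬ T.isEdge {b, c}) :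
    EdgeTwoDominating T D := by
  apply dom_of_uncov T D hb
  intro u v huv hu hv
  have hu' : u = a ∨ u = b ∨ u = c := by
    by_contra h; push_neg at h; exact hu (hcov u h.1 h.2.1 h.2.2)
  have hv' : v = a ∨ v = b ∨ v = c := by
    by_contra h; push_neg at h; exact hv (hcov v h.1 h.2.1 h.2.2)
  rcases hu' with rfl | rfl | rfl <;> rcases hv' with rfl | rfl | rfl <;>
    first
      | exact absurd rfl huv
      | assumption
      | (rw [Finset.pair_comm]; assumption)

lemma not_mem_of_cross' {n : ℕ} (T : PolyTriangulation n) {e f : Finset (Fin n)}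
    (he : e ∈ T.diags) (hcr : crossing n f e) : f ∉ T.diags :=
  fun hf => T.noncrossing f hf e he hcr

set_option maxRecDepth 20000
set_option maxHeartbeats 1000000
/-- every triangulation graph with `3 ≤ n ≤ 9` vertices has an edge
2-dominating set of size at most `⌊(2n+1)/5⌋`, except for `n = 4`, where an
edge 2-dominating set of size `2` exists. -/
theorem small_edge_two_dominating (n : ℕ) (h3 : 3 ≤ n) (h9 : n ≤ 9)
    (T : PolyTriangulation n) :
    (n ≠ 4 → ∃ D : Finset (Finset (Fin n)),
        EdgeTwoDominating T D ∧ D.card ≤ (2 * n + 1) / 5) ∧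
    (n = 4 → ∃ D : Finset (Finset (Fin n)),
        EdgeTwoDominating T D ∧ D.card = 2) := by
  constructor
  · intro hne
    interval_cases n
    · -- n = 3
      refine ⟨{{0, 1}}, dom_three T 2 2 2 _ (by decide) ?_
        (not_edge_self T 2) (not_edge_self T 2) (not_edge_self T 2), by decide⟩
      intro v h1 _ _
      fin_cases v <;> first | exact absurd rfl h1 | decide
    · exact absurd rfl hne
    · -- n = 5
      refine ⟨{{0, 1}, {2, 3}}, dom_three T 4 4 4 _ (by decide) ?_
        (not_edge_self T 4) (not_edge_self T 4) (not_edge_self T 4), by decide⟩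
      intro v h1 _ _
      fin_cases v <;> first | exact absurd rfl h1 | decide
    · -- n = 6
      by_cases h03 : ({0, 3} : Finset (Fin 6)) ∈ T.diags
      · have h14 : ({1, 4} : Finset (Fin 6)) ∉ T.diags :=
          not_mem_of_cross T h03 (by decide)
        refine ⟨{{2, 3}, {5, 0}}, dom_three T 1 4 4 _ (by decide) ?_
          (not_edge_of T 1 4 (by decide) h14) (not_edge_of T 1 4 (by decide) h14)
          (not_edge_self T 4), by decide⟩
        intro v h1 h2 _
        fin_cases v <;> first | exact absurd rfl h1 | exact absurd rfl h2 | decide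
      · refine ⟨{{1, 2}, {4, 5}}, dom_three T 0 3 3 _ (by decide) ?_
          (not_edge_of T 0 3 (by decide) h03) (not_edge_of T 0 3 (by decide) h03)
          (not_edge_self T 3), by decide⟩
        intro v h1 h2 _
        fin_cases v <;> first | exact absurd rfl h1 | exact absurd rfl h2 | decide
    · -- n = 7
      refine ⟨{{0, 1}, {2, 3}, {4, 5}}, dom_three T 6 6 6 _ (by decide) ?_
        (not_edge_self T 6) (not_edge_self T 6) (not_edge_self T 6), by decide⟩
      intro v h1 _ _
      fin_cases v <;> first | exact absurd rfl h1 | decide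
    · -- n = 8
      by_cases h03 : ({0, 3} : Finset (Fin 8)) ∈ T.diags
      · have h14 : ({1, 4} : Finset (Fin 8)) ∉ T.diags :=
          not_mem_of_cross T h03 (by decide)
        refine ⟨{{2, 3}, {5, 6}, {7, 0}}, dom_three T 1 4 4 _ (by decide) ?_
          (not_edge_of T 1 4 (by decide) h14) (not_edge_of T 1 4 (by decide) h14)
          (not_edge_self T 4), by decide⟩
        intro v h1 h2 _
        fin_cases v <;> first | exact absurd rfl h1 | exact absurd rfl h2 | decide
      · refine ⟨{{1, 2}, {4, 5}, {6, 7}}, dom_three T 0 3 3 _ (by decide) ?_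
          (not_edge_of T 0 3 (by decide) h03) (not_edge_of T 0 3 (by decide) h03)
          (not_edge_self T 3), by decide⟩
        intro v h1 h2 _
        fin_cases v <;> first | exact absurd rfl h1 | exact absurd rfl h2 | decide
    · -- n = 9
      have good : (({0, 3} : Finset (Fin 9)) ∉ T.diags ∧ ({3, 6} : Finset (Fin 9)) ∉ T.diags ∧
            ({0, 6} : Finset (Fin 9)) ∉ T.diags) ∨
          (({1, 4} : Finset (Fin 9)) ∉ T.diags ∧ ({4, 7} : Finset (Fin 9)) ∉ T.diags ∧
            ({1, 7} : Finset (Fin 9)) ∉ T.diags) ∨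
          (({2, 5} : Finset (Fin 9)) ∉ T.diags ∧ ({5, 8} : Finset (Fin 9)) ∉ T.diags ∧
            ({2, 8} : Finset (Fin 9)) ∉ T.diags) := by
        by_cases h03 : ({0, 3} : Finset (Fin 9)) ∈ T.diags
        · have h14 := not_mem_of_cross T h03 (show crossing 9 {0, 3} {1, 4} by decide)
          have h17 := not_mem_of_cross T h03 (show crossing 9 {0, 3} {1, 7} by decide)
          have h25 := not_mem_of_cross T h03 (show crossing 9 {0, 3} {2, 5} by decide)
          have h28 := not_mem_of_cross T h03 (show crossing 9 {0, 3} {2, 8} by decide)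
          by_cases h47 : ({4, 7} : Finset (Fin 9)) ∈ T.diags
          · have h58 := not_mem_of_cross T h47 (show crossing 9 {4, 7} {5, 8} by decide)
            exact Or.inr (Or.inr ⟨h25, h58, h28⟩)
          · exact Or.inr (Or.inl ⟨h14, h47, h17⟩)
        · by_cases h36 : ({3, 6} : Finset (Fin 9)) ∈ T.diags
          · have h14 := not_mem_of_cross' T h36 (show crossing 9 {1, 4} {3, 6} by decide)
            have h47 := not_mem_of_cross T h36 (show crossing 9 {3, 6} {4, 7} by decide)
            have h25 := not_mem_of_cross' T h36 (show crossing 9 {2, 5} {3, 6} by decide)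
            have h58 := not_mem_of_cross T h36 (show crossing 9 {3, 6} {5, 8} by decide)
            by_cases h17 : ({1, 7} : Finset (Fin 9)) ∈ T.diags
            · have h28 := not_mem_of_cross T h17 (show crossing 9 {1, 7} {2, 8} by decide)
              exact Or.inr (Or.inr ⟨h25, h58, h28⟩)
            · exact Or.inr (Or.inl ⟨h14, h47, h17⟩)
          · by_cases h06 : ({0, 6} : Finset (Fin 9)) ∈ T.diags
            · have h17 := not_mem_of_cross T h06 (show crossing 9 {0, 6} {1, 7} by decide)
              have h47 := not_mem_of_cross T h06 (show crossing 9 {0, 6} {4, 7} by decide)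
              have h58 := not_mem_of_cross T h06 (show crossing 9 {0, 6} {5, 8} by decide)
              have h28 := not_mem_of_cross T h06 (show crossing 9 {0, 6} {2, 8} by decide)
              by_cases h14 : ({1, 4} : Finset (Fin 9)) ∈ T.diags
              · have h25 := not_mem_of_cross T h14 (show crossing 9 {1, 4} {2, 5} by decide)
                exact Or.inr (Or.inr ⟨h25, h58, h28⟩)
              · exact Or.inr (Or.inl ⟨h14, h47, h17⟩)
            · exact Or.inl ⟨h03, h36, h06⟩
      rcases good with ⟨ha, hb', hc⟩ | ⟨ha, hb', hc⟩ | ⟨ha, hb', hc⟩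
      · refine ⟨{{1, 2}, {4, 5}, {7, 8}}, dom_three T 0 3 6 _ (by decide) ?_
          (not_edge_of T 0 3 (by decide) ha) (not_edge_of T 0 6 (by decide) hc)
          (not_edge_of T 3 6 (by decide) hb'), by decide⟩
        intro v h1 h2 h3'
        fin_cases v <;>
          first | exact absurd rfl h1 | exact absurd rfl h2 | exact absurd rfl h3' | decide
      · refine ⟨{{2, 3}, {5, 6}, {8, 0}}, dom_three T 1 4 7 _ (by decide) ?_
          (not_edge_of T 1 4 (by decide) ha) (not_edge_of T 1 7 (by decide) hc)
          (not_edge_of T 4 7 (by decide) hb'), by decide⟩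
        intro v h1 h2 h3'
        fin_cases v <;>
          first | exact absurd rfl h1 | exact absurd rfl h2 | exact absurd rfl h3' | decide
      · refine ⟨{{3, 4}, {6, 7}, {0, 1}}, dom_three T 2 5 8 _ (by decide) ?_
          (not_edge_of T 2 5 (by decide) ha) (not_edge_of T 2 8 (by decide) hc)
          (not_edge_of T 5 8 (by decide) hb'), by decide⟩
        intro v h1 h2 h3'
        fin_cases v <;>
          first | exact absurd rfl h1 | exact absurd rfl h2 | exact absurd rfl h3' | decide
  · intro h4
    subst h4
    refine ⟨{{0, 1}, {2, 3}}, dom_three T 0 0 0 _ (by decide) ?_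
      (not_edge_self T 0) (not_edge_self T 0) (not_edge_self T 0), by decide⟩
    intro v _ _ _
    fin_cases v <;> decide
end

section
/- Every triangulation graph of a polygon with n ≥ 3 vertices, n ≠ 4, admits an edge 2-dominating set of size at most ⌊(2n+1)/5⌋; for n = 4 an edge 2-dominating set of size 2 exists. -/
open Finset

namespace E2D

def B (n : ℕ) : ℕ := (2*n+1)/5
abbrev P := ℕ × ℕ
def validP (n : ℕ) (p : P) : Prop :=
  p.1 < p.2 ∧ p.2 < n ∧ 2 ≤ p.2 - p.1 ∧ p.2 - p.1 + 2 ≤ n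
instance validP_dec (n : ℕ) : DecidablePred (validP n) := fun p => by
  unfold validP; infer_instance

def crossP (p q : P) : Prop :=
  (p.1 < q.1 ∧ q.1 < p.2 ∧ p.2 < q.2) ∨ (q.1 < p.1 ∧ p.1 < q.2 ∧ q.2 < p.2)
def NC (L : Finset P) : Prop := ∀ p ∈ L, ∀ q ∈ L, ¬ crossP p q
def Valid (n : ℕ) (L : Finset P) : Prop := ∀ p ∈ L, validP n p
def adjC (n u v : ℕ) : Prop := (u+1) % n = v ∨ (v+1) % n = u
def pairIn (L : Finset P) (u v : ℕ) : Prop := (u,v) ∈ L ∨ (v,u) ∈ L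
structure Sol (n : ℕ) (L : Finset P) (U D : Finset ℕ) : Prop where
  dlt : ∀ i ∈ D, i < n
  ult : ∀ u ∈ U, u < n
  cover : ∀ v, v < n → v ∉ U → ∃ i ∈ D, v = i ∨ v = (i+1) % n
  indep : ∀ u ∈ U, ∀ v ∈ U, u ≠ v → ¬ adjC n u v ∧ ¬ pairIn L u v
  bdd : D.card ≤ B n

/-! ### rotation by one step -/

def rotP1 (n : ℕ) (p : P) : P := if p.2 + 1 = n then (0, p.1 + 1) else (p.1 + 1, p.2 + 1)

def rotL1 (n : ℕ) (L : Finset P) : Finset P := L.image (rotP1 n)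

def rb (n v : ℕ) : ℕ := if v = 0 then n - 1 else v - 1

lemma succ_mod {n A : ℕ} (h : A < n) : (A + 1) % n = if A + 1 = n then 0 else A + 1 := by
  split_ifs with h1
  · simp [h1]
  · exact Nat.mod_eq_of_lt (by omega)

lemma rb_succ {n u : ℕ} (hu : u < n) (hn : 1 ≤ n) : (rb n u + 1) % n = u := by
  unfold rb
  split_ifs with h
  · subst h; simp [Nat.sub_add_cancel hn]
  · rw [Nat.sub_add_cancel (by omega)]; exact Nat.mod_eq_of_lt hu

lemma succ_rb {n v : ℕ} (hv : v < n) (hn : 1 ≤ n) : rb n ((v + 1) % n) = v := by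
  by_cases h : v + 1 = n
  · rw [succ_mod hv, if_pos h]; unfold rb; rw [if_pos rfl]; omega
  · rw [succ_mod hv, if_neg h]; unfold rb; rw [if_neg (by omega)]; omega

lemma pairIn_symm {L : Finset P} {u v : ℕ} : pairIn L u v ↔ pairIn L v u := by
  unfold pairIn; tauto

lemma adjC_symm {n u v : ℕ} : adjC n u v ↔ adjC n v u := by unfold adjC; tauto

lemma pair_mem_rot {n : ℕ} {L : Finset P} (hV : Valid n L) {a b : ℕ} (hab : (a, b) ∈ L) :
    pairIn (rotL1 n L) ((a+1) % n) ((b+1) % n) := by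
  have hval := hV _ hab
  obtain ⟨h1, h2, h3, h4⟩ := hval
  simp only at h1 h2
  have himg : rotP1 n (a, b) ∈ rotL1 n L := Finset.mem_image_of_mem _ hab
  unfold rotP1 at himg
  simp only at himg
  split_ifs at himg with hsp
  · right
    rw [succ_mod (show b < n by omega), if_pos hsp,
        succ_mod (show a < n by omega), if_neg (by omega)]
    exact himg
  · left
    rw [succ_mod (show b < n by omega), if_neg hsp,
        succ_mod (show a < n by omega), if_neg (by omega)]
    exact himg

lemma rb_lt {n v : ℕ} (hn : 1 ≤ n) (hv : v < n) : rb n v < n := by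
  unfold rb; split_ifs <;> omega

lemma rb_inj {n u v : ℕ} (hn : 1 ≤ n) (hu : u < n) (hv : v < n) (h : rb n u = rb n v) :
    u = v := by
  unfold rb at h; split_ifs at h <;> omega

lemma validP_rotP1 {n : ℕ} {p : P} (h : validP n p) : validP n (rotP1 n p) := by
  obtain ⟨a, b⟩ := p
  unfold validP at *
  unfold rotP1
  simp only at *
  split_ifs <;> simp only at * <;> omega

lemma crossP_rotP1 {n : ℕ} {p q : P} (hp : validP n p) (hq : validP n q) :
    crossP (rotP1 n p) (rotP1 n q) ↔ crossP p q := by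
  obtain ⟨a, b⟩ := p; obtain ⟨c, d⟩ := q
  unfold validP at hp hq
  unfold crossP rotP1
  simp only at *
  split_ifs <;> simp only at * <;> omega

lemma Valid_rotL1 {n : ℕ} {L : Finset P} (hV : Valid n L) : Valid n (rotL1 n L) := by
  intro p hp
  obtain ⟨q, hq, rfl⟩ := Finset.mem_image.mp hp
  exact validP_rotP1 (hV _ hq)

lemma NC_rotL1 {n : ℕ} {L : Finset P} (hV : Valid n L) (hNC : NC L) : NC (rotL1 n L) := by
  intro p hp q hq
  obtain ⟨p0, hp0, rfl⟩ := Finset.mem_image.mp hp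
  obtain ⟨q0, hq0, rfl⟩ := Finset.mem_image.mp hq
  rw [crossP_rotP1 (hV _ hp0) (hV _ hq0)]
  exact hNC _ hp0 _ hq0

lemma sol_unrot1 {n : ℕ} (hn : 3 ≤ n) {L : Finset P} (hV : Valid n L) {U D : Finset ℕ}
    (S : Sol n (rotL1 n L) U D) : Sol n L (U.image (rb n)) (D.image (rb n)) := by
  have hn1 : 1 ≤ n := by omega
  constructor
  · intro i hi
    obtain ⟨j, hj, rfl⟩ := Finset.mem_image.mp hi
    exact rb_lt hn1 (S.dlt _ hj)
  · intro u hu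
    obtain ⟨j, hj, rfl⟩ := Finset.mem_image.mp hu
    exact rb_lt hn1 (S.ult _ hj)
  · intro v hv hvU
    have hw : (v + 1) % n < n := Nat.mod_lt _ (by omega)
    have hwU : (v + 1) % n ∉ U := by
      intro hmem
      exact hvU (Finset.mem_image.mpr ⟨_, hmem, succ_rb hv hn1⟩)
    obtain ⟨i, hi, hcov⟩ := S.cover _ hw hwU
    refine ⟨rb n i, Finset.mem_image_of_mem _ hi, ?_⟩
    have hin : i < n := S.dlt _ hi
    rcases hcov with h | h
    · left
      have : rb n ((v+1) % n) = rb n i := by rw [h]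
      rwa [succ_rb hv hn1] at this
    · right
      -- (v+1)%n = (i+1)%n hence v = i, and v = (rb i + 1)%n follows? no:
      have hvi : v = i := by
        have h1 : rb n ((v+1) % n) = rb n ((i+1) % n) := by rw [h]
        rwa [succ_rb hv hn1, succ_rb hin hn1] at h1
      subst hvi
      -- goal : v = (rb n v + 1) % n
      rw [rb_succ hv hn1]
  · intro u hu v hv huv
    obtain ⟨u0, hu0, rfl⟩ := Finset.mem_image.mp hu
    obtain ⟨v0, hv0, rfl⟩ := Finset.mem_image.mp hv
    have hu0n : u0 < n := S.ult _ hu0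
    have hv0n : v0 < n := S.ult _ hv0
    have huv0 : u0 ≠ v0 := fun h => huv (by rw [h])
    obtain ⟨hadj, hpair⟩ := S.indep _ hu0 _ hv0 huv0
    constructor
    · intro h
      apply hadj
      rcases h with h | h
      · -- (rb u0 + 1)%n = rb v0, i.e. u0 = rb v0, so (u0+1)%n = v0
        rw [rb_succ hu0n hn1] at h
        left; rw [h, rb_succ hv0n hn1]
      · rw [rb_succ hv0n hn1] at h
        right; rw [h, rb_succ hu0n hn1]
    · intro h
      apply hpair
      rcases h with h | h
      · have := pair_mem_rot hV h
        rwa [rb_succ hu0n hn1, rb_succ hv0n hn1] at this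
      · have := pair_mem_rot hV h
        rw [rb_succ hu0n hn1, rb_succ hv0n hn1] at this
        exact pairIn_symm.mp this
  · exact le_trans (Finset.card_image_le) S.bdd


/-! ### iterated rotation -/

def Transfers (n : ℕ) (L L' : Finset P) : Prop :=
  ∀ U D : Finset ℕ, Sol n L' U D → ∃ U₀ D₀ : Finset ℕ, Sol n L U₀ D₀

lemma transfers_rot1 {n : ℕ} (hn : 3 ≤ n) {L : Finset P} (hV : Valid n L) :
    Transfers n L (rotL1 n L) :=
  fun _ _ S => ⟨_, _, sol_unrot1 hn hV S⟩

lemma Valid_iter {n : ℕ} {L : Finset P} (hV : Valid n L) (k : ℕ) :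
    Valid n ((rotL1 n)^[k] L) := by
  induction k with
  | zero => exact hV
  | succ k ih => rw [Function.iterate_succ_apply']; exact Valid_rotL1 ih

lemma NC_iter {n : ℕ} {L : Finset P} (hV : Valid n L) (hNC : NC L) (k : ℕ) :
    NC ((rotL1 n)^[k] L) := by
  induction k with
  | zero => exact hNC
  | succ k ih => rw [Function.iterate_succ_apply']; exact NC_rotL1 (Valid_iter hV k) ih

lemma transfers_iter {n : ℕ} (hn : 3 ≤ n) {L : Finset P} (hV : Valid n L) (k : ℕ) :
    Transfers n L ((rotL1 n)^[k] L) := by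
  induction k with
  | zero => exact fun U D S => ⟨U, D, S⟩
  | succ k ih =>
      intro U D S
      rw [Function.iterate_succ_apply'] at S
      obtain ⟨U1, D1, S1⟩ := transfers_rot1 hn (Valid_iter hV k) U D S
      exact ih U1 D1 S1

def mkP (x y : ℕ) : P := if x ≤ y then (x, y) else (y, x)

lemma one_mod {n : ℕ} (hn : 2 ≤ n) : (1 : ℕ) % n = 1 := Nat.mod_eq_of_lt (by omega)

lemma add_one_mod {n x : ℕ} (hn : 2 ≤ n) : (x + 1) % n = (x % n + 1) % n := by
  conv_lhs => rw [Nat.add_mod, one_mod hn]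

lemma rotP1_mkP {n A B : ℕ} (hAB : A ≠ B) (hA : A < n) (hB : B < n) :
    rotP1 n (mkP A B) = mkP ((A+1) % n) ((B+1) % n) := by
  rcases Nat.lt_or_ge A B with h | h
  · rw [show mkP A B = (A, B) by unfold mkP; rw [if_pos (by omega)]]
    unfold rotP1
    simp only
    split_ifs with hsp
    · rw [show (B+1) % n = 0 by rw [hsp]; exact Nat.mod_self n,
          Nat.mod_eq_of_lt (show A + 1 < n by omega)]
      unfold mkP; rw [if_neg (by omega)]
    · rw [Nat.mod_eq_of_lt (show B + 1 < n by omega),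
          Nat.mod_eq_of_lt (show A + 1 < n by omega)]
      unfold mkP; rw [if_pos (by omega)]
  · have h' : B < A := by omega
    rw [show mkP A B = (B, A) by unfold mkP; rw [if_neg (by omega)]]
    unfold rotP1
    simp only
    split_ifs with hsp
    · rw [show (A+1) % n = 0 by rw [hsp]; exact Nat.mod_self n,
          Nat.mod_eq_of_lt (show B + 1 < n by omega)]
      unfold mkP; rw [if_pos (by omega)]
    · rw [Nat.mod_eq_of_lt (show B + 1 < n by omega),
          Nat.mod_eq_of_lt (show A + 1 < n by omega)]
      unfold mkP; rw [if_neg (by omega)]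

lemma rotP1_iter {n : ℕ} (hn : 3 ≤ n) {a b : ℕ} (h1 : a < b) (h2 : b < n) :
    ∀ k : ℕ, (rotP1 n)^[k] (a, b) = mkP ((a+k) % n) ((b+k) % n) := by
  intro k
  induction k with
  | zero =>
      simp only [Function.iterate_zero, id_eq, Nat.add_zero]
      rw [Nat.mod_eq_of_lt (by omega), Nat.mod_eq_of_lt h2]
      unfold mkP; rw [if_pos (by omega)]
  | succ k ih =>
      rw [Function.iterate_succ_apply', ih]
      have hA : (a+k) % n < n := Nat.mod_lt _ (by omega)
      have hB : (b+k) % n < n := Nat.mod_lt _ (by omega)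
      have hAB : (a+k) % n ≠ (b+k) % n := by
        intro h
        have h3 : a ≡ b [MOD n] := Nat.ModEq.add_right_cancel' k h
        have h4 : a % n = b % n := h3
        rw [Nat.mod_eq_of_lt (by omega), Nat.mod_eq_of_lt h2] at h4
        omega
      have hsucc : ∀ x : ℕ, (x + (k+1)) % n = ((x + k) % n + 1) % n := by
        intro x; rw [← Nat.add_assoc, add_one_mod (show 2 ≤ n by omega)]
      rw [hsucc, hsucc]
      exact rotP1_mkP hAB hA hB

lemma mem_iter {n : ℕ} {L : Finset P} {p : P} (hp : p ∈ L) (k : ℕ) :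
    (rotP1 n)^[k] p ∈ (rotL1 n)^[k] L := by
  induction k with
  | zero => exact hp
  | succ k ih =>
      rw [Function.iterate_succ_apply', Function.iterate_succ_apply']
      exact Finset.mem_image_of_mem _ ih

lemma iter_mem_rev {n : ℕ} {L : Finset P} {q : P} (k : ℕ)
    (hq : q ∈ (rotL1 n)^[k] L) : ∃ p ∈ L, q = (rotP1 n)^[k] p := by
  induction k generalizing q with
  | zero => exact ⟨q, hq, rfl⟩
  | succ k ih =>
      rw [Function.iterate_succ_apply'] at hq
      obtain ⟨q0, hq0, rfl⟩ := Finset.mem_image.mp hq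
      obtain ⟨p, hp, rfl⟩ := ih hq0
      exact ⟨p, hp, (Function.iterate_succ_apply' _ _ _).symm⟩

def span (n : ℕ) (p : P) : ℕ := min (p.2 - p.1) (n - (p.2 - p.1))

lemma span_rotP1 {n : ℕ} {p : P} (h : validP n p) : span n (rotP1 n p) = span n p := by
  obtain ⟨a, b⟩ := p
  obtain ⟨h1, h2, h3, h4⟩ := h
  simp only at h1 h2 h3 h4
  unfold span rotP1
  simp only
  split_ifs <;> simp only <;> omega

lemma span_iter {n : ℕ} {L : Finset P} (hV : Valid n L) (k : ℕ) {q : P}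
    (hq : q ∈ (rotL1 n)^[k] L) : ∃ p ∈ L, span n q = span n p := by
  induction k generalizing q with
  | zero => exact ⟨q, hq, rfl⟩
  | succ k ih =>
      rw [Function.iterate_succ_apply'] at hq
      obtain ⟨q0, hq0, rfl⟩ := Finset.mem_image.mp hq
      obtain ⟨p, hp, hsp⟩ := ih hq0
      exact ⟨p, hp, by rw [span_rotP1 (Valid_iter hV k _ hq0), hsp]⟩


/-! ### window conditions -/

def CondE (L : Finset P) : Prop := ∀ p ∈ L, (p.1 = 2 → p.2 = 4) ∧ (p.2 = 2 → p.1 = 0)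
def CondO1 (L : Finset P) : Prop := ∀ p ∈ L, (p.1 = 1 → p.2 = 3 ∨ p.2 = 4) ∧ p.2 ≠ 1
def CondO3 (L : Finset P) : Prop := ∀ p ∈ L, p.1 ≠ 3 ∧ (p.2 = 3 → p.1 ≤ 1)

lemma rot_last {n x : ℕ} (hx : x < n) (hn : 1 ≤ n) :
    (x + (n-1)) % n = if x = 0 then n-1 else x-1 := by
  split_ifs with h
  · subst h
    simp only [Nat.zero_add]
    exact Nat.mod_eq_of_lt (by omega)
  · rw [show x + (n-1) = (x-1) + n by omega, Nat.add_mod_right]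
    exact Nat.mod_eq_of_lt (by omega)

lemma rot_last2 {n x : ℕ} (hx : x < n) (hn : 2 ≤ n) :
    (x + (n-2)) % n = if x ≤ 1 then x + n - 2 else x - 2 := by
  split_ifs with h
  · rw [show x + (n-2) = x + n - 2 by omega]
    exact Nat.mod_eq_of_lt (by omega)
  · rw [show x + (n-2) = (x-2) + n by omega, Nat.add_mod_right]
    exact Nat.mod_eq_of_lt (by omega)

lemma condsA {n : ℕ} (hn : 10 ≤ n) {L' : Finset P} (hV' : Valid n L')
    (hsp : ∀ p ∈ L', span n p = 2) (hno : (1, n-1) ∉ L') : CondE L' ∧ CondO1 L' := by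
  constructor
  · intro p hp
    obtain ⟨h1, h2, h3, h4⟩ := hV' _ hp
    have hs := hsp _ hp
    simp only [span, Nat.min_def] at hs
    constructor
    · intro he
      rw [he] at h1 h3 hs h4
      split_ifs at hs <;> omega
    · intro he
      rw [he] at h1 h3 hs h4
      split_ifs at hs <;> omega
  · intro p hp
    obtain ⟨h1, h2, h3, h4⟩ := hV' _ hp
    have hs := hsp _ hp
    simp only [span, Nat.min_def] at hs
    constructor
    · intro he
      obtain ⟨a, b⟩ := p
      simp only at h1 h2 h3 h4 hs he ⊢
      subst he
      have : b = 3 ∨ b = n - 1 := by split_ifs at hs <;> omega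
      rcases this with h | h
      · left; exact h
      · exfalso; rw [h] at hp; exact hno hp
    · intro he
      rw [he] at h1 h3
      omega

lemma windowA {n : ℕ} (hn : 10 ≤ n) {L : Finset P} (hV : Valid n L) (hNC : NC L)
    (hear : ∀ p ∈ L, span n p = 2) :
    ∃ L' : Finset P, Valid n L' ∧ NC L' ∧ Transfers n L L' ∧
      CondE L' ∧ (CondO1 L' ∨ CondO3 L') := by
  by_cases h02 : (0, 2) ∈ L
  · -- use k = n-2 ; excluded pair (1,3)
    have h13 : (1, 3) ∉ L := fun h => hNC _ h02 _ h (by left; norm_num)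
    refine ⟨(rotL1 n)^[n-2] L, Valid_iter hV _, NC_iter hV hNC _,
      transfers_iter (by omega) hV _, ?_⟩
    have hno : (1, n-1) ∉ (rotL1 n)^[n-2] L := by
      intro h
      obtain ⟨p, hp, heq⟩ := iter_mem_rev _ h
      obtain ⟨a, b⟩ := p
      obtain ⟨h1, h2, h3, h4⟩ := hV _ hp
      simp only at h1 h2 h3 h4
      rw [rotP1_iter (by omega) h1 h2] at heq
      rw [rot_last2 (by omega) (by omega), rot_last2 h2 (by omega)] at heq
      have hab : a = 1 ∧ b = 3 := by
        unfold mkP at heq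
        split_ifs at heq <;> simp only [Prod.mk.injEq] at heq <;> omega
      rw [hab.1, hab.2] at hp
      exact h13 hp
    have hsp : ∀ p ∈ (rotL1 n)^[n-2] L, span n p = 2 := by
      intro p hp
      obtain ⟨q, hq, hqe⟩ := span_iter hV _ hp
      rw [hqe]; exact hear _ hq
    obtain ⟨hE, hO⟩ := condsA hn (Valid_iter hV _) hsp hno
    exact ⟨hE, Or.inl hO⟩
  · refine ⟨(rotL1 n)^[n-1] L, Valid_iter hV _, NC_iter hV hNC _,
      transfers_iter (by omega) hV _, ?_⟩
    have hno : (1, n-1) ∉ (rotL1 n)^[n-1] L := by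
      intro h
      obtain ⟨p, hp, heq⟩ := iter_mem_rev _ h
      obtain ⟨a, b⟩ := p
      obtain ⟨h1, h2, h3, h4⟩ := hV _ hp
      simp only at h1 h2 h3 h4
      rw [rotP1_iter (by omega) h1 h2] at heq
      rw [rot_last (by omega) (by omega), rot_last h2 (by omega)] at heq
      have hab : a = 0 ∧ b = 2 := by
        unfold mkP at heq
        split_ifs at heq <;> simp only [Prod.mk.injEq] at heq <;> omega
      rw [hab.1, hab.2] at hp
      exact h02 hp
    have hsp : ∀ p ∈ (rotL1 n)^[n-1] L, span n p = 2 := by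
      intro p hp
      obtain ⟨q, hq, hqe⟩ := span_iter hV _ hp
      rw [hqe]; exact hear _ hq
    obtain ⟨hE, hO⟩ := condsA hn (Valid_iter hV _) hsp hno
    exact ⟨hE, Or.inl hO⟩


lemma cross_inside {L : Finset P} (hNC : NC L) {a b x y : ℕ} (hab : (a,b) ∈ L)
    (hxy : (x,y) ∈ L) (h1 : a < x) (h2 : x < b) (h3 : x < y) : y ≤ b := by
  by_contra h
  exact hNC _ hab _ hxy (Or.inl ⟨h1, h2, by omega⟩)

lemma condsB3 {n : ℕ} (hn : 10 ≤ n) {L' : Finset P} (hV' : Valid n L') (hNC' : NC L')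
    (h14 : (1, 4) ∈ L') : CondE L' ∧ CondO3 L' := by
  constructor
  · rintro ⟨a, b⟩ hp
    obtain ⟨h1, h2, h3, h4⟩ := hV' _ hp
    simp only at h1 h2 h3 h4 ⊢
    constructor
    · rintro rfl
      have := cross_inside hNC' h14 hp (by omega) (by omega) h1
      omega
    · rintro rfl; omega
  · rintro ⟨a, b⟩ hp
    obtain ⟨h1, h2, h3, h4⟩ := hV' _ hp
    simp only at h1 h2 h3 h4 ⊢
    constructor
    · rintro rfl
      have := cross_inside hNC' h14 hp (by omega) (by omega) h1
      omega
    · rintro rfl; omega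

lemma condsB4 {n s0 : ℕ} (hn : 10 ≤ n) {L' : Finset P} (hV' : Valid n L') (hNC' : NC L')
    (hs03 : 4 ≤ s0) (hs0n : 2 * s0 ≤ n) (hmem : (0, s0) ∈ L')
    (hmin : ∀ q ∈ L', 3 ≤ span n q → s0 ≤ span n q) : CondE L' ∧ CondO1 L' := by
  constructor
  · rintro ⟨a, b⟩ hp
    obtain ⟨h1, h2, h3, h4⟩ := hV' _ hp
    simp only at h1 h2 h3 h4 ⊢
    constructor
    · rintro rfl
      have hbs : b ≤ s0 := cross_inside hNC' hmem hp (by omega) (by omega) h1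
      have hsp : span n (2, b) = b - 2 := by
        simp only [span, Nat.min_def]; split_ifs <;> omega
      by_contra hb4
      have h3b : 3 ≤ span n (2, b) := by omega
      have := hmin _ hp h3b
      omega
    · rintro rfl; omega
  · rintro ⟨a, b⟩ hp
    obtain ⟨h1, h2, h3, h4⟩ := hV' _ hp
    simp only at h1 h2 h3 h4 ⊢
    constructor
    · rintro rfl
      have hbs : b ≤ s0 := cross_inside hNC' hmem hp (by omega) (by omega) h1
      have hsp : span n (1, b) = b - 1 := by
        simp only [span, Nat.min_def]; split_ifs <;> omega
      by_contra hb
      have h3b : 3 ≤ span n (1, b) := by omega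
      have := hmin _ hp h3b
      omega
    · omega

lemma windowB {n : ℕ} (hn : 10 ≤ n) {L : Finset P} (hV : Valid n L) (hNC : NC L)
    {q0 : P} (hq0 : q0 ∈ L) (hq03 : 3 ≤ span n q0) :
    ∃ L' : Finset P, Valid n L' ∧ NC L' ∧ Transfers n L L' ∧
      CondE L' ∧ (CondO1 L' ∨ CondO3 L') := by
  classical
  set F := L.filter (fun p => 3 ≤ span n p) with hF
  have hFne : F.Nonempty := ⟨q0, Finset.mem_filter.mpr ⟨hq0, hq03⟩⟩
  obtain ⟨d0, hd0F, hmin0⟩ := F.exists_min_image (span n) hFne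
  have hd0L : d0 ∈ L := (Finset.mem_filter.mp hd0F).1
  have hd03 : 3 ≤ span n d0 := (Finset.mem_filter.mp hd0F).2
  have hminL : ∀ q ∈ L, 3 ≤ span n q → span n d0 ≤ span n q := by
    intro q hq hq3
    exact hmin0 q (Finset.mem_filter.mpr ⟨hq, hq3⟩)
  obtain ⟨a, b⟩ := d0
  obtain ⟨h1, h2, h3, h4⟩ := hV _ hd0L
  simp only at h1 h2 h3 h4
  set s0 := span n (a, b) with hs0def
  have hs0ab : s0 = min (b - a) (n - (b - a)) := rfl
  have hs03 : 3 ≤ s0 := hd03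
  have hs0n : 2 * s0 ≤ n := by
    rw [hs0ab]; simp only [Nat.min_def]; split_ifs <;> omega
  -- rotate so that d0 lands on (0, s0)
  have hland : ∃ k : ℕ, (0, s0) ∈ (rotL1 n)^[k] L := by
    rcases le_or_gt (b - a) (n - (b - a)) with hle | hlt
    · refine ⟨n - a, ?_⟩
      have := mem_iter (n := n) hd0L (n - a)
      rw [rotP1_iter (by omega) h1 h2] at this
      rw [show a + (n - a) = n by omega, Nat.mod_self,
          show b + (n - a) = (b - a) + n by omega, Nat.add_mod_right,
          Nat.mod_eq_of_lt (by omega)] at this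
      have hmk : mkP 0 (b - a) = (0, s0) := by
        unfold mkP; rw [if_pos (by omega)]
        rw [hs0ab, Nat.min_def, if_pos hle]
      rwa [hmk] at this
    · refine ⟨n - b, ?_⟩
      have := mem_iter (n := n) hd0L (n - b)
      rw [rotP1_iter (by omega) h1 h2] at this
      rw [show b + (n - b) = n by omega, Nat.mod_self,
          Nat.mod_eq_of_lt (show a + (n - b) < n by omega)] at this
      have hmk : mkP (a + (n - b)) 0 = (0, s0) := by
        unfold mkP; rw [if_neg (by omega)]
        rw [hs0ab, Nat.min_def, if_neg (by omega)]
        congr 1; omega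
      rwa [hmk] at this
  obtain ⟨k, hk⟩ := hland
  have hV' := Valid_iter hV (n := n) (L := L) k
  have hNC' := NC_iter hV hNC (n := n) (L := L) k
  have hmin' : ∀ q ∈ (rotL1 n)^[k] L, 3 ≤ span n q → s0 ≤ span n q := by
    intro q hq hq3
    obtain ⟨p, hp, hpe⟩ := span_iter hV _ hq
    rw [hpe] at hq3 ⊢
    exact hminL _ hp hq3
  by_cases hs4 : 4 ≤ s0
  · obtain ⟨hE, hO⟩ := condsB4 hn hV' hNC' hs4 hs0n hk hmin'
    exact ⟨_, hV', hNC', transfers_iter (by omega) hV k, hE, Or.inl hO⟩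
  · -- s0 = 3 : rotate once more, (0,3) ↦ (1,4)
    have hs0 : s0 = 3 := by omega
    rw [hs0] at hk
    have h14 : (1, 4) ∈ (rotL1 n)^[k+1] L := by
      rw [Function.iterate_succ_apply']
      have := Finset.mem_image_of_mem (rotP1 n) hk
      unfold rotP1 at this
      simp only at this
      rw [if_neg (by omega)] at this
      exact this
    obtain ⟨hE, hO⟩ := condsB3 hn (Valid_iter hV _) (NC_iter hV hNC _) h14
    exact ⟨_, Valid_iter hV _, NC_iter hV hNC _, transfers_iter (by omega) hV (k+1),
      hE, Or.inr hO⟩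

lemma window {n : ℕ} (hn : 10 ≤ n) {L : Finset P} (hV : Valid n L) (hNC : NC L) :
    ∃ L' : Finset P, Valid n L' ∧ NC L' ∧ Transfers n L L' ∧
      CondE L' ∧ (CondO1 L' ∨ CondO3 L') := by
  by_cases hear : ∀ p ∈ L, span n p = 2
  · exact windowA hn hV hNC hear
  · push_neg at hear
    obtain ⟨q0, hq0, hq02⟩ := hear
    have hq03 : 3 ≤ span n q0 := by
      obtain ⟨h1, h2, h3, h4⟩ := hV _ hq0
      have : 2 ≤ span n q0 := by
        simp only [span, Nat.min_def]; split_ifs <;> omega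
      omega
    exact windowB hn hV hNC hq0 hq03


/-! ### shrink and lift -/

def shrink (n : ℕ) (L : Finset P) : Finset P :=
  ((L.filter (fun p => 5 ≤ p.1)).image (fun p => (p.1 - 5, p.2 - 5))).filter (validP (n-5))

lemma Valid_shrink (n : ℕ) (L : Finset P) : Valid (n-5) (shrink n L) := by
  intro p hp
  exact (Finset.mem_filter.mp hp).2

lemma mem_shrink {n : ℕ} {L : Finset P} {q : P} (hq : q ∈ shrink n L) :
    ∃ p ∈ L, 5 ≤ p.1 ∧ q = (p.1 - 5, p.2 - 5) := by
  obtain ⟨hq1, _⟩ := Finset.mem_filter.mp hq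
  obtain ⟨p, hp, rfl⟩ := Finset.mem_image.mp hq1
  obtain ⟨hpL, hp5⟩ := Finset.mem_filter.mp hp
  exact ⟨p, hpL, hp5, rfl⟩

lemma NC_shrink {n : ℕ} {L : Finset P} (hV : Valid n L) (hNC : NC L) : NC (shrink n L) := by
  intro p hp q hq hc
  obtain ⟨p0, hp0, hp05, rfl⟩ := mem_shrink hp
  obtain ⟨q0, hq0, hq05, rfl⟩ := mem_shrink hq
  apply hNC _ hp0 _ hq0
  obtain ⟨hp1, hp2, hp3, hp4⟩ := hV _ hp0
  obtain ⟨hq1, hq2, hq3, hq4⟩ := hV _ hq0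
  unfold crossP at hc ⊢
  simp only at *
  omega

/-- key arithmetic -/
lemma B_step {n : ℕ} (hn : 10 ≤ n) : B n = B (n-5) + 2 := by unfold B; omega

lemma lift_pair_indep {n : ℕ} (hn : 10 ≤ n) {L : Finset P} (hV : Valid n L)
    {U' D' : Finset ℕ} (S : Sol (n-5) (shrink n L) U' D') {a b : ℕ}
    (ha : a ∈ U') (hb : b ∈ U') (hab : a ≠ b) (hL : (a + 5, b + 5) ∈ L) : False := by
  obtain ⟨h1, h2, h3, h4⟩ := hV _ hL
  simp only at h1 h2 h3 h4
  by_cases hval : validP (n-5) (a, b)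
  · have hmem : (a, b) ∈ shrink n L := by
      refine Finset.mem_filter.mpr ⟨Finset.mem_image.mpr ⟨(a+5, b+5), Finset.mem_filter.mpr ⟨hL, by simp⟩, by simp⟩, hval⟩
    exact (S.indep _ ha _ hb hab).2 (Or.inl hmem)
  · have hab0 : a = 0 ∧ b = n - 5 - 1 := by
      unfold validP at hval
      push_neg at hval
      simp only at hval
      omega
    apply (S.indep _ ha _ hb hab).1
    right
    rw [hab0.1, hab0.2]
    rw [show n - 5 - 1 + 1 = n - 5 by omega]
    exact Nat.mod_self _

lemma lift_adj {n : ℕ} (hn : 10 ≤ n) {U' D' : Finset ℕ} {L : Finset P}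
    (S : Sol (n-5) (shrink n L) U' D') {a b : ℕ} (ha : a ∈ U') (hb : b ∈ U')
    (hab : a ≠ b) (h : adjC n (a + 5) (b + 5)) : False := by
  have han : a < n - 5 := S.ult _ ha
  have hbn : b < n - 5 := S.ult _ hb
  apply (S.indep _ ha _ hb hab).1
  rcases h with h | h
  · rw [succ_mod (show a + 5 < n by omega)] at h
    split_ifs at h with h5
    left
    rw [succ_mod (show a < n - 5 by omega)]
    rw [if_neg (by omega)]
    omega
  · rw [succ_mod (show b + 5 < n by omega)] at h
    split_ifs at h with h5
    right
    rw [succ_mod (show b < n - 5 by omega)]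
    rw [if_neg (by omega)]
    omega


lemma lift_indep {n : ℕ} (hn : 10 ≤ n) {L : Finset P} (hV : Valid n L)
    {U' D' : Finset ℕ} (S : Sol (n-5) (shrink n L) U' D')
    {w0 : ℕ} (hw1 : 1 ≤ w0) (hw3 : w0 ≤ 3) (hwin : ∀ y, 5 ≤ y → (w0, y) ∉ L) :
    ∀ u ∈ insert w0 (U'.image (· + 5)), ∀ v ∈ insert w0 (U'.image (· + 5)), u ≠ v →
      ¬ adjC n u v ∧ ¬ pairIn L u v := by
  have one : ∀ b ∈ U', ¬ adjC n w0 (b+5) ∧ ¬ pairIn L w0 (b+5) := by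
    intro b hb
    have hbm : b < n - 5 := S.ult _ hb
    constructor
    · rintro (h | h)
      · rw [Nat.mod_eq_of_lt (show w0 + 1 < n by omega)] at h
        omega
      · rw [succ_mod (show b + 5 < n by omega)] at h
        split_ifs at h <;> omega
    · rintro (h | h)
      · exact hwin _ (by omega) h
      · have := (hV _ h).1; simp at this; omega
  intro u hu v hv huv
  rcases Finset.mem_insert.mp hu with rfl | hu' <;>
    rcases Finset.mem_insert.mp hv with h | hv'
  · omega
  · obtain ⟨b, hb, rfl⟩ := Finset.mem_image.mp hv'
    exact one _ hb
  · obtain ⟨a, ha, rfl⟩ := Finset.mem_image.mp hu'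
    subst h
    obtain ⟨h1, h2⟩ := one _ ha
    exact ⟨fun hh => h1 (adjC_symm.mp hh), fun hh => h2 (pairIn_symm.mp hh)⟩
  · obtain ⟨a, ha, rfl⟩ := Finset.mem_image.mp hu'
    obtain ⟨b, hb, rfl⟩ := Finset.mem_image.mp hv'
    have hab : a ≠ b := by omega
    constructor
    · exact fun h => lift_adj hn S ha hb hab h
    · rintro (h | h)
      · exact lift_pair_indep hn hV S ha hb hab h
      · exact lift_pair_indep hn hV S hb ha hab.symm h

lemma lift_sol {n : ℕ} (hn : 10 ≤ n) {L : Finset P} (hV : Valid n L) (hNC : NC L)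
    (hE : CondE L) (hO : CondO1 L ∨ CondO3 L) {U' D' : Finset ℕ}
    (S : Sol (n-5) (shrink n L) U' D') : ∃ U D : Finset ℕ, Sol n L U D := by
  have hBs : B n = B (n-5) + 2 := B_step hn
  have hDb : D'.card ≤ B (n-5) := S.bdd
  by_cases hw : (n-5) - 1 ∈ D'
  · -- wrap edge used : odd lifts
    have hcard_erase : (D'.erase ((n-5) - 1)).card = D'.card - 1 :=
      Finset.card_erase_of_mem hw
    have hD1 : 1 ≤ D'.card := Finset.card_pos.mpr ⟨_, hw⟩
    rcases hO with hO1 | hO3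
    · -- window vertex 1, edges {n-1, 2, 4}
      refine ⟨insert 1 (U'.image (· + 5)),
        insert (n-1) (insert 2 (insert 4 ((D'.erase ((n-5)-1)).image (· + 5)))), ?_, ?_, ?_, ?_, ?_⟩
      · intro i hi
        simp only [Finset.mem_insert, Finset.mem_image] at hi
        rcases hi with rfl | rfl | rfl | ⟨j, hj, rfl⟩
        · omega
        · omega
        · omega
        · have := S.dlt _ (Finset.mem_of_mem_erase hj); omega
      · intro u hu
        simp only [Finset.mem_insert, Finset.mem_image] at hu
        rcases hu with rfl | ⟨b, hb, rfl⟩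
        · omega
        · have := S.ult _ hb; omega
      · intro v hvn hvU
        have hWmem : (1 : ℕ) ∈ insert 1 (U'.image (· + 5)) := Finset.mem_insert_self _ _
        by_cases hv5 : 5 ≤ v
        · have hwU : v - 5 ∉ U' := by
            intro h
            exact hvU (Finset.mem_insert_of_mem (Finset.mem_image.mpr ⟨v - 5, h, by omega⟩))
          obtain ⟨j, hj, hc⟩ := S.cover (v-5) (by omega) hwU
          have hjm : j < n - 5 := S.dlt _ hj
          by_cases hje : j = (n-5) - 1
          · subst hje
            rcases hc with hc | hc
            · -- v = n - 1
              refine ⟨n-1, Finset.mem_insert_self _ _, Or.inl (by omega)⟩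
            · -- v - 5 = ((n-5-1)+1) % (n-5) = 0, so v = 5
              rw [show (n-5) - 1 + 1 = n - 5 by omega, Nat.mod_self] at hc
              refine ⟨4, by simp, Or.inr ?_⟩
              rw [Nat.mod_eq_of_lt (show 4 + 1 < n by omega)]
              omega
          · have hjD : j + 5 ∈ insert (n-1) (insert 2 (insert 4 ((D'.erase ((n-5)-1)).image (· + 5)))) := by
              simp only [Finset.mem_insert, Finset.mem_image]
              right; right; right
              exact ⟨j, Finset.mem_erase.mpr ⟨hje, hj⟩, rfl⟩
            refine ⟨j + 5, hjD, ?_⟩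
            rcases hc with hc | hc
            · exact Or.inl (by omega)
            · rw [succ_mod (show j < n - 5 by omega), if_neg (by omega)] at hc
              right
              rw [succ_mod (show j + 5 < n by omega), if_neg (by omega)]
              omega
        · -- v < 5 window coverage
          interval_cases v
          · refine ⟨n-1, Finset.mem_insert_self _ _, Or.inr ?_⟩
            rw [show n - 1 + 1 = n by omega, Nat.mod_self]
          · exact absurd hWmem hvU
          · refine ⟨2, by simp, Or.inl rfl⟩
          · refine ⟨2, by simp, Or.inr ?_⟩
            rw [Nat.mod_eq_of_lt (show 2 + 1 < n by omega)]
          · refine ⟨4, by simp, Or.inl rfl⟩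
      · refine lift_indep hn hV S (by norm_num) (by norm_num) ?_
        intro y hy hmem
        rcases (hO1 _ hmem).1 rfl with h | h <;> simp at h <;> omega
      · calc (insert (n-1) (insert 2 (insert 4 ((D'.erase ((n-5)-1)).image (· + 5))))).card
            ≤ (insert 2 (insert 4 ((D'.erase ((n-5)-1)).image (· + 5)))).card + 1 :=
              Finset.card_insert_le _ _
          _ ≤ ((insert 4 ((D'.erase ((n-5)-1)).image (· + 5))).card + 1) + 1 := by
              have := Finset.card_insert_le (2:ℕ) (insert 4 ((D'.erase ((n-5)-1)).image (· + 5)))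
              omega
          _ ≤ (((D'.erase ((n-5)-1)).image (· + 5)).card + 1 + 1) + 1 := by
              have := Finset.card_insert_le (4:ℕ) ((D'.erase ((n-5)-1)).image (· + 5))
              omega
          _ ≤ B n := by
              have := Finset.card_image_le (f := (· + 5)) (s := D'.erase ((n-5)-1))
              omega
    · -- window vertex 3, edges {n-1, 1, 4}
      refine ⟨insert 3 (U'.image (· + 5)),
        insert (n-1) (insert 1 (insert 4 ((D'.erase ((n-5)-1)).image (· + 5)))), ?_, ?_, ?_, ?_, ?_⟩
      · intro i hi
        simp only [Finset.mem_insert, Finset.mem_image] at hi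
        rcases hi with rfl | rfl | rfl | ⟨j, hj, rfl⟩
        · omega
        · omega
        · omega
        · have := S.dlt _ (Finset.mem_of_mem_erase hj); omega
      · intro u hu
        simp only [Finset.mem_insert, Finset.mem_image] at hu
        rcases hu with rfl | ⟨b, hb, rfl⟩
        · omega
        · have := S.ult _ hb; omega
      · intro v hvn hvU
        have hWmem : (3 : ℕ) ∈ insert 3 (U'.image (· + 5)) := Finset.mem_insert_self _ _
        by_cases hv5 : 5 ≤ v
        · have hwU : v - 5 ∉ U' := by
            intro h
            exact hvU (Finset.mem_insert_of_mem (Finset.mem_image.mpr ⟨v - 5, h, by omega⟩))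
          obtain ⟨j, hj, hc⟩ := S.cover (v-5) (by omega) hwU
          have hjm : j < n - 5 := S.dlt _ hj
          by_cases hje : j = (n-5) - 1
          · subst hje
            rcases hc with hc | hc
            · refine ⟨n-1, Finset.mem_insert_self _ _, Or.inl (by omega)⟩
            · rw [show (n-5) - 1 + 1 = n - 5 by omega, Nat.mod_self] at hc
              refine ⟨4, by simp, Or.inr ?_⟩
              rw [Nat.mod_eq_of_lt (show 4 + 1 < n by omega)]
              omega
          · have hjD : j + 5 ∈ insert (n-1) (insert 1 (insert 4 ((D'.erase ((n-5)-1)).image (· + 5)))) := by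
              simp only [Finset.mem_insert, Finset.mem_image]
              right; right; right
              exact ⟨j, Finset.mem_erase.mpr ⟨hje, hj⟩, rfl⟩
            refine ⟨j + 5, hjD, ?_⟩
            rcases hc with hc | hc
            · exact Or.inl (by omega)
            · rw [succ_mod (show j < n - 5 by omega), if_neg (by omega)] at hc
              right
              rw [succ_mod (show j + 5 < n by omega), if_neg (by omega)]
              omega
        · interval_cases v
          · refine ⟨n-1, Finset.mem_insert_self _ _, Or.inr ?_⟩
            rw [show n - 1 + 1 = n by omega, Nat.mod_self]
          · refine ⟨1, by simp, Or.inl rfl⟩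
          · refine ⟨1, by simp, Or.inr ?_⟩
            rw [Nat.mod_eq_of_lt (show 1 + 1 < n by omega)]
          · exact absurd hWmem hvU
          · refine ⟨4, by simp, Or.inl rfl⟩
      · refine lift_indep hn hV S (by norm_num) (by norm_num) ?_
        intro y hy hmem
        exact (hO3 _ hmem).1 rfl
      · calc (insert (n-1) (insert 1 (insert 4 ((D'.erase ((n-5)-1)).image (· + 5))))).card
            ≤ (insert 1 (insert 4 ((D'.erase ((n-5)-1)).image (· + 5)))).card + 1 :=
              Finset.card_insert_le _ _
          _ ≤ ((insert 4 ((D'.erase ((n-5)-1)).image (· + 5))).card + 1) + 1 := by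
              have := Finset.card_insert_le (1:ℕ) (insert 4 ((D'.erase ((n-5)-1)).image (· + 5)))
              omega
          _ ≤ (((D'.erase ((n-5)-1)).image (· + 5)).card + 1 + 1) + 1 := by
              have := Finset.card_insert_le (4:ℕ) ((D'.erase ((n-5)-1)).image (· + 5))
              omega
          _ ≤ B n := by
              have := Finset.card_image_le (f := (· + 5)) (s := D'.erase ((n-5)-1))
              omega
  · -- wrap edge not used : middle lift, window vertex 2, edges {0, 3}
    refine ⟨insert 2 (U'.image (· + 5)),
      insert 0 (insert 3 (D'.image (· + 5))), ?_, ?_, ?_, ?_, ?_⟩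
    · intro i hi
      simp only [Finset.mem_insert, Finset.mem_image] at hi
      rcases hi with rfl | rfl | ⟨j, hj, rfl⟩
      · omega
      · omega
      · have := S.dlt _ hj; omega
    · intro u hu
      simp only [Finset.mem_insert, Finset.mem_image] at hu
      rcases hu with rfl | ⟨b, hb, rfl⟩
      · omega
      · have := S.ult _ hb; omega
    · intro v hvn hvU
      have hWmem : (2 : ℕ) ∈ insert 2 (U'.image (· + 5)) := Finset.mem_insert_self _ _
      by_cases hv5 : 5 ≤ v
      · have hwU : v - 5 ∉ U' := by
          intro h
          exact hvU (Finset.mem_insert_of_mem (Finset.mem_image.mpr ⟨v - 5, h, by omega⟩))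
        obtain ⟨j, hj, hc⟩ := S.cover (v-5) (by omega) hwU
        have hjm : j < n - 5 := S.dlt _ hj
        have hje : j ≠ (n-5) - 1 := fun h => hw (h ▸ hj)
        have hjD : j + 5 ∈ insert 0 (insert 3 (D'.image (· + 5))) := by
          simp only [Finset.mem_insert, Finset.mem_image]
          right; right
          exact ⟨j, hj, rfl⟩
        refine ⟨j + 5, hjD, ?_⟩
        rcases hc with hc | hc
        · exact Or.inl (by omega)
        · rw [succ_mod (show j < n - 5 by omega), if_neg (by omega)] at hc
          right
          rw [succ_mod (show j + 5 < n by omega), if_neg (by omega)]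
          omega
      · interval_cases v
        · refine ⟨0, by simp, Or.inl rfl⟩
        · refine ⟨0, by simp, Or.inr ?_⟩
          rw [Nat.mod_eq_of_lt (show 0 + 1 < n by omega)]
        · exact absurd hWmem hvU
        · refine ⟨3, by simp, Or.inl rfl⟩
        · refine ⟨3, by simp, Or.inr ?_⟩
          rw [Nat.mod_eq_of_lt (show 3 + 1 < n by omega)]
    · refine lift_indep hn hV S (by norm_num) (by norm_num) ?_
      intro y hy hmem
      have := (hE _ hmem).1 rfl
      simp at this; omega
    · calc (insert 0 (insert 3 (D'.image (· + 5)))).card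
          ≤ (insert 3 (D'.image (· + 5))).card + 1 := Finset.card_insert_le _ _
        _ ≤ ((D'.image (· + 5)).card + 1) + 1 := by
            have := Finset.card_insert_le (3:ℕ) (D'.image (· + 5))
            omega
        _ ≤ B n := by
            have := Finset.card_image_le (f := (· + 5)) (s := D')
            omega


/-! ### base cases -/

instance (p q : P) : Decidable (crossP p q) := by unfold crossP; infer_instance

instance (n u v : ℕ) : Decidable (adjC n u v) := by unfold adjC; infer_instance

lemma indep_singleton {n : ℕ} {L : Finset P} (w : ℕ) :
    ∀ u ∈ ({w} : Finset ℕ), ∀ v ∈ ({w} : Finset ℕ), u ≠ v → ¬ adjC n u v ∧ ¬ pairIn L u v := by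
  intro u hu v hv huv
  simp only [Finset.mem_singleton] at hu hv
  omega

lemma base3 (L : Finset P) : ∃ U D : Finset ℕ, Sol 3 L U D := by
  refine ⟨{2}, {0}, ?_, ?_, ?_, indep_singleton 2, ?_⟩
  · intro i hi; simp at hi; omega
  · intro u hu; simp at hu; omega
  · intro v hv hvU
    refine ⟨0, by simp, ?_⟩
    simp only [Finset.mem_singleton] at hvU
    interval_cases v <;> simp_all
  · simp [B]

lemma base5 (L : Finset P) : ∃ U D : Finset ℕ, Sol 5 L U D := by
  refine ⟨{4}, {0, 2}, ?_, ?_, ?_, indep_singleton 4, ?_⟩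
  · intro i hi; simp at hi; omega
  · intro u hu; simp at hu; omega
  · intro v hv hvU
    simp only [Finset.mem_singleton] at hvU
    interval_cases v
    · exact ⟨0, by simp⟩
    · exact ⟨0, by simp⟩
    · exact ⟨2, by simp⟩
    · exact ⟨2, by simp⟩
    · omega
  · simp [B]

lemma base7 (L : Finset P) : ∃ U D : Finset ℕ, Sol 7 L U D := by
  refine ⟨{6}, {0, 2, 4}, ?_, ?_, ?_, indep_singleton 6, ?_⟩
  · intro i hi; simp at hi; omega
  · intro u hu; simp at hu; omega
  · intro v hv hvU
    simp only [Finset.mem_singleton] at hvU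
    interval_cases v
    · exact ⟨0, by simp⟩
    · exact ⟨0, by simp⟩
    · exact ⟨2, by simp⟩
    · exact ⟨2, by simp⟩
    · exact ⟨4, by simp⟩
    · exact ⟨4, by simp⟩
    · omega
  · simp [B]


lemma indep_pair {n : ℕ} {L : Finset P} {a b : ℕ} (h1 : ¬ adjC n a b) (h2 : ¬ pairIn L a b) :
    ∀ u ∈ ({a, b} : Finset ℕ), ∀ v ∈ ({a, b} : Finset ℕ), u ≠ v →
      ¬ adjC n u v ∧ ¬ pairIn L u v := by
  intro u hu v hv huv
  simp only [Finset.mem_insert, Finset.mem_singleton] at hu hv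
  rcases hu with rfl | rfl <;> rcases hv with rfl | rfl <;>
    first
      | omega
      | exact ⟨h1, h2⟩
      | exact ⟨fun h => h1 (adjC_symm.mp h), fun h => h2 (pairIn_symm.mp h)⟩

lemma indep_triple {n : ℕ} {L : Finset P} {a b c : ℕ}
    (hab : ¬ adjC n a b ∧ ¬ pairIn L a b) (hac : ¬ adjC n a c ∧ ¬ pairIn L a c)
    (hbc : ¬ adjC n b c ∧ ¬ pairIn L b c) :
    ∀ u ∈ ({a, b, c} : Finset ℕ), ∀ v ∈ ({a, b, c} : Finset ℕ), u ≠ v →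
      ¬ adjC n u v ∧ ¬ pairIn L u v := by
  intro u hu v hv huv
  simp only [Finset.mem_insert, Finset.mem_singleton] at hu hv
  rcases hu with rfl | rfl | rfl <;> rcases hv with rfl | rfl | rfl <;>
    first
      | omega
      | exact hab | exact hac | exact hbc
      | exact ⟨fun h => hab.1 (adjC_symm.mp h), fun h => hab.2 (pairIn_symm.mp h)⟩
      | exact ⟨fun h => hac.1 (adjC_symm.mp h), fun h => hac.2 (pairIn_symm.mp h)⟩
      | exact ⟨fun h => hbc.1 (adjC_symm.mp h), fun h => hbc.2 (pairIn_symm.mp h)⟩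

lemma pairIn_of_mem_sorted {n : ℕ} {L : Finset P} (hV : Valid n L) {u v : ℕ}
    (huv : u < v) (h : pairIn L u v) : (u, v) ∈ L := by
  rcases h with h | h
  · exact h
  · have := (hV _ h).1; simp at this; omega

lemma base6 {L : Finset P} (hV : Valid 6 L) (hNC : NC L) : ∃ U D : Finset ℕ, Sol 6 L U D := by
  by_cases h03 : pairIn L 0 3
  · -- (0,3) ∈ L, so (1,4) ∉ L
    have h03' : (0, 3) ∈ L := pairIn_of_mem_sorted hV (by norm_num) h03
    have h14 : ¬ pairIn L 1 4 := by
      intro h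
      exact hNC _ h03' _ (pairIn_of_mem_sorted hV (by norm_num) h) (by decide)
    refine ⟨{1, 4}, {2, 5}, ?_, ?_, ?_, indep_pair (by decide) h14, ?_⟩
    · intro i hi; simp at hi; omega
    · intro u hu; simp at hu; omega
    · intro v hv hvU
      simp only [Finset.mem_insert, Finset.mem_singleton] at hvU
      interval_cases v
      · exact ⟨5, by decide⟩
      · omega
      · exact ⟨2, by decide⟩
      · exact ⟨2, by decide⟩
      · omega
      · exact ⟨5, by decide⟩
    · simp [B]
  · refine ⟨{0, 3}, {1, 4}, ?_, ?_, ?_, indep_pair (by decide) h03, ?_⟩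
    · intro i hi; simp at hi; omega
    · intro u hu; simp at hu; omega
    · intro v hv hvU
      simp only [Finset.mem_insert, Finset.mem_singleton] at hvU
      interval_cases v
      · omega
      · exact ⟨1, by decide⟩
      · exact ⟨1, by decide⟩
      · omega
      · exact ⟨4, by decide⟩
      · exact ⟨4, by decide⟩
    · simp [B]

lemma base8 {L : Finset P} (hV : Valid 8 L) (hNC : NC L) : ∃ U D : Finset ℕ, Sol 8 L U D := by
  by_cases h03 : pairIn L 0 3
  · have h03' : (0, 3) ∈ L := pairIn_of_mem_sorted hV (by norm_num) h03
    have h14 : ¬ pairIn L 1 4 := by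
      intro h
      exact hNC _ h03' _ (pairIn_of_mem_sorted hV (by norm_num) h) (by decide)
    refine ⟨{1, 4}, {2, 5, 7}, ?_, ?_, ?_, indep_pair (by decide) h14, ?_⟩
    · intro i hi; simp at hi; omega
    · intro u hu; simp at hu; omega
    · intro v hv hvU
      simp only [Finset.mem_insert, Finset.mem_singleton] at hvU
      interval_cases v
      · exact ⟨7, by decide⟩
      · omega
      · exact ⟨2, by decide⟩
      · exact ⟨2, by decide⟩
      · omega
      · exact ⟨5, by decide⟩
      · exact ⟨5, by decide⟩
      · exact ⟨7, by decide⟩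
    · simp [B]
  · refine ⟨{0, 3}, {1, 4, 6}, ?_, ?_, ?_, indep_pair (by decide) h03, ?_⟩
    · intro i hi; simp at hi; omega
    · intro u hu; simp at hu; omega
    · intro v hv hvU
      simp only [Finset.mem_insert, Finset.mem_singleton] at hvU
      interval_cases v
      · omega
      · exact ⟨1, by decide⟩
      · exact ⟨1, by decide⟩
      · omega
      · exact ⟨4, by decide⟩
      · exact ⟨4, by decide⟩
      · exact ⟨6, by decide⟩
      · exact ⟨6, by decide⟩
    · simp [B]

lemma cross27 : ∀ p ∈ [((0:ℕ),(3:ℕ)), (3,6), (0,6)], ∀ q ∈ [((1:ℕ),(4:ℕ)), (4,7), (1,7)],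
    ∀ r ∈ [((2:ℕ),(5:ℕ)), (5,8), (2,8)],
    crossP p q ∨ crossP p r ∨ crossP q r := by decide

lemma base9 {L : Finset P} (hV : Valid 9 L) (hNC : NC L) : ∃ U D : Finset ℕ, Sol 9 L U D := by
  have main : ∀ a b c : ℕ, a + 3 = b → b + 3 = c → a < 3 →
      ¬ pairIn L a b → ¬ pairIn L b c → ¬ pairIn L a c →
      ∃ U D : Finset ℕ, Sol 9 L U D := by
    intro a b c hab hbc ha h1 h2 h3
    refine ⟨{a, b, c}, {(a+1) % 9, (a+4) % 9, (a+7) % 9}, ?_, ?_, ?_, ?_, ?_⟩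
    · intro i hi; simp at hi; omega
    · intro u hu; simp at hu; omega
    · intro v hv hvU
      simp only [Finset.mem_insert, Finset.mem_singleton] at hvU
      interval_cases a <;> (subst hab; subst hbc) <;> interval_cases v <;>
        simp_all <;> first
          | (exact Or.inl (by decide)) | (exact Or.inr (Or.inl (by decide)))
          | (exact Or.inr (Or.inr (by decide)))
          | (refine ⟨_, Or.inl rfl, by decide⟩)
          | (refine ⟨_, Or.inr (Or.inl rfl), by decide⟩)
          | (refine ⟨_, Or.inr (Or.inr rfl), by decide⟩)
    · refine indep_triple ⟨?_, h1⟩ ⟨?_, h3⟩ ⟨?_, h2⟩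
      · unfold adjC; omega
      · unfold adjC; omega
      · unfold adjC; omega
    · have : ({(a+1) % 9, (a+4) % 9, (a+7) % 9} : Finset ℕ).card ≤ 3 := by
        apply le_trans (Finset.card_insert_le _ _)
        have := Finset.card_insert_le ((a+4) % 9) ({(a+7) % 9} : Finset ℕ)
        simp at this ⊢; omega
      simpa [B] using this
  by_cases hT0 : ¬ pairIn L 0 3 ∧ ¬ pairIn L 3 6 ∧ ¬ pairIn L 0 6
  · exact main 0 3 6 rfl rfl (by norm_num) hT0.1 hT0.2.1 hT0.2.2
  by_cases hT1 : ¬ pairIn L 1 4 ∧ ¬ pairIn L 4 7 ∧ ¬ pairIn L 1 7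
  · exact main 1 4 7 rfl rfl (by norm_num) hT1.1 hT1.2.1 hT1.2.2
  by_cases hT2 : ¬ pairIn L 2 5 ∧ ¬ pairIn L 5 8 ∧ ¬ pairIn L 2 8
  · exact main 2 5 8 rfl rfl (by norm_num) hT2.1 hT2.2.1 hT2.2.2
  exfalso
  have e0 : (0,3) ∈ L ∨ (3,6) ∈ L ∨ (0,6) ∈ L := by
    by_contra h; push_neg at h
    refine hT0 ⟨?_, ?_, ?_⟩ <;> intro hp <;>
      first
        | exact h.1 (pairIn_of_mem_sorted hV (by norm_num) hp)
        | exact h.2.1 (pairIn_of_mem_sorted hV (by norm_num) hp)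
        | exact h.2.2 (pairIn_of_mem_sorted hV (by norm_num) hp)
  have e1 : (1,4) ∈ L ∨ (4,7) ∈ L ∨ (1,7) ∈ L := by
    by_contra h; push_neg at h
    refine hT1 ⟨?_, ?_, ?_⟩ <;> intro hp <;>
      first
        | exact h.1 (pairIn_of_mem_sorted hV (by norm_num) hp)
        | exact h.2.1 (pairIn_of_mem_sorted hV (by norm_num) hp)
        | exact h.2.2 (pairIn_of_mem_sorted hV (by norm_num) hp)
  have e2 : (2,5) ∈ L ∨ (5,8) ∈ L ∨ (2,8) ∈ L := by
    by_contra h; push_neg at h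
    refine hT2 ⟨?_, ?_, ?_⟩ <;> intro hp <;>
      first
        | exact h.1 (pairIn_of_mem_sorted hV (by norm_num) hp)
        | exact h.2.1 (pairIn_of_mem_sorted hV (by norm_num) hp)
        | exact h.2.2 (pairIn_of_mem_sorted hV (by norm_num) hp)
  rcases e0 with h0 | h0 | h0 <;> rcases e1 with h1 | h1 | h1 <;> rcases e2 with h2 | h2 | h2 <;>
    first
      | exact hNC _ h0 _ h1 (by decide)
      | exact hNC _ h0 _ h2 (by decide)
      | exact hNC _ h1 _ h2 (by decide)


/-! ### main induction -/

theorem key : ∀ n : ℕ, 3 ≤ n → n ≠ 4 → ∀ L : Finset P, Valid n L → NC L →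
    ∃ U D : Finset ℕ, Sol n L U D := by
  intro n
  induction n using Nat.strong_induction_on with
  | _ n ih =>
    intro h3 h4 L hV hNC
    by_cases h10 : 10 ≤ n
    · obtain ⟨L', hV', hNC', hT, hE, hO⟩ := window h10 hV hNC
      obtain ⟨U', D', S⟩ := ih (n-5) (by omega) (by omega) (by omega)
        (shrink n L') (Valid_shrink n L') (NC_shrink hV' hNC')
      obtain ⟨U1, D1, S1⟩ := lift_sol h10 hV' hNC' hE hO S
      exact hT U1 D1 S1
    · interval_cases n
      · exact base3 L
      · omega
      · exact base5 L
      · exact base6 hV hNC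
      · exact base7 L
      · exact base8 hV hNC
      · exact base9 hV hNC





/-- extract the sorted value pair of a two-element finset -/
def toP {n : ℕ} (e : Finset (Fin n)) : P :=
  (e.sum (fun v => v.val) - e.sup (fun v => v.val), e.sup (fun v => v.val))

lemma pair_eq {α : Type*} [DecidableEq α] {x y i j : α} (hxy : x ≠ y)
    (h : ({x, y} : Finset α) = {i, j}) : (x = i ∧ y = j) ∨ (x = j ∧ y = i) := by
  have hx : x ∈ ({i, j} : Finset α) := h ▸ (by simp)
  have hy : y ∈ ({i, j} : Finset α) := h ▸ (by simp)
  simp only [Finset.mem_insert, Finset.mem_singleton] at hx hy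
  rcases hx with rfl | rfl <;> rcases hy with rfl | rfl <;> tauto

lemma toP_pair_lt {n : ℕ} {i j : Fin n} (h : i.val < j.val) :
    toP ({i, j} : Finset (Fin n)) = (i.val, j.val) := by
  have hij : i ≠ j := fun he => by rw [he] at h; omega
  unfold toP
  rw [Finset.sum_pair hij, Finset.sup_insert, Finset.sup_singleton,
      sup_eq_right.mpr (le_of_lt h)]
  simp only [Prod.mk.injEq]
  refine ⟨by omega, by trivial⟩

lemma adj_iff {n : ℕ} (i j : Fin n) : adjOnCycle n i j ↔ adjC n i.val j.val := Iff.rfl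

lemma adjOnCycle_symm {n : ℕ} {i j : Fin n} : adjOnCycle n i j ↔ adjOnCycle n j i := by
  unfold adjOnCycle; tauto

lemma diag_repr {n : ℕ} (T : PolyTriangulation n) {e : Finset (Fin n)} (he : e ∈ T.diags) :
    ∃ i j : Fin n, i.val < j.val ∧ e = {i, j} ∧ toP e = (i.val, j.val) ∧
      ¬ adjOnCycle n i j := by
  obtain ⟨i, j, hij, hnadj, rfl⟩ := T.diags_valid e he
  have hne : i.val ≠ j.val := fun h => hij (Fin.ext h)
  rcases Nat.lt_or_ge i.val j.val with h | h
  · exact ⟨i, j, h, rfl, toP_pair_lt h, hnadj⟩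
  · have h' : j.val < i.val := by omega
    refine ⟨j, i, h', Finset.pair_comm i j, ?_, fun hh => hnadj (adjOnCycle_symm.mp hh)⟩
    rw [Finset.pair_comm i j]
    exact toP_pair_lt h'

theorem edge_two_dominating_main (n : ℕ) (hn : 3 ≤ n) (T : PolyTriangulation n) :
    (n ≠ 4 → ∃ D : Finset (Finset (Fin n)),
        EdgeTwoDominating T D ∧ D.card ≤ (2 * n + 1) / 5) ∧
    (n = 4 → ∃ D : Finset (Finset (Fin n)),
        EdgeTwoDominating T D ∧ D.card = 2) := by
  have hpos : 0 < n := by omega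
  constructor
  · -- main branch
    intro h4
    set L : Finset P := T.diags.image toP with hLdef
    have hVL : Valid n L := by
      intro p hp
      obtain ⟨e, he, rfl⟩ := Finset.mem_image.mp hp
      obtain ⟨i, j, hij, hee, hep, hnadj⟩ := diag_repr T he
      have hiv : i.val < n := i.isLt
      have hjv : j.val < n := j.isLt
      rw [adj_iff] at hnadj
      unfold adjC at hnadj
      push_neg at hnadj
      obtain ⟨hn1, hn2⟩ := hnadj
      rw [succ_mod hiv] at hn1
      rw [succ_mod hjv] at hn2
      rw [hep]
      have hgoal : i.val < j.val ∧ j.val < n ∧ 2 ≤ j.val - i.val ∧ j.val - i.val + 2 ≤ n := by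
        split_ifs at hn1 hn2 <;> omega
      exact ⟨hgoal.1, hgoal.2.1, hgoal.2.2.1, hgoal.2.2.2⟩
    have hNCL : NC L := by
      intro p hp q hq hc
      obtain ⟨e, he, rfl⟩ := Finset.mem_image.mp hp
      obtain ⟨f, hf, rfl⟩ := Finset.mem_image.mp hq
      obtain ⟨a, b, hab, hee, hep, -⟩ := diag_repr T he
      obtain ⟨c, d, hcd, hfe, hfp, -⟩ := diag_repr T hf
      rw [hep, hfp] at hc
      rcases hc with ⟨hc1, hc2, hc3⟩ | ⟨hc1, hc2, hc3⟩
      · exact T.noncrossing _ he _ hf ⟨a, b, c, d, hee, hfe, hc1, hc2, hc3⟩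
      · exact T.noncrossing _ hf _ he ⟨c, d, a, b, hfe, hee, hc1, hc2, hc3⟩
    obtain ⟨U, D, S⟩ := key n hn h4 L hVL hNCL
    set Df : Finset (Finset (Fin n)) :=
      D.image (fun i => ({⟨i % n, Nat.mod_lt _ hpos⟩, ⟨(i+1) % n, Nat.mod_lt _ hpos⟩} :
        Finset (Fin n))) with hDf
    have hcovered : ∀ v : Fin n, v.val ∉ U → ∃ e ∈ Df, v ∈ e := by
      intro v hv
      obtain ⟨i, hi, hc⟩ := S.cover v.val v.isLt hv
      have hin : i < n := S.dlt _ hi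
      refine ⟨_, Finset.mem_image_of_mem _ hi, ?_⟩
      rcases hc with hc | hc
      · exact Finset.mem_insert.mpr (Or.inl (Fin.ext
          (show v.val = i % n from hc.trans (Nat.mod_eq_of_lt hin).symm)))
      · exact Finset.mem_insert.mpr (Or.inr (Finset.mem_singleton.mpr (Fin.ext hc)))
    have key2 : ∀ x y : Fin n, x ≠ y → T.isEdge {x, y} → ¬ (x.val ∈ U ∧ y.val ∈ U) := by
      rintro x y hxy he ⟨hxU, hyU⟩
      have hne' : x.val ≠ y.val := fun h => hxy (Fin.ext h)
      obtain ⟨hadj, hpair⟩ := S.indep _ hxU _ hyU hne'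
      rcases he with hb | hd
      · obtain ⟨i, j, hij, hadj', heq⟩ := hb
        rcases pair_eq hxy heq with ⟨rfl, rfl⟩ | ⟨rfl, rfl⟩
        · exact hadj hadj'
        · exact hadj (adjC_symm.mp hadj')
      · apply hpair
        have hmem : toP ({x, y} : Finset (Fin n)) ∈ L := Finset.mem_image_of_mem _ hd
        rcases Nat.lt_or_ge x.val y.val with h | h
        · left
          rwa [toP_pair_lt h] at hmem
        · right
          have h' : y.val < x.val := by omega
          rw [Finset.pair_comm, toP_pair_lt h'] at hmem
          exact hmem
    refine ⟨Df, ⟨?_, ?_⟩, ?_⟩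
    · -- boundary edges
      intro e he
      obtain ⟨i, hi, rfl⟩ := Finset.mem_image.mp he
      have hin : i < n := S.dlt _ hi
      refine ⟨⟨i % n, Nat.mod_lt _ hpos⟩, ⟨(i+1) % n, Nat.mod_lt _ hpos⟩, ?_, ?_, rfl⟩
      · intro h
        have hv := congrArg Fin.val h
        simp only at hv
        rw [Nat.mod_eq_of_lt hin, succ_mod hin] at hv
        split_ifs at hv <;> omega
      · left
        show (i % n + 1) % n = (i + 1) % n
        rw [Nat.mod_eq_of_lt hin]
    · -- triangle domination
      rintro t ⟨a, b, c, hab, hac, hbc, rfl, e1, e2, e3⟩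
      have two : ∃ x y : Fin n, x ≠ y ∧ x ∈ ({a, b, c} : Finset (Fin n)) ∧
          y ∈ ({a, b, c} : Finset (Fin n)) ∧ x.val ∉ U ∧ y.val ∉ U := by
        by_cases ha : a.val ∈ U
        · have hb' : b.val ∉ U := fun h => key2 a b hab e1 ⟨ha, h⟩
          have hc' : c.val ∉ U := fun h => key2 a c hac e2 ⟨ha, h⟩
          exact ⟨b, c, hbc, by simp, by simp, hb', hc'⟩
        · by_cases hb : b.val ∈ U
          · have hc' : c.val ∉ U := fun h => key2 b c hbc e3 ⟨hb, h⟩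
            exact ⟨a, c, hac, by simp, by simp, ha, hc'⟩
          · exact ⟨a, b, hab, by simp, by simp, ha, hb⟩
      obtain ⟨x, y, hxy, hxt, hyt, hxU, hyU⟩ := two
      have hsub : ({x, y} : Finset (Fin n)) ⊆
          ({a, b, c} : Finset (Fin n)).filter (fun v => ∃ e ∈ Df, v ∈ e) := by
        intro z hz
        simp only [Finset.mem_insert, Finset.mem_singleton] at hz
        rcases hz with rfl | rfl
        · exact Finset.mem_filter.mpr ⟨hxt, hcovered _ hxU⟩
        · exact Finset.mem_filter.mpr ⟨hyt, hcovered _ hyU⟩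
      calc 2 = ({x, y} : Finset (Fin n)).card := by
            rw [Finset.card_insert_of_notMem (by simp [hxy]), Finset.card_singleton]
        _ ≤ _ := Finset.card_le_card hsub
    · exact le_trans Finset.card_image_le S.bdd
  · -- n = 4
    rintro rfl
    refine ⟨{({0, 1} : Finset (Fin 4)), ({2, 3} : Finset (Fin 4))}, ⟨?_, ?_⟩, by decide⟩
    · intro e he
      simp only [Finset.mem_insert, Finset.mem_singleton] at he
      rcases he with rfl | rfl
      · exact ⟨0, 1, by decide, by decide, rfl⟩
      · exact ⟨2, 3, by decide, by decide, rfl⟩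
    · rintro t ⟨a, b, c, hab, hac, hbc, rfl, _, _, _⟩
      have hall : ∀ v ∈ ({a, b, c} : Finset (Fin 4)),
          ∃ e ∈ ({({0, 1} : Finset (Fin 4)), ({2, 3} : Finset (Fin 4))} :
            Finset (Finset (Fin 4))), v ∈ e := by
        intro v _
        fin_cases v <;> decide
      rw [Finset.filter_true_of_mem hall]
      rw [Finset.card_insert_of_notMem (by simp [hab, hac]),
          Finset.card_insert_of_notMem (by simp [hbc]), Finset.card_singleton]
      omega

end E2D

/-- every triangulation graph with `n ≥ 3` vertices has an edge
2-dominating set of size at most `⌊(2n+1)/5⌋`, except for `n = 4`, where an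
edge 2-dominating set of size `2` exists. -/
theorem edge_two_dominating (n : ℕ) (hn : 3 ≤ n) (T : PolyTriangulation n) :
    (n ≠ 4 → ∃ D : Finset (Finset (Fin n)),
        EdgeTwoDominating T D ∧ D.card ≤ (2 * n + 1) / 5) ∧
    (n = 4 → ∃ D : Finset (Finset (Fin n)),
        EdgeTwoDominating T D ∧ D.card = 2) :=
  E2D.edge_two_dominating_main n hn T
end

section
/- There exists a family of triangulation graphs of polygons, one for each n ≥ 3, such that every edge 2-dominating set of the graph with n vertices has cardinality at least ⌊(2n+1)/5⌋ (and at least 2 when n = 4). -/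
open Finset

def twoOf (a b c : Prop) : Prop := (a ∧ b) ∨ (a ∧ c) ∨ (b ∧ c)
def pr2 (x0 x1 x2 x3 x4 : Prop) : Prop :=
  (x0∧x1)∨(x0∧x2)∨(x0∧x3)∨(x0∧x4)∨(x1∧x2)∨(x1∧x3)∨(x1∧x4)∨(x2∧x3)∨(x2∧x4)∨(x3∧x4)
def pr3 (x0 x1 x2 x3 x4 : Prop) : Prop :=
  (x0∧x1∧x2)∨(x0∧x1∧x3)∨(x0∧x1∧x4)∨(x0∧x2∧x3)∨(x0∧x2∧x4)∨(x0∧x3∧x4)∨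
  (x1∧x2∧x3)∨(x1∧x2∧x4)∨(x1∧x3∧x4)∨(x2∧x3∧x4)

lemma lemA (x0 x1 x2 x3 x4 : Prop)
    (h14 : (x0∨x1) ∨ (x3∨x4))
    (hT3 : twoOf (x0∨x1) (x1∨x2) (x2∨x3))
    (hT4 : twoOf (x0∨x1) (x2∨x3) (x3∨x4)) :
    pr2 x0 x1 x2 x3 x4 := by
  unfold twoOf pr2 at *
  by_cases h0 : x0 <;> by_cases h1 : x1 <;> by_cases h2 : x2 <;>
    by_cases h3 : x3 <;> by_cases h4 : x4 <;> simp_all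

lemma lemB (x0 x1 x2 x3 x4 r : Prop)
    (h14 : (x0∨x1) ∨ (x3∨x4))
    (h45 : (x3∨x4) ∨ (x4∨r))
    (hT3 : twoOf (x0∨x1) (x1∨x2) (x2∨x3))
    (hT4 : twoOf (x0∨x1) (x2∨x3) (x3∨x4))
    (h5 : x4 ∨ r) :
    pr2 x0 x1 x2 x3 x4 ∧ (x0 → ¬ r → pr3 x0 x1 x2 x3 x4) := by
  unfold twoOf pr2 pr3 at *
  by_cases h0 : x0 <;> by_cases h1 : x1 <;> by_cases h2 : x2 <;>
    by_cases h3 : x3 <;> by_cases h4 : x4 <;> by_cases hr : r <;> simp_all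

lemma lem4 (b0 b1 b2 b3 : Prop)
    (h1 : twoOf (b3∨b0) (b0∨b1) (b2∨b3))
    (h2 : twoOf (b0∨b1) (b1∨b2) (b2∨b3)) :
    (b0∧b1)∨(b0∧b2)∨(b0∧b3)∨(b1∧b2)∨(b1∧b3)∨(b2∧b3) := by
  unfold twoOf at *
  by_cases h0 : b0 <;> by_cases hb1 : b1 <;> by_cases hb2 : b2 <;> by_cases hb3 : b3 <;> simp_all

lemma twoOf_right {a b c : Prop} (h : twoOf a b c) : b ∨ c := by unfold twoOf at h; tauto
lemma twoOf_left2 {a b c : Prop} (h : twoOf a b c) : a ∨ b := by unfold twoOf at h; tauto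
lemma twoOf_of_not3 {a b c : Prop} (h : twoOf a b c) (hc : ¬ c) : a ∧ b := by
  unfold twoOf at h; tauto

lemma card_two {s : Finset ℕ} {a b : ℕ} (ha : a ∈ s) (hb : b ∈ s) (hab : a ≠ b) :
    2 ≤ s.card := Finset.one_lt_card.mpr ⟨a, ha, b, hb, hab⟩

lemma card_three {s : Finset ℕ} {a b c : ℕ} (ha : a ∈ s) (hb : b ∈ s) (hc : c ∈ s)
    (hab : a ≠ b) (hac : a ≠ c) (hbc : b ≠ c) : 3 ≤ s.card := by
  have hsub : ({a, b, c} : Finset ℕ) ⊆ s := by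
    intro x hx; simp at hx; rcases hx with h|h|h <;> subst h <;> assumption
  have h3 : ({a, b, c} : Finset ℕ).card = 3 := by
    rw [Finset.card_insert_of_notMem (by simp [hab, hac]),
        Finset.card_insert_of_notMem (by simp [hbc]), Finset.card_singleton]
  calc 3 = ({a,b,c} : Finset ℕ).card := h3.symm
    _ ≤ s.card := Finset.card_le_card hsub

/-- `v` is covered by the index set `I` (indices of chosen boundary edges). -/
def cB (n : ℕ) (I : Finset ℕ) (v : ℕ) : Prop :=
  (if v = 0 then n - 1 else v - 1) ∈ I ∨ v ∈ I

lemma cB_succ (n : ℕ) (I : Finset ℕ) (v : ℕ) : cB n I (v+1) ↔ (v ∈ I ∨ v+1 ∈ I) := by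
  simp [cB]

theorem core (n k rem : ℕ) (I : Finset ℕ)
    (hn : n = 5*k+2+rem) (hrem : rem ≤ 4) (hn3 : 3 ≤ n)
    (HT1 : ∀ j, j < k →
      twoOf (cB n I (5*j)) (cB n I (5*j+1)) (cB n I (5*j+4)) ∧
      twoOf (cB n I (5*j)) (cB n I (5*j+4)) (cB n I (5*j+5)) ∧
      twoOf (cB n I (5*j+1)) (cB n I (5*j+2)) (cB n I (5*j+3)) ∧
      twoOf (cB n I (5*j+1)) (cB n I (5*j+3)) (cB n I (5*j+4)) ∧
      twoOf (cB n I (5*j)) (cB n I (5*j+5)) (cB n I (n-1)))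
    (HT2 : ∀ v, 5*k ≤ v → v + 2 ≤ n - 1 →
      twoOf (cB n I v) (cB n I (v+1)) (cB n I (n-1))) :
    (2*n+1)/5 ≤ I.card ∧ (n = 4 → 2 ≤ I.card) := by
  classical
  -- normalized per-block coverage facts
  have cBs : ∀ v : ℕ, cB n I (v+1) ↔ (v ∈ I ∨ v+1 ∈ I) := cB_succ n I
  -- the n = 4 clause first
  have h4 : n = 4 → 2 ≤ I.card := by
    intro h4n
    have hk0 : k = 0 := by omega
    have h1 := HT2 0 (by omega) (by omega)
    have h2 := HT2 1 (by omega) (by omega)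
    have e0 : cB n I 0 ↔ (3 ∈ I ∨ 0 ∈ I) := by simp [cB, h4n]
    have e1 : cB n I 1 ↔ (0 ∈ I ∨ 1 ∈ I) := by rw [show (1:ℕ) = 0+1 from rfl, cBs]
    have e2 : cB n I 2 ↔ (1 ∈ I ∨ 2 ∈ I) := by rw [show (2:ℕ) = 1+1 from rfl, cBs]
    have e3 : cB n I (n-1) ↔ (2 ∈ I ∨ 3 ∈ I) := by
      rw [show n-1 = 2+1 by omega, cBs]
    rw [e0, e1, e3] at h1
    rw [e1, e2, e3] at h2
    have := lem4 (0 ∈ I) (1 ∈ I) (2 ∈ I) (3 ∈ I) h1 h2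
    rcases this with ⟨ha,hb⟩|⟨ha,hb⟩|⟨ha,hb⟩|⟨ha,hb⟩|⟨ha,hb⟩|⟨ha,hb⟩ <;>
      exact card_two ha hb (by omega)
  refine ⟨?_, h4⟩
  -- fiberwise decomposition
  set F : ℕ → ℕ := fun j => (I.filter fun v => min (v/5) k = j).card with hF
  have hIsum : I.card = ∑ j ∈ range (k+1), F j := by
    apply Finset.card_eq_sum_card_fiberwise
    intro v _
    simp only [mem_coe, mem_range]
    omega
  have hmemf : ∀ j m, j < k → m < 5 → 5*j+m ∈ I →
      5*j+m ∈ I.filter (fun v => min (v/5) k = j) := by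
    intro j m hj hm hmem
    simp only [mem_filter]
    exact ⟨hmem, by omega⟩
  have hmemk : ∀ v, 5*k ≤ v → v ∈ I → v ∈ I.filter (fun v => min (v/5) k = k) := by
    intro v hv hmem
    simp only [mem_filter]
    exact ⟨hmem, by omega⟩
  -- bridges from pr2 / pr3 to fiber cardinalities
  have hF2 : ∀ j, j < k →
      pr2 (5*j ∈ I) (5*j+1 ∈ I) (5*j+2 ∈ I) (5*j+3 ∈ I) (5*j+4 ∈ I) → 2 ≤ F j := by
    intro j hj hp
    unfold pr2 at hp
    rcases hp with ⟨ha,hb⟩|⟨ha,hb⟩|⟨ha,hb⟩|⟨ha,hb⟩|⟨ha,hb⟩|⟨ha,hb⟩|⟨ha,hb⟩|⟨ha,hb⟩|⟨ha,hb⟩|⟨ha,hb⟩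
    · exact card_two (hmemf j 0 hj (by omega) (by simpa using ha)) (hmemf j 1 hj (by omega) hb) (by omega)
    · exact card_two (hmemf j 0 hj (by omega) (by simpa using ha)) (hmemf j 2 hj (by omega) hb) (by omega)
    · exact card_two (hmemf j 0 hj (by omega) (by simpa using ha)) (hmemf j 3 hj (by omega) hb) (by omega)
    · exact card_two (hmemf j 0 hj (by omega) (by simpa using ha)) (hmemf j 4 hj (by omega) hb) (by omega)
    · exact card_two (hmemf j 1 hj (by omega) ha) (hmemf j 2 hj (by omega) hb) (by omega)
    · exact card_two (hmemf j 1 hj (by omega) ha) (hmemf j 3 hj (by omega) hb) (by omega)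
    · exact card_two (hmemf j 1 hj (by omega) ha) (hmemf j 4 hj (by omega) hb) (by omega)
    · exact card_two (hmemf j 2 hj (by omega) ha) (hmemf j 3 hj (by omega) hb) (by omega)
    · exact card_two (hmemf j 2 hj (by omega) ha) (hmemf j 4 hj (by omega) hb) (by omega)
    · exact card_two (hmemf j 3 hj (by omega) ha) (hmemf j 4 hj (by omega) hb) (by omega)
  have hF3 : ∀ j, j < k →
      pr3 (5*j ∈ I) (5*j+1 ∈ I) (5*j+2 ∈ I) (5*j+3 ∈ I) (5*j+4 ∈ I) → 3 ≤ F j := by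
    intro j hj hp
    unfold pr3 at hp
    rcases hp with ⟨ha,hb,hc⟩|⟨ha,hb,hc⟩|⟨ha,hb,hc⟩|⟨ha,hb,hc⟩|⟨ha,hb,hc⟩|⟨ha,hb,hc⟩|⟨ha,hb,hc⟩|⟨ha,hb,hc⟩|⟨ha,hb,hc⟩|⟨ha,hb,hc⟩
    · exact card_three (hmemf j 0 hj (by omega) (by simpa using ha)) (hmemf j 1 hj (by omega) hb) (hmemf j 2 hj (by omega) hc) (by omega) (by omega) (by omega)
    · exact card_three (hmemf j 0 hj (by omega) (by simpa using ha)) (hmemf j 1 hj (by omega) hb) (hmemf j 3 hj (by omega) hc) (by omega) (by omega) (by omega)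
    · exact card_three (hmemf j 0 hj (by omega) (by simpa using ha)) (hmemf j 1 hj (by omega) hb) (hmemf j 4 hj (by omega) hc) (by omega) (by omega) (by omega)
    · exact card_three (hmemf j 0 hj (by omega) (by simpa using ha)) (hmemf j 2 hj (by omega) hb) (hmemf j 3 hj (by omega) hc) (by omega) (by omega) (by omega)
    · exact card_three (hmemf j 0 hj (by omega) (by simpa using ha)) (hmemf j 2 hj (by omega) hb) (hmemf j 4 hj (by omega) hc) (by omega) (by omega) (by omega)
    · exact card_three (hmemf j 0 hj (by omega) (by simpa using ha)) (hmemf j 3 hj (by omega) hb) (hmemf j 4 hj (by omega) hc) (by omega) (by omega) (by omega)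
    · exact card_three (hmemf j 1 hj (by omega) ha) (hmemf j 2 hj (by omega) hb) (hmemf j 3 hj (by omega) hc) (by omega) (by omega) (by omega)
    · exact card_three (hmemf j 1 hj (by omega) ha) (hmemf j 2 hj (by omega) hb) (hmemf j 4 hj (by omega) hc) (by omega) (by omega) (by omega)
    · exact card_three (hmemf j 1 hj (by omega) ha) (hmemf j 3 hj (by omega) hb) (hmemf j 4 hj (by omega) hc) (by omega) (by omega) (by omega)
    · exact card_three (hmemf j 2 hj (by omega) ha) (hmemf j 3 hj (by omega) hb) (hmemf j 4 hj (by omega) hc) (by omega) (by omega) (by omega)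
  -- normalized block triangle facts
  have blk : ∀ j, j < k →
      (twoOf ((5*j ∈ I) ∨ (5*j+1 ∈ I)) ((5*j+1 ∈ I) ∨ (5*j+2 ∈ I)) ((5*j+2 ∈ I) ∨ (5*j+3 ∈ I))) ∧
      (twoOf ((5*j ∈ I) ∨ (5*j+1 ∈ I)) ((5*j+2 ∈ I) ∨ (5*j+3 ∈ I)) ((5*j+3 ∈ I) ∨ (5*j+4 ∈ I))) ∧
      (((5*j ∈ I) ∨ (5*j+1 ∈ I)) ∨ ((5*j+3 ∈ I) ∨ (5*j+4 ∈ I))) ∧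
      (((5*j+3 ∈ I) ∨ (5*j+4 ∈ I)) ∨ ((5*j+4 ∈ I) ∨ (5*j+5 ∈ I))) ∧
      (twoOf (cB n I (5*j)) (cB n I (5*j+5)) (cB n I (n-1))) := by
    intro j hj
    obtain ⟨T1, T2, T3, T4, T5⟩ := HT1 j hj
    have e1 : cB n I (5*j+1) ↔ ((5*j ∈ I) ∨ (5*j+1 ∈ I)) := cBs (5*j)
    have e2 : cB n I (5*j+2) ↔ ((5*j+1 ∈ I) ∨ (5*j+2 ∈ I)) := cBs (5*j+1)
    have e3 : cB n I (5*j+3) ↔ ((5*j+2 ∈ I) ∨ (5*j+3 ∈ I)) := cBs (5*j+2)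
    have e4 : cB n I (5*j+4) ↔ ((5*j+3 ∈ I) ∨ (5*j+4 ∈ I)) := cBs (5*j+3)
    have e5 : cB n I (5*j+5) ↔ ((5*j+4 ∈ I) ∨ (5*j+5 ∈ I)) := cBs (5*j+4)
    rw [e1, e2, e3] at T3
    rw [e1, e3, e4] at T4
    rw [e1, e4] at T1
    rw [e4, e5] at T2
    refine ⟨T3, T4, ?_, ?_, T5⟩
    · rcases twoOf_right T1 with h|h
      · exact Or.inl h
      · exact Or.inr h
    · rcases twoOf_right T2 with h|h
      · exact Or.inl h
      · exact Or.inr (by rw [← e5]; rw [e5]; exact h)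
  -- main case split on hub coverage
  have hsplit : ∑ j ∈ range (k+1), F j = (∑ j ∈ range k, F j) + F k :=
    Finset.sum_range_succ F k
  by_cases hhub : (n-2 ∈ I) ∨ (n-1 ∈ I)
  · -- CASE 1 : hub covered
    have hFj : ∀ j ∈ range k, 2 ≤ F j := by
      intro j hj
      rw [mem_range] at hj
      obtain ⟨T3, T4, h14, _, _⟩ := blk j hj
      exact hF2 j hj (lemA _ _ _ _ _ h14 T3 T4)
    have hsum1 : 2*k ≤ ∑ j ∈ range k, F j := by
      calc 2*k = ∑ _j ∈ range k, 2 := by simp [mul_comm]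
        _ ≤ ∑ j ∈ range k, F j := Finset.sum_le_sum hFj
    obtain ⟨w, hwI, hwge⟩ : ∃ w, w ∈ I ∧ n-2 ≤ w := by
      rcases hhub with h|h
      · exact ⟨n-2, h, le_refl _⟩
      · exact ⟨n-1, h, by omega⟩
    have hFk1 : 1 ≤ F k := by
      have := hmemk w (by omega) hwI
      exact Finset.card_pos.mpr ⟨w, this⟩
    by_cases hr3 : 3 ≤ rem
    · -- need one more element in fiber k
      have ht := HT2 (5*k+1) (by omega) (by omega)
      have hu : (5*k ∈ I ∨ 5*k+1 ∈ I) ∨ (5*k+1 ∈ I ∨ 5*k+2 ∈ I) := by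
        have h2 := twoOf_left2 ht
        rw [show (5*k+1 : ℕ) = (5*k)+1 from rfl, cBs] at h2
        rw [show (5*k+1+1 : ℕ) = (5*k+1)+1 from rfl, cBs] at h2
        exact h2
      obtain ⟨u, huI, hub⟩ : ∃ u, u ∈ I ∧ 5*k ≤ u ∧ u ≤ 5*k+2 := by
        rcases hu with (h|h)|(h|h)
        · exact ⟨5*k, h, by omega⟩
        · exact ⟨5*k+1, h, by omega⟩
        · exact ⟨5*k+1, h, by omega⟩
        · exact ⟨5*k+2, h, by omega⟩
      have hFk2 : 2 ≤ F k :=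
        card_two (hmemk u (by omega) huI) (hmemk w (by omega) hwI) (by omega)
      omega
    · omega
  · -- CASE 2 : hub not covered
    push_neg at hhub
    obtain ⟨hn2, hn1⟩ := hhub
    have hcBn1 : ¬ cB n I (n-1) := by
      rw [show n-1 = (n-2)+1 by omega, cBs]
      push_neg
      exact ⟨hn2, by rw [show (n-2)+1 = n-1 by omega]; exact hn1⟩
    have hT5 : ∀ j, j < k → cB n I (5*j) ∧ cB n I (5*j+5) := by
      intro j hj
      exact twoOf_of_not3 (blk j hj).2.2.2.2 hcBn1
    have hcB0 : cB n I 0 → 0 ∈ I := by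
      intro h
      rcases h with h|h
      · exfalso; simp at h; exact hn1 h
      · exact h
    have base : 0 ∈ I := by
      rcases Nat.eq_zero_or_pos k with hk0 | hkpos
      · have ht := HT2 0 (by omega) (by omega)
        exact hcB0 (twoOf_of_not3 ht hcBn1).1
      · have := (hT5 0 hkpos).1
        rw [show 5*0 = 0 by ring] at this
        exact hcB0 this
    have chain : ∀ m, m ≤ k →
        2*m+1 ≤ (∑ j ∈ range m, F j) + (if 5*m ∈ I then 1 else 0) := by
      intro m
      induction m with
      | zero =>
        intro _
        rw [if_pos (by simpa using base)]
        simp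
      | succ m ih =>
        intro hm
        have hmk : m < k := by omega
        have ihm := ih (by omega)
        obtain ⟨T3, T4, h14, h45, _⟩ := blk m hmk
        have h5 : (5*m+4 ∈ I) ∨ (5*m+5 ∈ I) := by
          have := (hT5 m hmk).2
          rw [show (5*m+5 : ℕ) = (5*m+4)+1 from rfl, cBs] at this
          exact this
        have hlem := lemB (5*m ∈ I) (5*m+1 ∈ I) (5*m+2 ∈ I) (5*m+3 ∈ I) (5*m+4 ∈ I)
          (5*m+5 ∈ I) h14 h45 T3 T4 h5
        have hFm2 : 2 ≤ F m := hF2 m hmk hlem.1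
        have hsucc : ∑ j ∈ range (m+1), F j = (∑ j ∈ range m, F j) + F m :=
          Finset.sum_range_succ F m
        have hrw : (5*(m+1) ∈ I) ↔ (5*m+5 ∈ I) := by rw [show 5*(m+1) = 5*m+5 by ring]
        by_cases hx0 : 5*m ∈ I
        · rw [if_pos hx0] at ihm
          by_cases hr : 5*m+5 ∈ I
          · rw [if_pos (hrw.mpr hr)]
            omega
          · have hFm3 : 3 ≤ F m := hF3 m hmk (hlem.2 hx0 hr)
            rw [if_neg (fun hc => hr (hrw.mp hc))]
            omega
        · rw [if_neg hx0] at ihm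
          by_cases hr : 5*m+5 ∈ I
          · rw [if_pos (hrw.mpr hr)]
            omega
          · rw [if_neg (fun hc => hr (hrw.mp hc))]
            omega
    have hch := chain k (le_refl k)
    have hw2 : 3 ≤ rem → (5*k+rem-1) ∈ I := by
      intro h3
      rcases (by omega : rem = 3 ∨ rem = 4) with h|h
      · have ht := HT2 (5*k+2) (by omega) (by omega)
        have := (twoOf_of_not3 ht hcBn1).2
        rw [show (5*k+2+1 : ℕ) = (5*k+2)+1 from rfl, cBs] at this
        rcases this with hh|hh
        · rw [h]; simpa using hh
        · exfalso; apply hn2; rw [show n-2 = 5*k+2+1 by omega]; exact hh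
      · have ht := HT2 (5*k+3) (by omega) (by omega)
        have := (twoOf_of_not3 ht hcBn1).2
        rw [show (5*k+3+1 : ℕ) = (5*k+3)+1 from rfl, cBs] at this
        rcases this with hh|hh
        · rw [h]; simpa using hh
        · exfalso; apply hn2; rw [show n-2 = 5*k+3+1 by omega]; exact hh
    by_cases hx5k : 5*k ∈ I
    · rw [if_pos hx5k] at hch
      by_cases hr3 : 3 ≤ rem
      · have hFk2 : 2 ≤ F k :=
          card_two (hmemk (5*k) (le_refl _) hx5k)
            (hmemk (5*k+rem-1) (by omega) (hw2 hr3)) (by omega)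
        omega
      · have hFk1 : 1 ≤ F k :=
          Finset.card_pos.mpr ⟨5*k, hmemk (5*k) (le_refl _) hx5k⟩
        omega
    · rw [if_neg hx5k] at hch
      by_cases hr3 : 3 ≤ rem
      · have hFk1 : 1 ≤ F k :=
          Finset.card_pos.mpr ⟨5*k+rem-1, hmemk (5*k+rem-1) (by omega) (hw2 hr3)⟩
        omega
      · omega


lemma pair_eq_elim {α : Type*} [DecidableEq α] {a b c d : α}
    (h : ({a, b} : Finset α) = {c, d}) : (a = c ∧ b = d) ∨ (a = d ∧ b = c) := by
  have ha : a = c ∨ a = d := by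
    have : a ∈ ({c, d} : Finset α) := by rw [← h]; simp
    simpa using this
  have hb : b = c ∨ b = d := by
    have : b ∈ ({c, d} : Finset α) := by rw [← h]; simp
    simpa using this
  have hc : c = a ∨ c = b := by
    have : c ∈ ({a, b} : Finset α) := by rw [h]; simp
    simpa using this
  have hd : d = a ∨ d = b := by
    have : d ∈ ({a, b} : Finset α) := by rw [h]; simp
    simpa using this
  rcases ha with h1|h1 <;> rcases hb with h2|h2 <;> subst h1 <;> subst h2 <;> tauto

def vt (n : ℕ) (hn : 0 < n) (a : ℕ) : Fin n := ⟨a % n, Nat.mod_lt a hn⟩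

lemma vt_val (n : ℕ) (hn : 0 < n) (a : ℕ) : (vt n hn a).val = a % n := rfl

lemma vt_inj {n : ℕ} {hn : 0 < n} {a b : ℕ} (ha : a < n) (hb : b < n)
    (h : vt n hn a = vt n hn b) : a = b := by
  have := congrArg Fin.val h
  simpa [vt_val, Nat.mod_eq_of_lt ha, Nat.mod_eq_of_lt hb] using this

lemma vt_ne {n : ℕ} {hn : 0 < n} {a b : ℕ} (ha : a < n) (hb : b < n) (hab : a ≠ b) :
    vt n hn a ≠ vt n hn b := fun h => hab (vt_inj ha hb h)

def prn (n : ℕ) (hn : 0 < n) (a b : ℕ) : Finset (Fin n) := {vt n hn a, vt n hn b}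

lemma prn_elim {n : ℕ} {hn : 0 < n} {a b c d : ℕ} (ha : a < n) (hb : b < n)
    (hc : c < n) (hd : d < n) (h : prn n hn a b = prn n hn c d) :
    (a = c ∧ b = d) ∨ (a = d ∧ b = c) := by
  rcases pair_eq_elim h with ⟨h1, h2⟩ | ⟨h1, h2⟩
  · exact Or.inl ⟨vt_inj ha hc h1, vt_inj hb hd h2⟩
  · exact Or.inr ⟨vt_inj ha hd h1, vt_inj hb hc h2⟩

def blockD (n : ℕ) (hn : 0 < n) (k : ℕ) : Finset (Finset (Fin n)) :=
  (range k).biUnion fun j =>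
    {prn n hn (5*j) (5*j+4), prn n hn (5*j+1) (5*j+3),
     prn n hn (5*j+1) (5*j+4), prn n hn (5*j) (5*j+5)}

def hubS (n k : ℕ) : Finset ℕ :=
  (range n).filter fun v => 1 ≤ v ∧ v ≤ n-3 ∧ (v % 5 = 0 ∨ 5*k < v)

def hubD (n : ℕ) (hn : 0 < n) (k : ℕ) : Finset (Finset (Fin n)) :=
  (hubS n k).image fun v => prn n hn v (n-1)

def dgs (n : ℕ) (hn : 0 < n) (k : ℕ) : Finset (Finset (Fin n)) :=
  blockD n hn k ∪ hubD n hn k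

lemma mem_dgs {n : ℕ} {hn : 0 < n} {k : ℕ} {e : Finset (Fin n)} :
    e ∈ dgs n hn k ↔
    (∃ j, j < k ∧ (e = prn n hn (5*j) (5*j+4) ∨ e = prn n hn (5*j+1) (5*j+3) ∨
        e = prn n hn (5*j+1) (5*j+4) ∨ e = prn n hn (5*j) (5*j+5))) ∨
    (∃ v, (v < n ∧ 1 ≤ v ∧ v ≤ n-3 ∧ (v % 5 = 0 ∨ 5*k < v)) ∧ e = prn n hn v (n-1)) := by
  simp only [dgs, blockD, hubD, hubS, mem_union, mem_biUnion, mem_image, mem_filter,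
    mem_range, mem_insert, mem_singleton]
  constructor
  · rintro (⟨j, hj, h⟩ | ⟨v, ⟨hv1, hv2⟩, h⟩)
    · exact Or.inl ⟨j, hj, by tauto⟩
    · exact Or.inr ⟨v, ⟨hv1, hv2⟩, h.symm⟩
  · rintro (⟨j, hj, h⟩ | ⟨v, hv, h⟩)
    · exact Or.inl ⟨j, hj, by tauto⟩
    · exact Or.inr ⟨v, hv, h.symm⟩

section Cards
variable {n k rem : ℕ} (hn : 0 < n) (hnk : n = 5*k+2+rem) (hrem : rem ≤ 4) (hn3 : 3 ≤ n)
include hnk hrem hn3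

lemma blockD_card : (blockD n hn k).card = 4*k := by
  rw [blockD, Finset.card_biUnion]
  · have hcard : ∀ j ∈ range k,
        ({prn n hn (5*j) (5*j+4), prn n hn (5*j+1) (5*j+3),
          prn n hn (5*j+1) (5*j+4), prn n hn (5*j) (5*j+5)} :
          Finset (Finset (Fin n))).card = 4 := by
      intro j hj
      rw [mem_range] at hj
      have hb : 5*j+5 < n := by omega
      rw [Finset.card_insert_of_notMem, Finset.card_insert_of_notMem,
          Finset.card_insert_of_notMem, Finset.card_singleton]
      · intro hmem
        simp only [mem_singleton] at hmem
        rcases prn_elim (by omega) (by omega) (by omega) (by omega) hmem with ⟨h1,h2⟩|⟨h1,h2⟩ <;> omega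
      · intro hmem
        simp only [mem_insert, mem_singleton] at hmem
        rcases hmem with hmem|hmem <;>
          rcases prn_elim (by omega) (by omega) (by omega) (by omega) hmem with ⟨h1,h2⟩|⟨h1,h2⟩ <;> omega
      · intro hmem
        simp only [mem_insert, mem_singleton] at hmem
        rcases hmem with hmem|hmem|hmem <;>
          rcases prn_elim (by omega) (by omega) (by omega) (by omega) hmem with ⟨h1,h2⟩|⟨h1,h2⟩ <;> omega
    rw [Finset.sum_congr rfl hcard]
    simp [mul_comm]
  · intro j1 hj1 j2 hj2 hne
    rw [mem_coe, mem_range] at hj1 hj2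
    simp only [Function.onFun]
    rw [Finset.disjoint_left]
    intro e he1 he2
    simp only [mem_insert, mem_singleton] at he1 he2
    have hb1 : 5*j1+5 < n := by omega
    have hb2 : 5*j2+5 < n := by omega
    rcases he1 with rfl|rfl|rfl|rfl <;> rcases he2 with h|h|h|h <;>
      rcases prn_elim (by omega) (by omega) (by omega) (by omega) h with ⟨h1,h2⟩|⟨h1,h2⟩ <;> omega

lemma hubS_card : (hubS n k).card = n - 3 - 4*k := by
  have hset : hubS n k =
      ((range (if rem = 0 then k-1 else k)).image fun j => 5*(j+1)) ∪
      ((range (rem-1)).image fun m => 5*k+1+m) := by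
    ext v
    simp only [hubS, mem_filter, mem_range, mem_union, mem_image]
    constructor
    · rintro ⟨hvn, h1, h3, h5 | hgt⟩
      · refine Or.inl ⟨v/5 - 1, ?_, by omega⟩
        split_ifs with h0 <;> omega
      · exact Or.inr ⟨v - (5*k+1), by omega, by omega⟩
    · rintro (⟨j, hj, rfl⟩ | ⟨m, hm, rfl⟩)
      · have hj' : (if rem = 0 then k-1 else k) ≤ k := by split_ifs <;> omega
        split_ifs at hj with h0
        · refine ⟨by omega, by omega, by omega, Or.inl (by omega)⟩
        · refine ⟨by omega, by omega, by omega, Or.inl (by omega)⟩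
      · exact ⟨by omega, by omega, by omega, Or.inr (by omega)⟩
  rw [hset, Finset.card_union_of_disjoint, Finset.card_image_of_injOn,
      Finset.card_image_of_injOn]
  · simp only [Finset.card_range]
    split_ifs with h0 <;> omega
  · intro a _ b _ hab; simp only at hab; omega
  · intro a _ b _ hab; simp only at hab; omega
  · rw [Finset.disjoint_left]
    rintro x hx1 hx2
    simp only [mem_image, mem_range] at hx1 hx2
    obtain ⟨j, hj, rfl⟩ := hx1
    obtain ⟨m, hm, hme⟩ := hx2
    split_ifs at hj with h0 <;> omega

lemma hubD_card : (hubD n hn k).card = n - 3 - 4*k := by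
  rw [hubD, Finset.card_image_of_injOn]
  · exact hubS_card hnk hrem hn3
  · intro v hv v' hv' heq
    simp only [mem_coe, hubS, mem_filter, mem_range] at hv hv'
    rcases prn_elim (by omega) (by omega) (by omega) (by omega) heq with ⟨h1,h2⟩|⟨h1,h2⟩ <;> omega

lemma dgs_card : (dgs n hn k).card = n - 3 := by
  rw [dgs, Finset.card_union_of_disjoint]
  · rw [blockD_card hn hnk hrem hn3, hubD_card hn hnk hrem hn3]; omega
  · rw [Finset.disjoint_left]
    intro e he1 he2
    simp only [blockD, hubD, hubS, mem_biUnion, mem_image, mem_filter, mem_range,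
      mem_insert, mem_singleton] at he1 he2
    obtain ⟨j, hj, hsh⟩ := he1
    obtain ⟨v, ⟨hvn, h1, h3, _⟩, hve⟩ := he2
    have hb : 5*j+5 < n := by omega
    rcases hsh with rfl|rfl|rfl|rfl <;>
      rcases prn_elim (by omega) (by omega) (by omega) (by omega) hve.symm with ⟨h1,h2⟩|⟨h1,h2⟩ <;> omega

end Cards

section Valid
variable {n k rem : ℕ} (hn : 0 < n) (hnk : n = 5*k+2+rem) (hrem : rem ≤ 4) (hn3 : 3 ≤ n)

omit hnk hrem hn3 in
lemma notadj_of {u v : ℕ} (hu2 : u+2 ≤ v) (hv : v ≤ n-1) (hside : 1 ≤ u ∨ v ≤ n-2) :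
    ¬ adjOnCycle n (vt n hn u) (vt n hn v) := by
  intro hadj
  have hu : u % n = u := Nat.mod_eq_of_lt (by omega)
  have hv' : v % n = v := Nat.mod_eq_of_lt (by omega)
  rcases hadj with h|h
  · simp only [vt_val, hu, hv'] at h
    have h1 : (u+1) % n = u+1 := Nat.mod_eq_of_lt (by omega)
    omega
  · simp only [vt_val, hu, hv'] at h
    have hsplit : (v+1) % n = if v+1 = n then 0 else v+1 := by
      split_ifs with h0
      · rw [h0, Nat.mod_self]
      · exact Nat.mod_eq_of_lt (by omega)
    rw [hsplit] at h
    split_ifs at h <;> omega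

include hnk hrem hn3

lemma dgs_shape : ∀ e ∈ dgs n hn k, ∃ u v, u < v ∧ v < n ∧ e = prn n hn u v ∧
    ((∃ j, j < k ∧ ((u = 5*j ∧ v = 5*j+4) ∨ (u = 5*j+1 ∧ v = 5*j+3) ∨
       (u = 5*j+1 ∧ v = 5*j+4) ∨ (u = 5*j ∧ v = 5*j+5))) ∨
     (1 ≤ u ∧ u ≤ n-3 ∧ (u % 5 = 0 ∨ 5*k < u) ∧ v = n-1)) := by
  intro e he
  rcases mem_dgs.mp he with ⟨j, hj, hsh⟩ | ⟨v, hv, rfl⟩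
  · have hb : 5*j+5 < n := by omega
    rcases hsh with rfl|rfl|rfl|rfl
    · exact ⟨5*j, 5*j+4, by omega, by omega, rfl, Or.inl ⟨j, hj, by tauto⟩⟩
    · exact ⟨5*j+1, 5*j+3, by omega, by omega, rfl, Or.inl ⟨j, hj, by tauto⟩⟩
    · exact ⟨5*j+1, 5*j+4, by omega, by omega, rfl, Or.inl ⟨j, hj, by tauto⟩⟩
    · exact ⟨5*j, 5*j+5, by omega, by omega, rfl, Or.inl ⟨j, hj, by tauto⟩⟩
  · exact ⟨v, n-1, by omega, by omega, rfl, Or.inr ⟨hv.2.1, hv.2.2.1, hv.2.2.2, rfl⟩⟩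

lemma dgs_nocross :
    ∀ e ∈ dgs n hn k, ∀ f ∈ dgs n hn k,
      ¬ ∃ a b c d : Fin n, e = {a, b} ∧ f = {c, d} ∧
        a.val < c.val ∧ c.val < b.val ∧ b.val < d.val := by
  intro e he f hf hcr
  obtain ⟨a, b, c, d, hea, hfb, h1, h2, h3⟩ := hcr
  obtain ⟨u1, v1, huv1, hv1n, rfl, hg1⟩ := dgs_shape hn hnk hrem hn3 e he
  obtain ⟨u2, v2, huv2, hv2n, rfl, hg2⟩ := dgs_shape hn hnk hrem hn3 f hf
  unfold prn at hea hfb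
  have hab : a.val < b.val := lt_trans h1 h2
  have hcd : c.val < d.val := lt_trans h2 h3
  have hval : ∀ w : ℕ, w < n → (vt n hn w).val = w := by
    intro w hw; simp [vt_val, Nat.mod_eq_of_lt hw]
  have hae : a.val = u1 ∧ b.val = v1 := by
    rcases pair_eq_elim hea with ⟨hx, hy⟩ | ⟨hx, hy⟩
    · rw [← hx, ← hy]; exact ⟨hval u1 (by omega), hval v1 (by omega)⟩
    · exfalso
      have h1' : a.val = v1 := by rw [← hy]; exact (hval v1 (by omega)).symm ▸ rfl
      have h2' : b.val = u1 := by rw [← hx]; exact (hval u1 (by omega)).symm ▸ rfl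
      omega
  have hcf : c.val = u2 ∧ d.val = v2 := by
    rcases pair_eq_elim hfb with ⟨hx, hy⟩ | ⟨hx, hy⟩
    · rw [← hx, ← hy]; exact ⟨hval u2 (by omega), hval v2 (by omega)⟩
    · exfalso
      have h1' : c.val = v2 := by rw [← hy]; exact (hval v2 (by omega)).symm ▸ rfl
      have h2' : d.val = u2 := by rw [← hx]; exact (hval u2 (by omega)).symm ▸ rfl
      omega
  obtain ⟨ha', hb'⟩ := hae
  obtain ⟨hc', hd'⟩ := hcf
  have hord : u1 < u2 ∧ u2 < v1 ∧ v1 < v2 := by omega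
  rcases hg1 with ⟨j1, hj1, hs1⟩ | hh1 <;> rcases hg2 with ⟨j2, hj2, hs2⟩ | hh2 <;> omega

end Valid

lemma twoOf_mono {a b c a' b' c' : Prop} (ha : a → a') (hb : b → b') (hc : c → c')
    (h : twoOf a b c) : twoOf a' b' c' := by unfold twoOf at *; tauto

lemma two_of_three {α : Type*} [DecidableEq α] {x y z : α} {p : α → Prop} [DecidablePred p]
    (hxy : x ≠ y) (hxz : x ≠ z) (hyz : y ≠ z)
    (h : 2 ≤ (({x, y, z} : Finset α).filter p).card) :
    (p x ∧ p y) ∨ (p x ∧ p z) ∨ (p y ∧ p z) := by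
  by_cases hx : p x <;> by_cases hy : p y <;> by_cases hz : p z <;>
    simp [Finset.filter_insert, Finset.filter_singleton, hx, hy, hz, hxy, hxz, hyz] at h ⊢ <;>
    tauto

/-- for each `n ≥ 3` there is a triangulation graph on `n` vertices
each of whose edge 2-dominating sets has cardinality at least `⌊(2n+1)/5⌋`
(and at least `2` when `n = 4`). -/
theorem edge_two_dominating_lower_bound (n : ℕ) (hn : 3 ≤ n) :
    ∃ T : PolyTriangulation n,
      ∀ D : Finset (Finset (Fin n)), EdgeTwoDominating T D →
        (2 * n + 1) / 5 ≤ D.card ∧ (n = 4 → 2 ≤ D.card) := by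
  classical
  have hn0 : 0 < n := by omega
  set k := (n-2)/5 with hkdef
  set rem := (n-2)%5 with hremdef
  have hnk : n = 5*k+2+rem := by omega
  have hrem : rem ≤ 4 := by omega
  -- the triangulation
  have hvalid : ∀ e ∈ dgs n hn0 k, isDiagPair n e := by
    intro e he
    obtain ⟨u, v, huv, hvn, rfl, hg⟩ := dgs_shape hn0 hnk hrem hn e he
    refine ⟨vt n hn0 u, vt n hn0 v, vt_ne (by omega) (by omega) (by omega), ?_, rfl⟩
    apply notadj_of hn0 ?_ ?_ ?_
    · rcases hg with ⟨j, hj, hs⟩ | hh <;> omega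
    · omega
    · rcases hg with ⟨j, hj, hs⟩ | hh <;> omega
  have hcross : ∀ e ∈ dgs n hn0 k, ∀ f ∈ dgs n hn0 k, ¬ crossing n e f := by
    intro e he f hf
    exact dgs_nocross hn0 hnk hrem hn e he f hf
  have hcard : (dgs n hn0 k).card = n - 3 := dgs_card hn0 hnk hrem hn
  refine ⟨⟨dgs n hn0 k, hvalid, hcross, hcard⟩, ?_⟩
  set T : PolyTriangulation n := ⟨dgs n hn0 k, hvalid, hcross, hcard⟩ with hT
  intro D hD
  obtain ⟨hDb, hDt⟩ := hD
  set I := (range n).filter (fun i => prn n hn0 i (i+1) ∈ D) with hIdef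
  -- successor-mod helper
  have hsm : ∀ x : ℕ, x < n → (x+1) % n = if x+1 = n then 0 else x+1 := by
    intro x hx
    split_ifs with h0
    · rw [h0, Nat.mod_self]
    · exact Nat.mod_eq_of_lt (by omega)
  -- |I| ≤ |D|
  have hIcard : I.card ≤ D.card := by
    apply Finset.card_le_card_of_injOn (fun i => prn n hn0 i (i+1))
    · intro i hi
      rw [hIdef, mem_coe, mem_filter] at hi
      exact hi.2
    · intro a ha b hb hab
      simp only [hIdef, coe_filter, Set.mem_setOf_eq, mem_range] at ha hb
      obtain ⟨han, -⟩ := ha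
      obtain ⟨hbn, -⟩ := hb
      unfold prn at hab
      have e1 := hsm a han
      have e2 := hsm b hbn
      rcases pair_eq_elim hab with ⟨h1, h2⟩ | ⟨h1, h2⟩
      · have := congrArg Fin.val h1
        simp only [vt_val] at this
        rw [Nat.mod_eq_of_lt han, Nat.mod_eq_of_lt hbn] at this
        exact this
      · have v1 := congrArg Fin.val h1
        have v2 := congrArg Fin.val h2
        simp only [vt_val] at v1 v2
        rw [Nat.mod_eq_of_lt han, e2] at v1
        rw [Nat.mod_eq_of_lt hbn, e1] at v2
        split_ifs at v1 v2 <;> omega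
  -- coverage transfer
  have hcov : ∀ v : Fin n, (∃ e ∈ D, v ∈ e) → cB n I v.val := by
    rintro v ⟨e, heD, hve⟩
    obtain ⟨i, j, hij, hadj, rfl⟩ := hDb e heD
    have main : ∀ a b : Fin n, ({a, b} : Finset (Fin n)) ∈ D →
        (a.val + 1) % n = b.val → v ∈ ({a, b} : Finset (Fin n)) → cB n I v.val := by
      intro a b habD hab hvab
      have haI : a.val ∈ I := by
        rw [hIdef, mem_filter, mem_range]
        refine ⟨a.isLt, ?_⟩
        have he : prn n hn0 a.val (a.val+1) = {a, b} := by
          unfold prn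
          congr 1
          · exact Fin.ext (by simp [vt_val, Nat.mod_eq_of_lt a.isLt])
          · congr 1
            exact Fin.ext (by simp [vt_val, hab])
        rw [he]
        exact habD
      rcases mem_insert.mp hvab with rfl | hv'
      · exact Or.inr haI
      · rw [mem_singleton] at hv'
        subst hv'
        by_cases hi : v.val = 0
        · rw [hi]
          refine Or.inl ?_
          simp only [cB, if_pos rfl]
          have : a.val = n - 1 := by
            have := hsm a.val a.isLt
            split_ifs at this <;> omega
          rwa [← this]
        · have hva : v.val = a.val + 1 := by
            have := hsm a.val a.isLt
            split_ifs at this <;> omega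
          rw [hva]
          exact (cB_succ n I a.val).mpr (Or.inl haI)
    rcases hadj with h | h
    · exact main i j heD h hve
    · rw [Finset.pair_comm] at heD hve
      exact main j i heD h hve
  have hcovx : ∀ x : ℕ, x < n → (∃ e ∈ D, vt n hn0 x ∈ e) → cB n I x := by
    intro x hx h
    have := hcov (vt n hn0 x) h
    rwa [vt_val, Nat.mod_eq_of_lt hx] at this
  -- edge builders
  have ebd : ∀ u, u+1 ≤ n-1 → T.isEdge (prn n hn0 u (u+1)) := by
    intro u hu
    refine Or.inl ⟨vt n hn0 u, vt n hn0 (u+1), vt_ne (by omega) (by omega) (by omega),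
      Or.inl ?_, rfl⟩
    simp only [vt_val]
    rw [Nat.mod_eq_of_lt (show u < n by omega)]
  have ewrap : isBoundaryEdge n (prn n hn0 0 (n-1)) := by
    refine ⟨vt n hn0 (n-1), vt n hn0 0, vt_ne (by omega) (by omega) (by omega),
      Or.inl ?_, ?_⟩
    · simp only [vt_val]
      rw [Nat.mod_eq_of_lt (show n-1 < n by omega), show n-1+1 = n by omega,
        Nat.mod_self, Nat.zero_mod]
    · unfold prn
      rw [Finset.pair_comm]
  have ehub : ∀ v, v ≤ n-2 → (v % 5 = 0 ∨ 5*k < v) → T.isEdge (prn n hn0 v (n-1)) := by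
    intro v hv hc
    by_cases h0 : v = 0
    · subst h0
      exact Or.inl ewrap
    · by_cases h2 : v = n-2
      · subst h2
        have := ebd (n-2) (by omega)
        rwa [show n-2+1 = n-1 by omega] at this
      · refine Or.inr (mem_dgs.mpr (Or.inr ⟨v, ⟨by omega, by omega, by omega, hc⟩, rfl⟩))
  have eblk : ∀ j, j < k →
      T.isEdge (prn n hn0 (5*j) (5*j+4)) ∧ T.isEdge (prn n hn0 (5*j+1) (5*j+3)) ∧
      T.isEdge (prn n hn0 (5*j+1) (5*j+4)) ∧ T.isEdge (prn n hn0 (5*j) (5*j+5)) := by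
    intro j hj
    refine ⟨Or.inr (mem_dgs.mpr (Or.inl ⟨j, hj, ?_⟩)),
            Or.inr (mem_dgs.mpr (Or.inl ⟨j, hj, ?_⟩)),
            Or.inr (mem_dgs.mpr (Or.inl ⟨j, hj, ?_⟩)),
            Or.inr (mem_dgs.mpr (Or.inl ⟨j, hj, ?_⟩))⟩ <;> tauto
  -- triangles to twoOf facts
  have tri2 : ∀ x y z : ℕ, x < n → y < n → z < n → x ≠ y → x ≠ z → y ≠ z →
      T.isEdge (prn n hn0 x y) → T.isEdge (prn n hn0 x z) → T.isEdge (prn n hn0 y z) →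
      twoOf (cB n I x) (cB n I y) (cB n I z) := by
    intro x y z hx hy hz hxy hxz hyz e1 e2 e3
    have htri : T.isTriangle {vt n hn0 x, vt n hn0 y, vt n hn0 z} :=
      ⟨vt n hn0 x, vt n hn0 y, vt n hn0 z, vt_ne hx hy hxy, vt_ne hx hz hxz,
        vt_ne hy hz hyz, rfl, e1, e2, e3⟩
    have hcard2 := hDt _ htri
    have h2 := two_of_three (vt_ne hx hy hxy) (vt_ne hx hz hxz) (vt_ne hy hz hyz) hcard2
    exact twoOf_mono (hcovx x hx) (hcovx y hy) (hcovx z hz) h2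
  have HT1 : ∀ j, j < k →
      twoOf (cB n I (5*j)) (cB n I (5*j+1)) (cB n I (5*j+4)) ∧
      twoOf (cB n I (5*j)) (cB n I (5*j+4)) (cB n I (5*j+5)) ∧
      twoOf (cB n I (5*j+1)) (cB n I (5*j+2)) (cB n I (5*j+3)) ∧
      twoOf (cB n I (5*j+1)) (cB n I (5*j+3)) (cB n I (5*j+4)) ∧
      twoOf (cB n I (5*j)) (cB n I (5*j+5)) (cB n I (n-1)) := by
    intro j hj
    obtain ⟨d1, d2, d3, d4⟩ := eblk j hj
    have hb : 5*j+5 ≤ n-2 := by omega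
    refine ⟨?_, ?_, ?_, ?_, ?_⟩
    · exact tri2 _ _ _ (by omega) (by omega) (by omega) (by omega) (by omega) (by omega)
        (ebd (5*j) (by omega)) d1 d3
    · exact tri2 _ _ _ (by omega) (by omega) (by omega) (by omega) (by omega) (by omega)
        d1 d4 (ebd (5*j+4) (by omega))
    · exact tri2 _ _ _ (by omega) (by omega) (by omega) (by omega) (by omega) (by omega)
        (ebd (5*j+1) (by omega)) d2 (ebd (5*j+2) (by omega))
    · exact tri2 _ _ _ (by omega) (by omega) (by omega) (by omega) (by omega) (by omega)
        d2 d3 (ebd (5*j+3) (by omega))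
    · exact tri2 _ _ _ (by omega) (by omega) (by omega) (by omega) (by omega) (by omega)
        d4 (ehub (5*j) (by omega) (by omega)) (ehub (5*j+5) (by omega) (by omega))
  have HT2 : ∀ v, 5*k ≤ v → v + 2 ≤ n - 1 →
      twoOf (cB n I v) (cB n I (v+1)) (cB n I (n-1)) := by
    intro v hv1 hv2
    exact tri2 _ _ _ (by omega) (by omega) (by omega) (by omega) (by omega) (by omega)
      (ebd v (by omega)) (ehub v (by omega) (by omega))
      (ehub (v+1) (by omega) (by omega))
  have hcore := core n k rem I hnk hrem hn HT1 HT2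
  exact ⟨le_trans hcore.1 hIcard, fun h4 => le_trans (hcore.2 h4) hIcard⟩
end

section
/- If a set D of boundary edges of a triangulation graph on n vertices has the property that every triangular face has at least two vertices incident to D, then no two consecutive vertices of the Hamiltonian cycle can both be non-incident to D; in particular |D| ≥ ⌈n/4⌉ − O(1), and specifically for the 7-cycle case |D| ≥ 2. -/
open Finset

-- ### auxiliary
lemma finPair_eq_of_lt {n : ℕ} {a b c d : Fin n}
    (h : ({a, b} : Finset (Fin n)) = {c, d}) (hab : a.val < b.val) (hcd : c.val < d.val) :
    a = c ∧ b = d := by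
  have ha : a ∈ ({c, d} : Finset (Fin n)) := by rw [← h]; simp
  have hb : b ∈ ({c, d} : Finset (Fin n)) := by rw [← h]; simp
  have hc : c ∈ ({a, b} : Finset (Fin n)) := by rw [h]; simp
  simp only [Finset.mem_insert, Finset.mem_singleton] at ha hb hc
  rcases ha with rfl | rfl
  · rcases hb with rfl | rfl
    · omega
    · exact ⟨rfl, rfl⟩
  · rcases hc with rfl | rfl <;> omega

lemma adj_char {n : ℕ} (hn : 3 ≤ n) {i j : Fin n} (hij : i.val < j.val) :
    adjOnCycle n i j ↔ (j.val = i.val + 1 ∨ (i.val = 0 ∧ j.val = n - 1)) := by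
  have hi : i.val < n := i.isLt
  have hj : j.val < n := j.isLt
  unfold adjOnCycle
  constructor
  · rintro (h | h)
    · rw [Nat.mod_eq_of_lt (by omega)] at h
      left; omega
    · by_cases hj1 : j.val + 1 < n
      · rw [Nat.mod_eq_of_lt hj1] at h; omega
      · have : j.val + 1 = n := by omega
        rw [this, Nat.mod_self] at h
        right; omega
  · rintro (h | ⟨h1, h2⟩)
    · left; rw [Nat.mod_eq_of_lt (by omega)]; omega
    · right
      have : j.val + 1 = n := by omega
      rw [this, Nat.mod_self]; omega

/-- Extract an ordered representation of a diagonal. -/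
lemma diag_facts {n : ℕ} (hn : 3 ≤ n) (T : PolyTriangulation n) {e : Finset (Fin n)}
    (he : e ∈ T.diags) :
    ∃ i j : Fin n, i.val + 2 ≤ j.val ∧ ¬(i.val = 0 ∧ j.val = n - 1) ∧ e = {i, j} := by
  obtain ⟨i, j, hne, hadj, hrep⟩ := T.diags_valid e he
  have hvne : i.val ≠ j.val := fun h => hne (Fin.ext h)
  rcases lt_or_gt_of_ne hvne with h | h
  · rw [adj_char hn h] at hadj
    push_neg at hadj
    exact ⟨i, j, by omega, by omega, hrep⟩
  · have hadj' : ¬ adjOnCycle n j i := by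
      intro hc; exact hadj (Or.symm hc)
    rw [adj_char hn h] at hadj'
    push_neg at hadj'
    exact ⟨j, i, by omega, by omega, by rw [hrep, Finset.pair_comm]⟩

def Cross2 (p q : ℕ × ℕ) : Prop := p.1 < q.1 ∧ q.1 < p.2 ∧ p.2 < q.2

def ChordOf (S : Finset ℕ) (p : ℕ × ℕ) : Prop :=
  p.1 ∈ S ∧ p.2 ∈ S ∧ (∃ v ∈ S, p.1 < v ∧ v < p.2) ∧ (∃ w ∈ S, w < p.1 ∨ p.2 < w)

theorem chord_bound (N : ℕ) : ∀ S : Finset ℕ, S.card ≤ N → ∀ F : Finset (ℕ × ℕ),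
    (∀ p ∈ F, ChordOf S p) → (∀ p ∈ F, ∀ q ∈ F, ¬ Cross2 p q) →
    F = ∅ ∨ F.card + 3 ≤ S.card := by
  induction N with
  | zero =>
    intro S hS F hF hX
    left
    rcases F.eq_empty_or_nonempty with h | ⟨p, hp⟩
    · exact h
    · have h1 := (hF p hp).1
      have : S = ∅ := Finset.card_eq_zero.mp (Nat.le_zero.mp hS)
      simp [this] at h1
  | succ N ih =>
    intro S hS F hF hX
    by_cases hFe : F = ∅
    · exact Or.inl hFe
    · right
      have hFne : F.Nonempty := Finset.nonempty_iff_ne_empty.mpr hFe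
      set mc : ℕ × ℕ → ℕ := fun p => (S.filter (fun v => p.1 < v ∧ v < p.2)).card with hmc
      obtain ⟨p, hp, hmin⟩ := Finset.exists_min_image F mc hFne
      obtain ⟨ha, hb, ⟨v, hvS, hav, hvb⟩, w0, hw0S, hw0⟩ := hF p hp
      -- Claim 1
      have claim1 : ∀ q ∈ F, q ≠ p →
          (q.1 ≤ p.1 ∨ p.2 ≤ q.1) ∧ (q.2 ≤ p.1 ∨ p.2 ≤ q.2) := by
        intro q hq hqp
        obtain ⟨hq1S, hq2S, _, _⟩ := hF q hq
        have hq12 : q.1 < q.2 := by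
          obtain ⟨_, _, ⟨u, _, hu1, hu2⟩, _⟩ := hF q hq
          omega
        constructor
        · by_contra h
          push_neg at h
          obtain ⟨h1, h2⟩ := h
          have hq2 : q.2 ≤ p.2 := by
            by_contra h3
            exact hX p hp q hq ⟨h1, h2, by omega⟩
          have hsub : S.filter (fun v => q.1 < v ∧ v < q.2) ⊂
              S.filter (fun v => p.1 < v ∧ v < p.2) := by
            constructor
            · intro x hx
              simp only [Finset.mem_filter] at hx ⊢
              exact ⟨hx.1, by omega, by omega⟩
            · intro hcon
              have : q.1 ∈ S.filter (fun v => p.1 < v ∧ v < p.2) :=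
                Finset.mem_filter.mpr ⟨hq1S, h1, h2⟩
              have := hcon this
              simp only [Finset.mem_filter] at this
              omega
          have := Finset.card_lt_card hsub
          have := hmin q hq
          simp only [hmc] at this
          omega
        · by_contra h
          push_neg at h
          obtain ⟨h1, h2⟩ := h
          have hq1 : p.1 ≤ q.1 := by
            by_contra h3
            exact hX q hq p hp ⟨by omega, h1, h2⟩
          have hsub : S.filter (fun v => q.1 < v ∧ v < q.2) ⊂
              S.filter (fun v => p.1 < v ∧ v < p.2) := by
            constructor
            · intro x hx
              simp only [Finset.mem_filter] at hx ⊢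
              exact ⟨hx.1, by omega, by omega⟩
            · intro hcon
              have : q.2 ∈ S.filter (fun v => p.1 < v ∧ v < p.2) :=
                Finset.mem_filter.mpr ⟨hq2S, h1, h2⟩
              have := hcon this
              simp only [Finset.mem_filter] at this
              omega
          have := Finset.card_lt_card hsub
          have := hmin q hq
          simp only [hmc] at this
          omega
      set S' := S.erase v with hS'
      have hS'card : S'.card = S.card - 1 := Finset.card_erase_of_mem hvS
      have hScard_pos : 1 ≤ S.card := Finset.card_pos.mpr ⟨v, hvS⟩
      have hS'le : S'.card ≤ N := by omega
      -- common fact: chords of q ≠ p remain chords of S'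
      have hkeep : ∀ q ∈ F, q ≠ p → ChordOf S' q := by
        intro q hq hqp
        obtain ⟨hq1S, hq2S, ⟨u, huS, hu1, hu2⟩, w, hwS, hw⟩ := hF q hq
        obtain ⟨hc1, hc2⟩ := claim1 q hq hqp
        have hq1v : q.1 ≠ v := by omega
        have hq2v : q.2 ≠ v := by omega
        refine ⟨Finset.mem_erase.mpr ⟨hq1v, hq1S⟩, Finset.mem_erase.mpr ⟨hq2v, hq2S⟩, ?_, ?_⟩
        · by_cases huv : u = v
          · -- u = v : q.1 < v < q.2, so q.1 ≤ p.1 and p.2 ≤ q.2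
            subst huv
            have hq1p : q.1 ≤ p.1 := by omega
            have hq2p : p.2 ≤ q.2 := by omega
            have hne : q.1 < p.1 ∨ p.2 < q.2 := by
              rcases eq_or_lt_of_le hq1p with h | h
              · rcases eq_or_lt_of_le hq2p with h' | h'
                · exfalso; exact hqp (Prod.ext h h'.symm)
                · right; exact h'
              · left; exact h
            rcases hne with h | h
            · exact ⟨p.1, Finset.mem_erase.mpr ⟨by omega, ha⟩, h, by omega⟩
            · exact ⟨p.2, Finset.mem_erase.mpr ⟨by omega, hb⟩, by omega, h⟩
          · exact ⟨u, Finset.mem_erase.mpr ⟨huv, huS⟩, hu1, hu2⟩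
        · by_cases hwv : w = v
          · subst hwv
            rcases hw with h | h
            · exact ⟨p.1, Finset.mem_erase.mpr ⟨by omega, ha⟩, Or.inl (by omega)⟩
            · exact ⟨p.2, Finset.mem_erase.mpr ⟨by omega, hb⟩, Or.inr (by omega)⟩
          · exact ⟨w, Finset.mem_erase.mpr ⟨hwv, hwS⟩, hw⟩
      by_cases hbig : ∃ v' ∈ S, v' ≠ v ∧ p.1 < v' ∧ v' < p.2
      · -- all of F survives
        obtain ⟨v', hv'S, hv'v, hv'1, hv'2⟩ := hbig
        have hallchord : ∀ q ∈ F, ChordOf S' q := by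
          intro q hq
          by_cases hqp : q = p
          · subst hqp
            refine ⟨Finset.mem_erase.mpr ⟨by omega, ha⟩, Finset.mem_erase.mpr ⟨by omega, hb⟩,
              ⟨v', Finset.mem_erase.mpr ⟨hv'v, hv'S⟩, hv'1, hv'2⟩, ?_⟩
            refine ⟨w0, Finset.mem_erase.mpr ⟨by omega, hw0S⟩, hw0⟩
          · exact hkeep q hq hqp
        rcases ih S' hS'le F hallchord hX with h | h
        · exact absurd h hFe
        · omega
      · -- v is the only interior point of p; remove p as well
        push_neg at hbig
        set F' := F.erase p with hF'
        have hF'chord : ∀ q ∈ F', ChordOf S' q := by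
          intro q hq
          obtain ⟨hqp, hq⟩ := Finset.mem_erase.mp hq
          exact hkeep q hq hqp
        have hF'X : ∀ q ∈ F', ∀ r ∈ F', ¬ Cross2 q r := by
          intro q hq r hr
          exact hX q (Finset.mem_of_mem_erase hq) r (Finset.mem_of_mem_erase hr)
        have hFcard : F.card = F'.card + 1 := by
          rw [hF', Finset.card_erase_of_mem hp]
          have : 1 ≤ F.card := Finset.card_pos.mpr ⟨p, hp⟩
          omega
        rcases ih S' hS'le F' hF'chord hF'X with h | h
        · -- F = {p}; need 4 ≤ S.card
          have hF1 : F.card = 1 := by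
            rw [hFcard, h]; simp
          have h4 : ({p.1, v, p.2, w0} : Finset ℕ) ⊆ S := by
            intro x hx
            simp only [Finset.mem_insert, Finset.mem_singleton] at hx
            rcases hx with h | h | h | h <;> subst h <;> assumption
          have hc4 : ({p.1, v, p.2, w0} : Finset ℕ).card = 4 := by
            rw [Finset.card_insert_of_notMem (by simp; omega),
                Finset.card_insert_of_notMem (by simp; omega),
                Finset.card_insert_of_notMem (by simp; omega),
                Finset.card_singleton]
          have := Finset.card_le_card h4
          omega
        · omega

/-- If a valid diagonal pair is not in the triangulation, it crosses some diagonal. -/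
lemma ext_crossing {n : ℕ} (hn : 3 ≤ n) (T : PolyTriangulation n) (i j : Fin n)
    (hij : i.val + 2 ≤ j.val) (hex : ¬(i.val = 0 ∧ j.val = n - 1))
    (hnot : ({i, j} : Finset (Fin n)) ∉ T.diags) :
    ∃ e ∈ T.diags, crossing n e {i, j} ∨ crossing n {i, j} e := by
  classical
  by_contra hcon
  push_neg at hcon
  set F0 : Finset (ℕ × ℕ) := ((Finset.range n ×ˢ Finset.range n).filter
    (fun p => p.1 < p.2 ∧ ∃ a b : Fin n, a.val = p.1 ∧ b.val = p.2 ∧ {a, b} ∈ T.diags))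
    with hF0
  have hmemF0 : ∀ p : ℕ × ℕ, p ∈ F0 ↔
      (p.1 < p.2 ∧ ∃ a b : Fin n, a.val = p.1 ∧ b.val = p.2 ∧ {a, b} ∈ T.diags) := by
    intro p
    rw [hF0, Finset.mem_filter, Finset.mem_product, Finset.mem_range, Finset.mem_range]
    constructor
    · rintro ⟨_, h⟩; exact h
    · rintro ⟨h1, a, b, ha, hb, hm⟩
      exact ⟨⟨by rw [← ha]; exact a.isLt, by rw [← hb]; exact b.isLt⟩, h1, a, b, ha, hb, hm⟩
  -- lower bound on card F0
  have hcard0 : T.diags.card ≤ F0.card := by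
    apply Finset.card_le_card_of_injOn
      (fun e => (n - 1 - e.sup (fun x => n - 1 - x.val), e.sup (fun x => x.val)))
    · intro e he
      obtain ⟨a, b, hab, _, hrep⟩ := diag_facts hn T he
      have ha : a.val < n := a.isLt
      have hb : b.val < n := b.isLt
      have h1 : e.sup (fun x : Fin n => x.val) = b.val := by
        rw [hrep]; simp [Finset.sup_insert, Finset.sup_singleton]; omega
      have h2 : e.sup (fun x : Fin n => n - 1 - x.val) = n - 1 - a.val := by
        rw [hrep]; simp [Finset.sup_insert, Finset.sup_singleton]; omega
      rw [Finset.mem_coe, hmemF0]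
      refine ⟨by simp [h1, h2]; omega, a, b, by simp [h1, h2]; omega, by simp [h1], ?_⟩
      rw [← hrep]; exact he
    · intro e he e' he' heq
      obtain ⟨a, b, hab, _, hrep⟩ := diag_facts hn T he
      obtain ⟨a', b', hab', _, hrep'⟩ := diag_facts hn T he'
      have ha : a.val < n := a.isLt
      have ha' : a'.val < n := a'.isLt
      have h1 : e.sup (fun x : Fin n => x.val) = b.val := by
        rw [hrep]; simp [Finset.sup_insert, Finset.sup_singleton]; omega
      have h2 : e.sup (fun x : Fin n => n - 1 - x.val) = n - 1 - a.val := by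
        rw [hrep]; simp [Finset.sup_insert, Finset.sup_singleton]; omega
      have h1' : e'.sup (fun x : Fin n => x.val) = b'.val := by
        rw [hrep']; simp [Finset.sup_insert, Finset.sup_singleton]; omega
      have h2' : e'.sup (fun x : Fin n => n - 1 - x.val) = n - 1 - a'.val := by
        rw [hrep']; simp [Finset.sup_insert, Finset.sup_singleton]; omega
      simp only [h1, h2, h1', h2', Prod.mk.injEq] at heq
      have haa : a = a' := Fin.ext (by omega)
      have hbb : b = b' := Fin.ext (by omega)
      rw [hrep, hrep', haa, hbb]
  -- the extended family
  set F' : Finset (ℕ × ℕ) := insert (i.val, j.val) F0 with hF'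
  have hnotin : (i.val, j.val) ∉ F0 := by
    rw [hmemF0]
    rintro ⟨_, a, b, ha, hb, hm⟩
    have ha' : a = i := Fin.ext ha
    have hb' : b = j := Fin.ext hb
    subst ha' hb'
    exact hnot hm
  have hF'card : n - 2 ≤ F'.card := by
    rw [hF', Finset.card_insert_of_notMem hnotin]
    have := T.maximal
    omega
  have hF'facts : ∀ p ∈ F', ∃ a b : Fin n, a.val = p.1 ∧ b.val = p.2 ∧
      p.1 + 2 ≤ p.2 ∧ ¬(p.1 = 0 ∧ p.2 = n - 1) ∧
      ((a = i ∧ b = j) ∨ {a, b} ∈ T.diags) := by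
    intro p hp
    rw [hF', Finset.mem_insert] at hp
    rcases hp with rfl | hp
    · exact ⟨i, j, rfl, rfl, hij, hex, Or.inl ⟨rfl, rfl⟩⟩
    · rw [hmemF0] at hp
      obtain ⟨h12, a, b, ha, hb, hm⟩ := hp
      obtain ⟨a', b', hab', hex', hrep'⟩ := diag_facts hn T hm
      obtain ⟨haa, hbb⟩ := finPair_eq_of_lt hrep' (by omega) (by omega)
      subst haa hbb
      exact ⟨a, b, ha, hb, by omega, by omega, Or.inr hm⟩
  -- chord conditions
  have hchord : ∀ p ∈ F', ChordOf (Finset.range n) p := by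
    intro p hp
    obtain ⟨a, b, ha, hb, h2, hx, _⟩ := hF'facts p hp
    have han : p.1 < n := by rw [← ha]; exact a.isLt
    have hbn : p.2 < n := by rw [← hb]; exact b.isLt
    refine ⟨Finset.mem_range.mpr han, Finset.mem_range.mpr hbn,
      ⟨p.1 + 1, Finset.mem_range.mpr (by omega), by omega, by omega⟩, ?_⟩
    by_cases h0 : p.1 = 0
    · exact ⟨n - 1, Finset.mem_range.mpr (by omega), Or.inr (by omega)⟩
    · exact ⟨0, Finset.mem_range.mpr (by omega), Or.inl (by omega)⟩
  have hncross : ∀ p ∈ F', ∀ q ∈ F', ¬ Cross2 p q := by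
    intro p hp q hq hC
    obtain ⟨a, b, ha, hb, _, _, hcase1⟩ := hF'facts p hp
    obtain ⟨c, d, hc, hd, _, _, hcase2⟩ := hF'facts q hq
    obtain ⟨hC1, hC2, hC3⟩ := hC
    rcases hcase1 with ⟨rfl, rfl⟩ | hm1
    · rcases hcase2 with ⟨rfl, rfl⟩ | hm2
      · omega
      · exact (hcon {c, d} hm2).2 ⟨a, b, c, d, rfl, rfl, by omega, by omega, by omega⟩
    · rcases hcase2 with ⟨rfl, rfl⟩ | hm2
      · exact (hcon {a, b} hm1).1 ⟨a, b, c, d, rfl, rfl, by omega, by omega, by omega⟩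
      · exact T.noncrossing {a, b} hm1 {c, d} hm2
          ⟨a, b, c, d, rfl, rfl, by omega, by omega, by omega⟩
  rcases chord_bound n (Finset.range n) (by simp) F' hchord hncross with h | h
  · have : (i.val, j.val) ∈ F' := by rw [hF']; simp
    rw [h] at this
    simp at this
  · rw [Finset.card_range] at h
    omega

/-- Chords of the triangulation in ordered ℕ form: boundary edges, the long edge, diagonals. -/
def Ep (n : ℕ) (T : PolyTriangulation n) (c d : ℕ) : Prop :=
  c < d ∧ d < n ∧ (d = c + 1 ∨ (c = 0 ∧ d = n - 1) ∨
    ∃ i j : Fin n, i.val = c ∧ j.val = d ∧ {i, j} ∈ T.diags)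

lemma split {n : ℕ} (hn : 3 ≤ n) (T : PolyTriangulation n) {c d : ℕ}
    (h : Ep n T c d) (h2 : c + 2 ≤ d) :
    ∃ k, c < k ∧ k < d ∧ Ep n T c k ∧ Ep n T k d := by
  classical
  obtain ⟨hcd, hdn, hcase⟩ := h
  set K : Finset ℕ := (Finset.range d).filter (fun k => c < k ∧ Ep n T c k) with hKdef
  have hne : K.Nonempty := by
    refine ⟨c + 1, Finset.mem_filter.mpr ⟨Finset.mem_range.mpr (by omega), by omega,
      by omega, by omega, Or.inl rfl⟩⟩
  set k := K.max' hne with hk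
  have hkK := K.max'_mem hne
  have hmem := Finset.mem_filter.mp hkK
  have hkd : k < d := Finset.mem_range.mp hmem.1
  obtain ⟨hck, hEpck⟩ := hmem.2
  by_cases hEpkd : Ep n T k d
  · exact ⟨k, hck, hkd, hEpck, hEpkd⟩
  exfalso
  have hkd2 : k + 2 ≤ d := by
    by_contra hno
    have : d = k + 1 := by omega
    exact hEpkd ⟨hkd, hdn, Or.inl this⟩
  have hkn : k < n := by omega
  have hknot : ({⟨k, hkn⟩, ⟨d, hdn⟩} : Finset (Fin n)) ∉ T.diags := by
    intro hmem
    exact hEpkd ⟨by omega, hdn, Or.inr (Or.inr ⟨⟨k, hkn⟩, ⟨d, hdn⟩, rfl, rfl, hmem⟩)⟩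
  obtain ⟨e, he, hcr⟩ := ext_crossing hn T ⟨k, hkn⟩ ⟨d, hdn⟩
    (show k + 2 ≤ d from hkd2) (show ¬(k = 0 ∧ d = n - 1) by omega) hknot
  rcases hcr with ⟨a, b, c', d', hea, hfb, h1, h2', h3⟩ | ⟨a, b, c2, d2, hfa, heb, h1, h2', h3⟩
  · -- crossing e {kF, dF} : a < c' < b < d' with {kF,dF} = {c',d'}
    obtain ⟨hc', hd'⟩ := finPair_eq_of_lt hfb.symm (by omega) (show k < d from by omega)
    have hc'v : c'.val = k := by rw [hc']
    have hd'v : d'.val = d := by rw [hd']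
    -- a.val < k < b.val < d, e = {a,b} ∈ diags
    rcases lt_trichotomy a.val c with hx | hx | hx
    · -- a.val < c : e crosses the chord (c,d)
      rcases hcase with h' | h' | ⟨i', j', hi', hj', hm'⟩
      · omega
      · omega
      · exact T.noncrossing e he {i', j'} hm'
          ⟨a, b, i', j', hea, rfl, by omega, by omega, by omega⟩
    · -- a.val = c : contradicts maximality of k
      have hEpcb : Ep n T c b.val := by
        refine ⟨by omega, b.isLt, Or.inr (Or.inr ⟨a, b, by omega, rfl, ?_⟩)⟩
        rw [← hea]; exact he
      have : b.val ≤ k := by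
        apply Finset.le_max' K
        exact Finset.mem_filter.mpr ⟨Finset.mem_range.mpr (by omega), by omega, hEpcb⟩
      omega
    · -- a.val > c : e crosses the chord (c,k)
      obtain ⟨_, _, hcase'⟩ := hEpck
      rcases hcase' with h' | h' | ⟨i', j', hi', hj', hm'⟩
      · omega
      · have := b.isLt; omega
      · exact T.noncrossing {i', j'} hm' e he
          ⟨i', j', a, b, rfl, hea, by omega, by omega, by omega⟩
  · -- crossing {kF, dF} e : a < c2 < b < d2 with {kF,dF} = {a,b}
    obtain ⟨ha', hb'⟩ := finPair_eq_of_lt hfa.symm (by omega) (show k < d from by omega)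
    have hav : a.val = k := by rw [ha']
    have hbv : b.val = d := by rw [hb']
    -- k < c2.val < d < d2.val, e = {c2,d2} ∈ diags : crosses chord (c,d)
    rcases hcase with h' | h' | ⟨i', j', hi', hj', hm'⟩
    · omega
    · have := d2.isLt; omega
    · exact T.noncrossing {i', j'} hm' e he
        ⟨i', j', c2, d2, rfl, heb, by omega, by omega, by omega⟩

/-- Every boundary edge (a, a+1) covered by an `Ep`-chord lies in a triangle. -/
lemma triangle_on_edge {n : ℕ} (hn : 3 ≤ n) (T : PolyTriangulation n) :
    ∀ m c d a : ℕ, Ep n T c d → c + 2 ≤ d → d - c ≤ m → c ≤ a → a + 1 ≤ d →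
    ∃ k, (k < a ∧ Ep n T k a ∧ Ep n T k (a + 1)) ∨
         (a + 1 < k ∧ Ep n T a k ∧ Ep n T (a + 1) k) := by
  intro m
  induction m with
  | zero => intro c d a _ _ _ _ _; omega
  | succ m ih =>
    intro c d a hEp h2 hm hca had
    obtain ⟨k0, hck0, hk0d, hEp1, hEp2⟩ := split hn T hEp h2
    by_cases hA : c = a ∧ k0 = a + 1
    · exact ⟨d, Or.inr ⟨by omega, by rw [← hA.1]; exact hEp, by rw [← hA.2]; exact hEp2⟩⟩
    by_cases hB : k0 = a ∧ d = a + 1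
    · exact ⟨c, Or.inl ⟨by omega, by rw [← hB.1]; exact hEp1, by rw [← hB.2]; exact hEp⟩⟩
    rcases le_or_gt k0 a with hk0a | hk0a
    · -- recurse on (k0, d)
      have : k0 + 2 ≤ d := by
        rcases Nat.lt_or_ge (k0 + 1) d with h | h
        · omega
        · exfalso; exact hB ⟨by omega, by omega⟩
      exact ih k0 d a hEp2 this (by omega) hk0a had
    · -- recurse on (c, k0)
      have : c + 2 ≤ k0 := by
        rcases Nat.lt_or_ge (c + 1) k0 with h | h
        · omega
        · exfalso; exact hA ⟨by omega, by omega⟩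
      exact ih c k0 a hEp1 this (by omega) hca (by omega)

/-- An `Ep`-chord is an edge of the triangulation graph. -/
lemma Ep_isEdge {n : ℕ} (hn : 3 ≤ n) (T : PolyTriangulation n) {c d : ℕ}
    (h : Ep n T c d) (i j : Fin n) (hi : i.val = c) (hj : j.val = d) :
    T.isEdge {i, j} := by
  obtain ⟨hcd, hdn, hcase⟩ := h
  rcases hcase with h' | h' | ⟨i', j', hi', hj', hm⟩
  · left
    refine ⟨i, j, fun hc => by simp [Fin.ext_iff, hi, hj] at hc; omega, ?_, rfl⟩
    left
    rw [hi, hj, Nat.mod_eq_of_lt (by omega)]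
    omega
  · left
    refine ⟨i, j, fun hc => by simp [Fin.ext_iff, hi, hj] at hc; omega, ?_, rfl⟩
    right
    rw [hi, hj, h'.1, h'.2]
    have : n - 1 + 1 = n := by omega
    rw [this, Nat.mod_self]
  · right
    have h1 : i' = i := Fin.ext (by omega)
    have h2 : j' = j := Fin.ext (by omega)
    rwa [h1, h2] at hm

/-- if `D` is an edge 2-dominating set of a triangulation graph on
`n` vertices, then no two consecutive vertices of the Hamiltonian cycle are
both non-incident to `D`; in particular, in the case `n = 7`, `|D| ≥ 2`. -/
theorem no_two_consecutive_uncovered (n : ℕ) (hn : 3 ≤ n) (T : PolyTriangulation n)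
    (D : Finset (Finset (Fin n))) (hD : EdgeTwoDominating T D) :
    (∀ i j : Fin n, (i.val + 1) % n = j.val → incidentTo D i ∨ incidentTo D j) ∧
    (n = 7 → 2 ≤ D.card) := by
  classical
  have key : ∀ i j : Fin n, (i.val + 1) % n = j.val → incidentTo D i ∨ incidentTo D j := by
    intro i j hij
    by_contra hcon
    push_neg at hcon
    obtain ⟨hni, hnj⟩ := hcon
    -- we will produce a triangle containing both i and j, with a third vertex w
    have main : ∃ w : Fin n, T.isTriangle {w, i, j} ∧ w ≠ i ∧ w ≠ j := by
      rcases Nat.lt_or_ge (i.val + 1) n with hlt | hge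
      · -- j.val = i.val + 1
        have hj : j.val = i.val + 1 := by rw [← hij, Nat.mod_eq_of_lt hlt]
        have hEpij : Ep n T i.val (i.val + 1) := ⟨by omega, hlt, Or.inl rfl⟩
        obtain ⟨k, hk⟩ := triangle_on_edge hn T n 0 (n - 1) i.val
          ⟨by omega, by omega, Or.inr (Or.inl ⟨rfl, rfl⟩)⟩ (by omega) (by omega) (by omega)
          (by omega)
        rcases hk with ⟨hka, h1, h2⟩ | ⟨hka, h1, h2⟩
        · have hkn : k < n := by omega
          refine ⟨⟨k, hkn⟩, ⟨⟨k, hkn⟩, i, j, ?_, ?_, ?_, rfl, ?_, ?_, ?_⟩, ?_, ?_⟩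
          · intro h; rw [Fin.ext_iff] at h; simp at h; omega
          · intro h; rw [Fin.ext_iff] at h; simp at h; omega
          · intro h; rw [Fin.ext_iff] at h; omega
          · exact Ep_isEdge hn T h1 ⟨k, hkn⟩ i rfl rfl
          · exact Ep_isEdge hn T h2 ⟨k, hkn⟩ j rfl hj
          · exact Ep_isEdge hn T hEpij i j rfl hj
          · intro h; rw [Fin.ext_iff] at h; simp at h; omega
          · intro h; rw [Fin.ext_iff] at h; simp at h; omega
        · have hkn : k < n := h2.2.1
          have ht : T.isTriangle {i, j, ⟨k, hkn⟩} := by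
            refine ⟨i, j, ⟨k, hkn⟩, ?_, ?_, ?_, rfl, ?_, ?_, ?_⟩
            · intro h; rw [Fin.ext_iff] at h; omega
            · intro h; rw [Fin.ext_iff] at h; simp at h; omega
            · intro h; rw [Fin.ext_iff] at h; simp at h; omega
            · exact Ep_isEdge hn T hEpij i j rfl hj
            · exact Ep_isEdge hn T h1 i ⟨k, hkn⟩ rfl rfl
            · exact Ep_isEdge hn T h2 j ⟨k, hkn⟩ hj rfl
          refine ⟨⟨k, hkn⟩, ?_, ?_, ?_⟩
          · have : ({i, j, (⟨k, hkn⟩ : Fin n)} : Finset (Fin n)) = {⟨k, hkn⟩, i, j} := by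
              ext x; simp; tauto
            rwa [this] at ht
          · intro h; rw [Fin.ext_iff] at h; simp at h; omega
          · intro h; rw [Fin.ext_iff] at h; simp at h; omega
      · -- i.val = n - 1, j.val = 0
        have hi : i.val = n - 1 := by have := i.isLt; omega
        have hj : j.val = 0 := by
          rw [← hij]
          have h' : i.val + 1 = n := by omega
          rw [h', Nat.mod_self]
        obtain ⟨k, hck, hkd, h1, h2⟩ := split hn T
          (⟨by omega, by omega, Or.inr (Or.inl ⟨rfl, rfl⟩)⟩ : Ep n T 0 (n - 1)) (by omega)
        have hkn : k < n := by omega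
        have ht : T.isTriangle {j, ⟨k, hkn⟩, i} := by
          refine ⟨j, ⟨k, hkn⟩, i, ?_, ?_, ?_, rfl, ?_, ?_, ?_⟩
          · intro h; rw [Fin.ext_iff] at h; simp at h; omega
          · intro h; rw [Fin.ext_iff] at h; omega
          · intro h; rw [Fin.ext_iff] at h; simp at h; omega
          · exact Ep_isEdge hn T h1 j ⟨k, hkn⟩ hj rfl
          · exact Ep_isEdge hn T (⟨by omega, by omega, Or.inr (Or.inl ⟨rfl, rfl⟩)⟩ :
              Ep n T 0 (n - 1)) j i hj hi
          · exact Ep_isEdge hn T h2 ⟨k, hkn⟩ i rfl hi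
        refine ⟨⟨k, hkn⟩, ?_, ?_, ?_⟩
        · have : ({j, (⟨k, hkn⟩ : Fin n), i} : Finset (Fin n)) = {⟨k, hkn⟩, i, j} := by
            ext x; simp; tauto
          rwa [this] at ht
        · intro h; rw [Fin.ext_iff] at h; simp at h; omega
        · intro h; rw [Fin.ext_iff] at h; simp at h; omega
    obtain ⟨w, ht, hwi, hwj⟩ := main
    have h2d := hD.2 _ ht
    have hsub : ({w, i, j} : Finset (Fin n)).filter (fun v => ∃ e ∈ D, v ∈ e) ⊆ {w} := by
      intro v hv
      rw [Finset.mem_filter] at hv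
      obtain ⟨hv1, hv2⟩ := hv
      simp only [Finset.mem_insert, Finset.mem_singleton] at hv1 ⊢
      rcases hv1 with rfl | rfl | rfl
      · rfl
      · exact absurd hv2 hni
      · exact absurd hv2 hnj
    have := Finset.card_le_card hsub
    rw [Finset.card_singleton] at this
    omega
  refine ⟨key, ?_⟩
  intro h7
  subst h7
  by_contra hcard
  push_neg at hcard
  have hone : ∀ a ∈ D, ∀ b ∈ D, a = b := Finset.card_le_one.mp (by omega)
  have get : ∀ (x y : Fin 7), incidentTo D x ∨ incidentTo D y →
      ∃ v : Fin 7, (v = x ∨ v = y) ∧ ∃ e ∈ D, v ∈ e := by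
    rintro x y (⟨e, he, hv⟩ | ⟨e, he, hv⟩)
    · exact ⟨x, Or.inl rfl, e, he, hv⟩
    · exact ⟨y, Or.inr rfl, e, he, hv⟩
  obtain ⟨v1, hv1, e1, he1, hm1⟩ := get ⟨0, by omega⟩ ⟨1, by omega⟩ (key _ _ (by norm_num))
  obtain ⟨v2, hv2, e2, he2, hm2⟩ := get ⟨2, by omega⟩ ⟨3, by omega⟩ (key _ _ (by norm_num))
  obtain ⟨v3, hv3, e3, he3, hm3⟩ := get ⟨4, by omega⟩ ⟨5, by omega⟩ (key _ _ (by norm_num))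
  have hv1v : v1.val ≤ 1 := by rcases hv1 with rfl | rfl <;> simp
  have hv2v : 2 ≤ v2.val ∧ v2.val ≤ 3 := by rcases hv2 with rfl | rfl <;> simp
  have hv3v : 4 ≤ v3.val ∧ v3.val ≤ 5 := by rcases hv3 with rfl | rfl <;> simp
  have he21 : e2 = e1 := hone e2 he2 e1 he1
  have he31 : e3 = e1 := hone e3 he3 e1 he1
  rw [he21] at hm2
  rw [he31] at hm3
  obtain ⟨p, q, hpq, _, hrep⟩ := hD.1 e1 he1
  rw [hrep, Finset.mem_insert, Finset.mem_singleton] at hm1 hm2 hm3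
  have h1v : v1 = p ∨ v1 = q := hm1
  have h2v : v2 = p ∨ v2 = q := hm2
  have h3v : v3 = p ∨ v3 = q := hm3
  have e1v : v1.val = p.val ∨ v1.val = q.val := by rcases h1v with rfl | rfl <;> simp
  have e2v : v2.val = p.val ∨ v2.val = q.val := by rcases h2v with rfl | rfl <;> simp
  have e3v : v3.val = p.val ∨ v3.val = q.val := by rcases h3v with rfl | rfl <;> simp
  omega
end
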